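/- arXiv:2209.07454 — 13 statements merged into one kernel-verified Lean document; each statement's English description precedes it below -/
import Mathlib

section
/- Let X be a measurable space, Ξ the set of probability measures on X, f : X → ℝ measurable with values in [0,1], and g : X → ℝ^m measurable with each component taking values in [−1,1]. If d_g > 0, then strong duality holds for the mixture-relaxed program: sup_{ξ∈Ξ} inf_{λ∈ℝ^m_{≥0}} L_{f,g}(ξ,λ) = inf_{λ∈ℝ^m_{≥0}} sup_{ξ∈Ξ} L_{f,g}(ξ,λ) = OPT_{f,g}. -/
open MeasureTheory

section scalar

lemma le_of_forall_add_smul_lt {a c k : ℝ} (h : ∀ s : ℝ, 0 < s → a + s * k < c) : a ≤ c := by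
  by_contra hc
  push_neg at hc
  have hs : (0:ℝ) < (a - c) / (2 * (|k| + 1)) := div_pos (by linarith) (by positivity)
  have h1 := h _ hs
  have h2 : ((a - c) / (2 * (|k| + 1))) * k ≥ -((a - c) / 2) := by
    have hk1 : -(|k|+1) ≤ k := by have := neg_abs_le k; linarith
    rw [ge_iff_le, div_mul_eq_mul_div, le_div_iff₀ (by positivity : (0:ℝ) < 2*(|k|+1))]
    nlinarith [abs_nonneg k]
  linarith

lemma nonpos_of_forall_add_lt {b c μ : ℝ} (h : ∀ M : ℝ, 0 < M → b + M * μ < c) : μ ≤ 0 := by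
  by_contra hμ
  push_neg at hμ
  have h1 := h 1 one_pos
  have h3 := h ((c - b) / μ) (div_pos (by linarith) hμ)
  rw [div_mul_cancel₀ _ (ne_of_gt hμ)] at h3
  linarith

lemma convex_combo_lt {a b x₁ y₁ x₂ y₂ : ℝ} (ha : 0 ≤ a) (hb : 0 ≤ b) (hab : a + b = 1)
    (h1 : x₁ < y₁) (h2 : x₂ < y₂) : a * x₁ + b * x₂ < a * y₁ + b * y₂ := by
  rcases lt_or_eq_of_le ha with hpa | hpa
  · have := mul_lt_mul_of_pos_left h1 hpa
    have := mul_le_mul_of_nonneg_left h2.le hb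
    linarith
  · have hb1 : b = 1 := by linarith
    simp [← hpa, hb1]; linarith

end scalar

section meas
variable {X : Type} [MeasurableSpace X]

lemma integrable_of_abs_le {h : X → ℝ} (hme : Measurable h) (hb : ∀ y, |h y| ≤ 1)
    (μ : Measure X) [IsProbabilityMeasure μ] : Integrable h μ :=
  Integrable.mono' (integrable_const 1) hme.aestronglyMeasurable (ae_of_all _ hb)

lemma integral_le_of_le {h : X → ℝ} {b : ℝ} {μ : Measure X} [IsProbabilityMeasure μ]
    (hint : Integrable h μ) (hb : ∀ y, h y ≤ b) : ∫ y, h y ∂μ ≤ b := by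
  calc ∫ y, h y ∂μ ≤ ∫ _, b ∂μ := integral_mono hint (integrable_const b) hb
  _ = b := by simp

lemma le_integral_of_le {h : X → ℝ} {b : ℝ} {μ : Measure X} [IsProbabilityMeasure μ]
    (hint : Integrable h μ) (hb : ∀ y, b ≤ h y) : b ≤ ∫ y, h y ∂μ := by
  calc b = ∫ _, b ∂μ := by simp
  _ ≤ ∫ y, h y ∂μ := integral_mono (integrable_const b) hint hb

lemma exists_mix (a b : ℝ) (ha : 0 ≤ a) (hb : 0 ≤ b) (hab : a + b = 1)
    (ξ₁ ξ₂ : ProbabilityMeasure X) :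
    ∃ ξ : ProbabilityMeasure X, ∀ h : X → ℝ, Measurable h → (∀ y, |h y| ≤ 1) →
      ∫ y, h y ∂(ξ : Measure X)
        = a * ∫ y, h y ∂(ξ₁ : Measure X) + b * ∫ y, h y ∂(ξ₂ : Measure X) := by
  refine ⟨⟨ENNReal.ofReal a • (ξ₁ : Measure X) + ENNReal.ofReal b • (ξ₂ : Measure X), ?_⟩, ?_⟩
  · constructor
    simp [Measure.smul_apply, smul_eq_mul, measure_univ, ← ENNReal.ofReal_add ha hb, hab]
  · intro h hme hb1
    have i1 : Integrable h (ξ₁ : Measure X) := integrable_of_abs_le hme hb1 _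
    have i2 : Integrable h (ξ₂ : Measure X) := integrable_of_abs_le hme hb1 _
    show ∫ y, h y ∂(ENNReal.ofReal a • (ξ₁ : Measure X) + ENNReal.ofReal b • (ξ₂ : Measure X)) = _
    rw [integral_add_measure (i1.smul_measure ENNReal.ofReal_ne_top)
      (i2.smul_measure ENNReal.ofReal_ne_top), integral_smul_measure, integral_smul_measure]
    simp [ENNReal.toReal_ofReal ha, ENNReal.toReal_ofReal hb, smul_eq_mul]

end meas

/-- Abstract strong duality for a "mixture-affine" pair of payoff/constraint maps. -/
lemma abstract_duality {Ξ : Type} {m : ℕ} (hm : 0 < m)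
    (F : Ξ → ℝ) (G : Fin m → Ξ → ℝ)
    (hF0 : ∀ ξ, 0 ≤ F ξ) (hF1 : ∀ ξ, F ξ ≤ 1)
    (hGlb : ∀ i ξ, -1 ≤ G i ξ) (hGub : ∀ i ξ, G i ξ ≤ 1)
    (hmix : ∀ a b : ℝ, 0 ≤ a → 0 ≤ b → a + b = 1 → ∀ ξ₁ ξ₂ : Ξ,
      ∃ ξ : Ξ, F ξ = a * F ξ₁ + b * F ξ₂ ∧ ∀ i, G i ξ = a * G i ξ₁ + b * G i ξ₂)
    (ξ₀ : Ξ) (δ : ℝ) (hδ : 0 < δ) (hslater : ∀ i, G i ξ₀ ≤ -δ) :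
    sSup {r : ℝ | ∃ ξ : Ξ, r = sInf {s : ℝ | ∃ l : Fin m → ℝ,
        (∀ i, 0 ≤ l i) ∧ s = F ξ - ∑ i, l i * G i ξ}}
      = sSup {r : ℝ | ∃ ξ : Ξ, (∀ i, G i ξ ≤ 0) ∧ r = F ξ} ∧
    sInf {s : ℝ | ∃ l : Fin m → ℝ, (∀ i, 0 ≤ l i) ∧
        s = sSup {r : ℝ | ∃ ξ : Ξ, r = F ξ - ∑ i, l i * G i ξ}}
      = sSup {r : ℝ | ∃ ξ : Ξ, (∀ i, G i ξ ≤ 0) ∧ r = F ξ} := by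
  classical
  haveI : Nonempty (Fin m) := ⟨⟨0, hm⟩⟩
  set Feas : Set ℝ := {r : ℝ | ∃ ξ : Ξ, (∀ i, G i ξ ≤ 0) ∧ r = F ξ} with hFeasdef
  set A : ℝ := sSup Feas with hAdef
  have hfeas₀ : ∀ i, G i ξ₀ ≤ 0 := fun i => (hslater i).trans (by linarith)
  have hmem₀ : F ξ₀ ∈ Feas := ⟨ξ₀, hfeas₀, rfl⟩
  have hFeas_ne : Feas.Nonempty := ⟨_, hmem₀⟩
  have hFeas_bdd : BddAbove Feas := ⟨1, by rintro r ⟨ξ, -, rfl⟩; exact hF1 ξ⟩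
  have hAub : ∀ ξ : Ξ, (∀ i, G i ξ ≤ 0) → F ξ ≤ A := fun ξ hξ => le_csSup hFeas_bdd ⟨ξ, hξ, rfl⟩
  have hA0 : 0 ≤ A := (hF0 ξ₀).trans (hAub ξ₀ hfeas₀)
  -- Part 1: value of the inner infimum
  have hinner_feas : ∀ ξ : Ξ, (∀ i, G i ξ ≤ 0) →
      sInf {s : ℝ | ∃ l : Fin m → ℝ, (∀ i, 0 ≤ l i) ∧ s = F ξ - ∑ i, l i * G i ξ} = F ξ := by
    intro ξ hξ
    have hlb : ∀ s ∈ {s : ℝ | ∃ l : Fin m → ℝ, (∀ i, 0 ≤ l i) ∧ s = F ξ - ∑ i, l i * G i ξ},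
        F ξ ≤ s := by
      rintro s ⟨l, hl, rfl⟩
      have : ∑ i, l i * G i ξ ≤ 0 :=
        Finset.sum_nonpos fun i _ => mul_nonpos_iff.2 (Or.inl ⟨hl i, hξ i⟩)
      linarith
    have hmem : F ξ ∈ {s : ℝ | ∃ l : Fin m → ℝ, (∀ i, 0 ≤ l i) ∧ s = F ξ - ∑ i, l i * G i ξ} :=
      ⟨0, fun i => le_rfl, by simp⟩
    exact le_antisymm (csInf_le ⟨F ξ, hlb⟩ hmem) (le_csInf ⟨_, hmem⟩ hlb)
  have hinner_infeas : ∀ ξ : Ξ, ∀ i, 0 < G i ξ →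
      sInf {s : ℝ | ∃ l : Fin m → ℝ, (∀ i, 0 ≤ l i) ∧ s = F ξ - ∑ j, l j * G j ξ} = 0 := by
    intro ξ i hi
    apply Real.sInf_of_not_bddBelow
    rintro ⟨B, hB⟩
    set t : ℝ := max 1 ((F ξ - B) / G i ξ + 1) with ht
    have htpos : (0:ℝ) ≤ t := le_trans zero_le_one (le_max_left _ _)
    have hmem : F ξ - ∑ j, (if j = i then t else 0) * G j ξ ∈
        {s : ℝ | ∃ l : Fin m → ℝ, (∀ i, 0 ≤ l i) ∧ s = F ξ - ∑ j, l j * G j ξ} := by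
      refine ⟨fun j => if j = i then t else 0, fun j => ?_, rfl⟩
      dsimp only
      split
      · exact htpos
      · exact le_rfl
    have hsum : ∑ j, (if j = i then t else 0) * G j ξ = t * G i ξ := by
      simp only [ite_mul, zero_mul]
      simp [Finset.sum_ite_eq']
    have hBle := hB hmem
    rw [hsum] at hBle
    have h2 : (F ξ - B) / G i ξ + 1 ≤ t := le_max_right _ _
    have h3 : (F ξ - B) / G i ξ * G i ξ = F ξ - B := div_mul_cancel₀ _ (ne_of_gt hi)
    have h4 := mul_le_mul_of_nonneg_right h2 hi.le
    rw [add_mul, h3, one_mul] at h4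
    linarith
  have goal1 : sSup {r : ℝ | ∃ ξ : Ξ, r = sInf {s : ℝ | ∃ l : Fin m → ℝ,
      (∀ i, 0 ≤ l i) ∧ s = F ξ - ∑ i, l i * G i ξ}} = A := by
    have hne1 : {r : ℝ | ∃ ξ : Ξ, r = sInf {s : ℝ | ∃ l : Fin m → ℝ,
        (∀ i, 0 ≤ l i) ∧ s = F ξ - ∑ i, l i * G i ξ}}.Nonempty := ⟨_, ξ₀, rfl⟩
    apply le_antisymm
    · apply csSup_le hne1
      rintro r ⟨ξ, rfl⟩
      by_cases hfe : ∀ i, G i ξ ≤ 0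
      · rw [hinner_feas ξ hfe]; exact hAub ξ hfe
      · push_neg at hfe
        obtain ⟨i, hi⟩ := hfe
        rw [hinner_infeas ξ i hi]
        exact hA0
    · apply csSup_le hFeas_ne
      rintro r ⟨ξ, hξ, rfl⟩
      apply le_csSup
      · refine ⟨1, ?_⟩
        rintro r ⟨ξ', rfl⟩
        by_cases hfe : ∀ i, G i ξ' ≤ 0
        · rw [hinner_feas ξ' hfe]; exact hF1 ξ'
        · push_neg at hfe
          obtain ⟨i, hi⟩ := hfe
          rw [hinner_infeas ξ' i hi]
          exact zero_le_one
      · exact ⟨ξ, (hinner_feas ξ hξ).symm⟩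
  -- Part 2
  have hSl_ne : ∀ l : Fin m → ℝ, ({r : ℝ | ∃ ξ : Ξ, r = F ξ - ∑ i, l i * G i ξ}).Nonempty :=
    fun l => ⟨_, ξ₀, rfl⟩
  have hSl_bdd : ∀ l : Fin m → ℝ, (∀ i, 0 ≤ l i) →
      BddAbove {r : ℝ | ∃ ξ : Ξ, r = F ξ - ∑ i, l i * G i ξ} := by
    intro l hl
    refine ⟨1 + ∑ i, l i, ?_⟩
    rintro r ⟨ξ, rfl⟩
    have hterm : ∀ i ∈ Finset.univ, -(l i) ≤ l i * G i ξ := by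
      intro i _
      have h := mul_le_mul_of_nonneg_left (hGlb i ξ) (hl i)
      linarith
    have hsum : ∑ i, -(l i) ≤ ∑ i, l i * G i ξ := Finset.sum_le_sum hterm
    have hneg : ∑ i, -(l i) = -∑ i, l i := by simp
    have := hF1 ξ
    rw [hneg] at hsum
    linarith
  have hge : ∀ l : Fin m → ℝ, (∀ i, 0 ≤ l i) →
      A ≤ sSup {r : ℝ | ∃ ξ : Ξ, r = F ξ - ∑ i, l i * G i ξ} := by
    intro l hl
    apply csSup_le hFeas_ne
    rintro r ⟨ξ, hξ, rfl⟩
    have h1 : F ξ ≤ F ξ - ∑ i, l i * G i ξ := by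
      have : ∑ i, l i * G i ξ ≤ 0 :=
        Finset.sum_nonpos fun i _ => mul_nonpos_iff.2 (Or.inl ⟨hl i, hξ i⟩)
      linarith
    exact h1.trans (le_csSup (hSl_bdd l hl) ⟨ξ, rfl⟩)
  set D : Set ℝ := {s : ℝ | ∃ l : Fin m → ℝ, (∀ i, 0 ≤ l i) ∧
      s = sSup {r : ℝ | ∃ ξ : Ξ, r = F ξ - ∑ i, l i * G i ξ}} with hDdef
  have hD_ne : D.Nonempty := ⟨_, 0, fun i => le_rfl, rfl⟩
  have hD_bdd : BddBelow D := ⟨A, by rintro s ⟨l, hl, rfl⟩; exact hge l hl⟩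
  have goal2 : sInf D = A := by
    apply le_antisymm
    · apply le_of_forall_pos_le_add
      intro ε hε
      -- the open convex set for separation
      set S : Set ((Fin m → ℝ) × ℝ) :=
        {p | ∃ ξ : Ξ, (∀ i, G i ξ < p.1 i) ∧ p.2 < F ξ} with hSdef
      have hopen : IsOpen S := by
        have hrw : S = ⋃ ξ : Ξ, ((⋂ i, {p : (Fin m → ℝ) × ℝ | G i ξ < p.1 i}) ∩
            {p : (Fin m → ℝ) × ℝ | p.2 < F ξ}) := by
          ext p
          simp only [hSdef, Set.mem_setOf_eq, Set.mem_iUnion, Set.mem_inter_iff, Set.mem_iInter]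
        rw [hrw]
        exact isOpen_iUnion fun ξ =>
          ((isOpen_iInter_of_finite fun i =>
            isOpen_lt continuous_const (show Continuous fun p : (Fin m → ℝ) × ℝ => p.1 i from (continuous_apply i).comp continuous_fst)).inter
            (isOpen_lt continuous_snd continuous_const))
      have hconv : Convex ℝ S := by
        rintro p ⟨ξ₁, hp1, hp2⟩ q ⟨ξ₂, hq1, hq2⟩ a b ha hb hab
        obtain ⟨ξ, hFm, hGm⟩ := hmix a b ha hb hab ξ₁ ξ₂
        refine ⟨ξ, fun i => ?_, ?_⟩
        · rw [hGm i]
          have h := convex_combo_lt ha hb hab (hp1 i) (hq1 i)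
          simpa [Prod.fst_add, Prod.smul_fst, Pi.add_apply, Pi.smul_apply, smul_eq_mul] using h
        · rw [hFm]
          have h := convex_combo_lt ha hb hab hp2 hq2
          simpa [Prod.snd_add, Prod.smul_snd, smul_eq_mul] using h
      have hx : (((0 : Fin m → ℝ), A + ε) : (Fin m → ℝ) × ℝ) ∉ S := by
        rintro ⟨ξ, hg, hf⟩
        have hf' : A + ε < F ξ := hf
        have hle := hAub ξ (fun i => by simpa using (hg i).le)
        linarith
      obtain ⟨φ, hφ⟩ := geometric_hahn_banach_open_point hconv hopen hx
      set μ : Fin m → ℝ := fun i => φ ((Pi.single i 1 : Fin m → ℝ), (0:ℝ)) with hμdef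
      set τ : ℝ := φ ((0 : Fin m → ℝ), (1:ℝ)) with hτdef
      have heval : ∀ (u : Fin m → ℝ) (r : ℝ), φ (u, r) = (∑ i, u i * μ i) + r * τ := by
        intro u r
        have hdecomp : ((u, r) : (Fin m → ℝ) × ℝ)
            = (∑ i, u i • (((Pi.single i 1 : Fin m → ℝ), (0:ℝ)) : (Fin m → ℝ) × ℝ))
              + r • (((0 : Fin m → ℝ), (1:ℝ)) : (Fin m → ℝ) × ℝ) := by
          apply Prod.ext
          · simp only [Prod.fst_add, Prod.fst_sum, Prod.smul_fst, Prod.smul_snd]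
            funext j
            simp [Pi.single_apply, Finset.sum_apply, smul_eq_mul, mul_ite, Finset.sum_ite_eq]
          · simp only [Prod.snd_add, Prod.snd_sum, Prod.smul_snd]
            simp [smul_eq_mul]
        rw [hdecomp, map_add, map_sum]
        simp only [ContinuousLinearMap.map_smul, smul_eq_mul]
        rfl
      have hc : φ (((0 : Fin m → ℝ), A + ε) : (Fin m → ℝ) × ℝ) = (A + ε) * τ := by
        rw [heval]; simp
      have hφ' : ∀ p ∈ S, φ p < (A + ε) * τ := fun p hp => hc ▸ hφ p hp
      -- coefficients signs
      have hμ0 : ∀ i, μ i ≤ 0 := by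
        intro i
        apply nonpos_of_forall_add_lt
          (b := (∑ j, (G j ξ₀ + 1) * μ j) + (F ξ₀ - 1) * τ) (c := (A + ε) * τ)
        intro M hM
        have hmem : (((fun j => G j ξ₀ + 1 + if j = i then M else 0) : Fin m → ℝ),
            F ξ₀ - 1) ∈ S := by
          refine ⟨ξ₀, fun j => ?_, by norm_num⟩
          have hite : (0:ℝ) ≤ if j = i then M else 0 := by
            split
            · exact hM.le
            · exact le_rfl
          show G j ξ₀ < G j ξ₀ + 1 + if j = i then M else 0
          linarith
        have h := hφ' _ hmem
        rw [heval] at h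
        have hsplit : ∑ j, (G j ξ₀ + 1 + if j = i then M else 0) * μ j
            = (∑ j, (G j ξ₀ + 1) * μ j) + M * μ i := by
          simp only [add_mul, ite_mul, zero_mul, Finset.sum_add_distrib]
          simp [Finset.sum_ite_eq']
        rw [hsplit] at h
        linarith
      have hτ0 : 0 ≤ τ := by
        have h := nonpos_of_forall_add_lt
          (b := (∑ j, (G j ξ₀ + 1) * μ j) + F ξ₀ * τ) (c := (A + ε) * τ) (μ := -τ) ?_
        · linarith
        intro M hM
        have hmem : (((fun j => G j ξ₀ + 1) : Fin m → ℝ), F ξ₀ - M) ∈ S := by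
          refine ⟨ξ₀, fun j => ?_, ?_⟩
          · show G j ξ₀ < G j ξ₀ + 1
            linarith
          · show F ξ₀ - M < F ξ₀
            linarith
        have h := hφ' _ hmem
        rw [heval] at h
        have hrw : ∑ j, (G j ξ₀ + 1) * μ j + (F ξ₀ - M) * τ
            = ((∑ j, (G j ξ₀ + 1) * μ j) + F ξ₀ * τ) + M * (-τ) := by ring
        rw [hrw] at h
        exact h
      have hmain : ∀ ξ : Ξ, (∑ i, μ i * G i ξ) + τ * F ξ ≤ (A + ε) * τ := by
        intro ξ
        apply le_of_forall_add_smul_lt (k := (∑ i, μ i) - τ)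
        intro s hs
        have hmem : (((fun j => G j ξ + s) : Fin m → ℝ), F ξ - s) ∈ S := by
          refine ⟨ξ, fun j => ?_, ?_⟩
          · show G j ξ < G j ξ + s
            linarith
          · show F ξ - s < F ξ
            linarith
        have h := hφ' _ hmem
        rw [heval] at h
        have hsplit : ∑ j, (G j ξ + s) * μ j = (∑ j, μ j * G j ξ) + s * ∑ j, μ j := by
          rw [Finset.mul_sum, ← Finset.sum_add_distrib]
          exact Finset.sum_congr rfl fun j _ => by ring
        rw [hsplit] at h
        have hrw : (∑ j, μ j * G j ξ) + s * (∑ j, μ j) + (F ξ - s) * τ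
            = ((∑ j, μ j * G j ξ) + τ * F ξ) + s * ((∑ j, μ j) - τ) := by ring
        rw [hrw] at h
        exact h
      have hτpos : 0 < τ := by
        rcases hτ0.lt_or_eq with hlt | heq
        · exact hlt
        exfalso
        have hτz : τ = 0 := heq.symm
        have hsum_nonpos : ∑ i, μ i * G i ξ₀ ≤ 0 := by
          have := hmain ξ₀
          rw [hτz] at this
          simpa using this
        by_cases hall : ∀ i, μ i = 0
        · have hmem : (((fun j => G j ξ₀ + 1) : Fin m → ℝ), F ξ₀ - 1) ∈ S := by
            refine ⟨ξ₀, fun j => ?_, by norm_num⟩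
            show G j ξ₀ < G j ξ₀ + 1
            linarith
          have h := hφ' _ hmem
          rw [heval] at h
          simp [hall, hτz] at h
        · push_neg at hall
          obtain ⟨i, hi⟩ := hall
          have hi' : μ i < 0 := (hμ0 i).lt_of_ne hi
          have hsum_neg : ∑ j, μ j < 0 := by
            have h := Finset.sum_lt_sum (fun j (_ : j ∈ Finset.univ) => hμ0 j)
              ⟨i, Finset.mem_univ i, hi'⟩
            simpa using h
          have hsum_ge : ∑ j, μ j * (-δ) ≤ ∑ j, μ j * G j ξ₀ :=
            Finset.sum_le_sum fun j _ => mul_le_mul_of_nonpos_left (hslater j) (hμ0 j)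
          have hprod : ∑ j, μ j * (-δ) = -δ * ∑ j, μ j := by
            rw [← Finset.sum_mul]; ring
          have hpos : 0 < -δ * ∑ j, μ j := mul_pos_of_neg_of_neg (by linarith) hsum_neg
          linarith [hsum_ge, hprod ▸ hsum_ge]
      -- the optimal multiplier
      set lam : Fin m → ℝ := fun i => -μ i / τ with hlamdef
      have hlam0 : ∀ i, 0 ≤ lam i := fun i => div_nonneg (neg_nonneg.2 (hμ0 i)) hτpos.le
      have hLle : ∀ ξ : Ξ, F ξ - ∑ i, lam i * G i ξ ≤ A + ε := by
        intro ξ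
        have h := hmain ξ
        have hexp : ∑ i, lam i * G i ξ = (∑ i, -(μ i * G i ξ)) / τ := by
          rw [Finset.sum_div]
          refine Finset.sum_congr rfl fun i _ => ?_
          simp only [hlamdef]
          ring
        have hneg : ∑ i, -(μ i * G i ξ) = -∑ i, μ i * G i ξ := by simp
        rw [hexp, hneg, sub_le_iff_le_add, ← sub_le_iff_le_add', le_div_iff₀ hτpos]
        nlinarith [h]
      have hsup_le : sSup {r : ℝ | ∃ ξ : Ξ, r = F ξ - ∑ i, lam i * G i ξ} ≤ A + ε :=
        csSup_le (hSl_ne lam) (by rintro r ⟨ξ, rfl⟩; exact hLle ξ)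
      have hmemD : sSup {r : ℝ | ∃ ξ : Ξ, r = F ξ - ∑ i, lam i * G i ξ} ∈ D :=
        ⟨lam, hlam0, rfl⟩
      exact (csInf_le hD_bdd hmemD).trans hsup_le
    · exact le_csInf hD_ne (by rintro s ⟨l, hl, rfl⟩; exact hge l hl)
  exact ⟨goal1, goal2⟩

/-- The Lagrangian `L_{f,g}(ξ,λ) = f(ξ) - ⟨λ, g(ξ)⟩`, where `h(ξ) = ∫ h dξ`. -/
noncomputable def lagrangian {X : Type} [MeasurableSpace X] {m : ℕ}
    (f : X → ℝ) (g : Fin m → X → ℝ) (ξ : ProbabilityMeasure X) (l : Fin m → ℝ) : ℝ :=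
  (∫ y, f y ∂(ξ : Measure X)) - ∑ i, l i * ∫ y, g i y ∂(ξ : Measure X)

/-- `OPT_{f,g} = sup { f(ξ) : ξ ∈ Ξ, g_i(ξ) ≤ 0 ∀ i }`. -/
noncomputable def OPTval {X : Type} [MeasurableSpace X] {m : ℕ}
    (f : X → ℝ) (g : Fin m → X → ℝ) : ℝ :=
  sSup {r : ℝ | ∃ ξ : ProbabilityMeasure X,
    (∀ i, ∫ y, g i y ∂(ξ : Measure X) ≤ 0) ∧ r = ∫ y, f y ∂(ξ : Measure X)}

/-- `d_g = sup_{ξ∈Ξ} min_{i∈[m]} (−g_i(ξ))`. -/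
noncomputable def dgval {X : Type} [MeasurableSpace X] {m : ℕ}
    (g : Fin m → X → ℝ) : ℝ :=
  sSup {r : ℝ | ∃ ξ : ProbabilityMeasure X, r = ⨅ i, -(∫ y, g i y ∂(ξ : Measure X))}

/-- Strong duality for the mixture-relaxed program with unrestricted nonnegative duals. -/
theorem statement0 {X : Type} [MeasurableSpace X] {m : ℕ} (hm : 0 < m)
    (f : X → ℝ) (g : Fin m → X → ℝ)
    (hfm : Measurable f) (hf01 : ∀ y, f y ∈ Set.Icc (0:ℝ) 1)
    (hgm : ∀ i, Measurable (g i)) (hg1 : ∀ i y, g i y ∈ Set.Icc (-1:ℝ) 1)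
    (hd : 0 < dgval g) :
    sSup {r : ℝ | ∃ ξ : ProbabilityMeasure X,
        r = sInf {s : ℝ | ∃ l : Fin m → ℝ, (∀ i, 0 ≤ l i) ∧ s = lagrangian f g ξ l}}
      = OPTval f g ∧
    sInf {s : ℝ | ∃ l : Fin m → ℝ, (∀ i, 0 ≤ l i) ∧
        s = sSup {r : ℝ | ∃ ξ : ProbabilityMeasure X, r = lagrangian f g ξ l}}
      = OPTval f g := by
  classical
  haveI : Nonempty (Fin m) := ⟨⟨0, hm⟩⟩
  have hfabs : ∀ y, |f y| ≤ 1 := fun y => abs_le.2 ⟨by linarith [(hf01 y).1], (hf01 y).2⟩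
  have hgabs : ∀ i y, |g i y| ≤ 1 := fun i y => abs_le.2 ⟨(hg1 i y).1, (hg1 i y).2⟩
  -- extract a Slater point from `hd`
  have hSne : {r : ℝ | ∃ ξ : ProbabilityMeasure X,
      r = ⨅ i, -(∫ y, g i y ∂(ξ : Measure X))}.Nonempty := by
    by_contra hne
    rw [Set.not_nonempty_iff_eq_empty] at hne
    rw [dgval, hne, Real.sSup_empty] at hd
    exact lt_irrefl _ hd
  obtain ⟨r, ⟨ξ₀, hr⟩, hrpos⟩ := exists_lt_of_lt_csSup hSne hd
  have hslater : ∀ i, (fun i (ξ : ProbabilityMeasure X) => ∫ y, g i y ∂(ξ : Measure X)) i ξ₀ ≤ -r := by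
    intro i
    have h1 : r ≤ -(∫ y, g i y ∂(ξ₀ : Measure X)) := by
      rw [hr]
      exact ciInf_le (Set.Finite.bddBelow (Set.finite_range _)) i
    simp only
    linarith
  have hmix : ∀ a b : ℝ, 0 ≤ a → 0 ≤ b → a + b = 1 → ∀ ξ₁ ξ₂ : ProbabilityMeasure X,
      ∃ ξ : ProbabilityMeasure X,
        (fun ξ : ProbabilityMeasure X => ∫ y, f y ∂(ξ : Measure X)) ξ
          = a * (∫ y, f y ∂(ξ₁ : Measure X)) + b * (∫ y, f y ∂(ξ₂ : Measure X)) ∧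
        ∀ i, (fun i (ξ : ProbabilityMeasure X) => ∫ y, g i y ∂(ξ : Measure X)) i ξ
          = a * (∫ y, g i y ∂(ξ₁ : Measure X)) + b * (∫ y, g i y ∂(ξ₂ : Measure X)) := by
    intro a b ha hb hab ξ₁ ξ₂
    obtain ⟨ξ, hξ⟩ := exists_mix a b ha hb hab ξ₁ ξ₂
    exact ⟨ξ, hξ f hfm hfabs, fun i => hξ (g i) (hgm i) (hgabs i)⟩
  exact abstract_duality hm
    (fun ξ : ProbabilityMeasure X => ∫ y, f y ∂(ξ : Measure X))
    (fun i (ξ : ProbabilityMeasure X) => ∫ y, g i y ∂(ξ : Measure X))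
    (fun ξ => le_integral_of_le (integrable_of_abs_le hfm hfabs _) (fun y => (hf01 y).1))
    (fun ξ => integral_le_of_le (integrable_of_abs_le hfm hfabs _) (fun y => (hf01 y).2))
    (fun i ξ => le_integral_of_le (integrable_of_abs_le (hgm i) (hgabs i) _) (fun y => (hg1 i y).1))
    (fun i ξ => integral_le_of_le (integrable_of_abs_le (hgm i) (hgabs i) _) (fun y => (hg1 i y).2))
    hmix ξ₀ r hrpos hslater
end

section
/- Let X be a measurable space, Ξ the set of probability measures on X, f : X → ℝ measurable with values in [0,1], g : X → ℝ^m measurable with components in [−1,1], and assume d_g > 0. Then the infimum of the dual function over all nonnegative multipliers is attained already on the truncated dual set: inf_{λ∈ℝ^m_{≥0}} sup_{ξ∈Ξ} L_{f,g}(ξ,λ) = inf_{λ∈D_{d_g}} sup_{ξ∈Ξ} L_{f,g}(ξ,λ). In particular, for every λ ∈ ℝ^m_{≥0} with ‖λ‖₁ > 1/d_g one has sup_{ξ∈Ξ} L_{f,g}(ξ,λ) > 1, while inf_{λ∈D_{d_g}} sup_{ξ∈Ξ} L_{f,g}(ξ,λ) ≤ 1. -/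
open MeasureTheory

/-- The dual function `λ ↦ sup_{ξ∈Ξ} L_{f,g}(ξ,λ)`. -/
noncomputable def dualfn {X : Type} [MeasurableSpace X] {m : ℕ}
    (f : X → ℝ) (g : Fin m → X → ℝ) (l : Fin m → ℝ) : ℝ :=
  sSup {r : ℝ | ∃ ξ : ProbabilityMeasure X, r = lagrangian f g ξ l}

lemma int_mem_Icc_aux {X : Type} [MeasurableSpace X] (ξ : ProbabilityMeasure X)
    {h : X → ℝ} (hme : Measurable h) {a b : ℝ}
    (hb : ∀ y, h y ∈ Set.Icc a b) :
    ∫ y, h y ∂(ξ : Measure X) ∈ Set.Icc a b := by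
  have hint : Integrable h (ξ : Measure X) := by
    apply Integrable.mono' (integrable_const (max |a| |b|)) hme.aestronglyMeasurable
    filter_upwards with y
    have h1 := (hb y).1
    have h2 := (hb y).2
    rw [Real.norm_eq_abs, abs_le]
    constructor
    · have : -(max |a| |b|) ≤ -|a| := by simp [le_max_left]
      have : -|a| ≤ a := neg_abs_le a
      have := le_max_left |a| |b|
      nlinarith [neg_abs_le a, le_max_left |a| |b|]
    · nlinarith [le_abs_self b, le_max_right |a| |b|]
  constructor
  · have := integral_mono (integrable_const a) hint (fun y => (hb y).1)
    simpa using this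
  · have := integral_mono hint (integrable_const b) (fun y => (hb y).2)
    simpa using this

/-- The infimum of the dual function over all nonnegative multipliers is attained on the
truncated dual set `D_{d_g}`; moreover duals outside `D_{d_g}` have value `> 1` while the
truncated infimum is `≤ 1`. -/
theorem statement1 {X : Type} [MeasurableSpace X] {m : ℕ} (hm : 0 < m)
    (f : X → ℝ) (g : Fin m → X → ℝ)
    (hfm : Measurable f) (hf01 : ∀ y, f y ∈ Set.Icc (0:ℝ) 1)
    (hgm : ∀ i, Measurable (g i)) (hg1 : ∀ i y, g i y ∈ Set.Icc (-1:ℝ) 1)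
    (hd : 0 < dgval g) :
    sInf {s : ℝ | ∃ l : Fin m → ℝ, (∀ i, 0 ≤ l i) ∧ s = dualfn f g l}
      = sInf {s : ℝ | ∃ l : Fin m → ℝ,
          (∀ i, 0 ≤ l i) ∧ (∑ i, l i ≤ 1 / dgval g) ∧ s = dualfn f g l} ∧
    (∀ l : Fin m → ℝ, (∀ i, 0 ≤ l i) → 1 / dgval g < ∑ i, l i → 1 < dualfn f g l) ∧
    sInf {s : ℝ | ∃ l : Fin m → ℝ,
        (∀ i, 0 ≤ l i) ∧ (∑ i, l i ≤ 1 / dgval g) ∧ s = dualfn f g l} ≤ 1 := by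
  haveI : Nonempty (Fin m) := ⟨⟨0, hm⟩⟩
  have hintf : ∀ ξ : ProbabilityMeasure X,
      (∫ y, f y ∂(ξ : Measure X)) ∈ Set.Icc (0:ℝ) 1 :=
    fun ξ => int_mem_Icc_aux ξ hfm hf01
  have hintg : ∀ (i : Fin m) (ξ : ProbabilityMeasure X),
      (∫ y, g i y ∂(ξ : Measure X)) ∈ Set.Icc (-1:ℝ) 1 :=
    fun i ξ => int_mem_Icc_aux ξ (hgm i) (hg1 i)
  -- the set defining dgval is nonempty and there is a witness with positive value
  have hSne : {r : ℝ | ∃ ξ : ProbabilityMeasure X,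
      r = ⨅ i, -(∫ y, g i y ∂(ξ : Measure X))}.Nonempty := by
    by_contra h
    rw [Set.not_nonempty_iff_eq_empty] at h
    rw [dgval, h, Real.sSup_empty] at hd
    exact lt_irrefl 0 hd
  obtain ⟨r0, ⟨ξ₀, hr0⟩, hr0pos⟩ := exists_lt_of_lt_csSup hSne hd
  have hinf_le : ∀ (ξ : ProbabilityMeasure X) (i : Fin m),
      (⨅ j, -(∫ y, g j y ∂(ξ : Measure X))) ≤ -(∫ y, g i y ∂(ξ : Measure X)) :=
    fun ξ i => ciInf_le (Set.Finite.bddBelow (Set.finite_range _)) i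
  -- upper bound on lagrangian
  have hLub : ∀ (l : Fin m → ℝ), (∀ i, 0 ≤ l i) → ∀ ξ : ProbabilityMeasure X,
      lagrangian f g ξ l ≤ 1 + ∑ i, l i := by
    intro l hl ξ
    unfold lagrangian
    have h1 := (hintf ξ).2
    have h2 : ∑ i, l i * (-1 : ℝ) ≤ ∑ i, l i * ∫ y, g i y ∂(ξ : Measure X) :=
      Finset.sum_le_sum fun i _ => mul_le_mul_of_nonneg_left (hintg i ξ).1 (hl i)
    have h3 : ∑ i, l i * (-1 : ℝ) = -∑ i, l i := by
      simp [mul_neg_one, Finset.sum_neg_distrib]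
    rw [h3] at h2
    linarith
  -- lower bound on lagrangian via the iInf
  have hLlb : ∀ (l : Fin m → ℝ), (∀ i, 0 ≤ l i) → ∀ ξ : ProbabilityMeasure X,
      (∑ i, l i) * (⨅ j, -(∫ y, g j y ∂(ξ : Measure X))) ≤ lagrangian f g ξ l := by
    intro l hl ξ
    have h1 : ∑ i, l i * (⨅ j, -(∫ y, g j y ∂(ξ : Measure X)))
        ≤ ∑ i, l i * -(∫ y, g i y ∂(ξ : Measure X)) :=
      Finset.sum_le_sum fun i _ => mul_le_mul_of_nonneg_left (hinf_le ξ i) (hl i)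
    rw [← Finset.sum_mul] at h1
    have h2 : ∑ i, l i * -(∫ y, g i y ∂(ξ : Measure X))
        = -∑ i, l i * ∫ y, g i y ∂(ξ : Measure X) := by
      simp [mul_neg, Finset.sum_neg_distrib]
    rw [h2] at h1
    have h0 := (hintf ξ).1
    unfold lagrangian
    linarith
  -- the set underlying dualfn
  have hTne : ∀ l : Fin m → ℝ,
      {r : ℝ | ∃ ξ : ProbabilityMeasure X, r = lagrangian f g ξ l}.Nonempty :=
    fun l => ⟨lagrangian f g ξ₀ l, ξ₀, rfl⟩
  have hTbdd : ∀ l : Fin m → ℝ, (∀ i, 0 ≤ l i) →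
      BddAbove {r : ℝ | ∃ ξ : ProbabilityMeasure X, r = lagrangian f g ξ l} := by
    intro l hl
    exact ⟨1 + ∑ i, l i, fun r ⟨ξ, hr⟩ => hr ▸ hLub l hl ξ⟩
  have hdual_ge : ∀ (l : Fin m → ℝ), (∀ i, 0 ≤ l i) → ∀ ξ : ProbabilityMeasure X,
      lagrangian f g ξ l ≤ dualfn f g l :=
    fun l hl ξ => le_csSup (hTbdd l hl) ⟨ξ, rfl⟩
  have hsumnn : ∀ (l : Fin m → ℝ), (∀ i, 0 ≤ l i) → (0:ℝ) ≤ ∑ i, l i :=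
    fun l hl => Finset.sum_nonneg fun i _ => hl i
  have hdual_nonneg : ∀ (l : Fin m → ℝ), (∀ i, 0 ≤ l i) → 0 ≤ dualfn f g l := by
    intro l hl
    have h1 := hLlb l hl ξ₀
    rw [← hr0] at h1
    have h2 : (0:ℝ) ≤ (∑ i, l i) * r0 :=
      mul_nonneg (hsumnn l hl) (le_of_lt hr0pos)
    exact le_trans (le_trans h2 h1) (hdual_ge l hl ξ₀)
  -- key inequality: (∑ l) * d_g ≤ dualfn
  have hkey : ∀ (l : Fin m → ℝ), (∀ i, 0 ≤ l i) →
      (∑ i, l i) * dgval g ≤ dualfn f g l := by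
    intro l hl
    rcases eq_or_lt_of_le (hsumnn l hl) with hz | hpos
    · rw [← hz, zero_mul]; exact hdual_nonneg l hl
    · have hub : dgval g ≤ dualfn f g l / (∑ i, l i) := by
        apply Real.sSup_le
        · rintro r ⟨ξ, hr⟩
          rw [le_div_iff₀ hpos, mul_comm]
          calc (∑ i, l i) * r = (∑ i, l i) * (⨅ j, -(∫ y, g j y ∂(ξ : Measure X))) := by
                rw [hr]
            _ ≤ lagrangian f g ξ l := hLlb l hl ξ
            _ ≤ dualfn f g l := hdual_ge l hl ξ
        · exact div_nonneg (hdual_nonneg l hl) (le_of_lt hpos)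
      calc (∑ i, l i) * dgval g ≤ (∑ i, l i) * (dualfn f g l / (∑ i, l i)) :=
            mul_le_mul_of_nonneg_left hub (le_of_lt hpos)
        _ = dualfn f g l := by field_simp
  -- duals outside D have value > 1
  have hstrict : ∀ l : Fin m → ℝ, (∀ i, 0 ≤ l i) → 1 / dgval g < ∑ i, l i →
      1 < dualfn f g l := by
    intro l hl hlt
    have h1 : (1 / dgval g) * dgval g < (∑ i, l i) * dgval g :=
      mul_lt_mul_of_pos_right hlt hd
    rw [one_div_mul_cancel (ne_of_gt hd)] at h1
    exact lt_of_lt_of_le h1 (hkey l hl)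
  -- dualfn at zero is ≤ 1
  have hzero : dualfn f g (fun _ => 0) ≤ 1 := by
    apply Real.sSup_le
    · rintro r ⟨ξ, hr⟩
      rw [hr]
      unfold lagrangian
      simp [(hintf ξ).2]
    · exact zero_le_one
  -- the sets A and B
  set A := {s : ℝ | ∃ l : Fin m → ℝ, (∀ i, 0 ≤ l i) ∧ s = dualfn f g l} with hA
  set B := {s : ℝ | ∃ l : Fin m → ℝ,
      (∀ i, 0 ≤ l i) ∧ (∑ i, l i ≤ 1 / dgval g) ∧ s = dualfn f g l} with hB
  have hBsubA : B ⊆ A := by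
    rintro s ⟨l, hl, _, hs⟩
    exact ⟨l, hl, hs⟩
  have hAbdd : BddBelow A := by
    refine ⟨0, ?_⟩
    rintro s ⟨l, hl, hs⟩
    exact hs ▸ hdual_nonneg l hl
  have hBbdd : BddBelow B := hAbdd.mono hBsubA
  have hzmem : dualfn f g (fun _ => 0) ∈ B := by
    refine ⟨fun _ => 0, fun i => le_refl 0, ?_, rfl⟩
    simpa using hd.le
  have hBne : B.Nonempty := ⟨_, hzmem⟩
  have hAne : A.Nonempty := hBne.mono hBsubA
  have hBle1 : sInf B ≤ 1 := le_trans (csInf_le hBbdd hzmem) hzero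
  refine ⟨?_, hstrict, hBle1⟩
  apply le_antisymm
  · exact csInf_le_csInf hAbdd hBne hBsubA
  · apply le_csInf hAne
    rintro s ⟨l, hl, hs⟩
    by_cases hcase : ∑ i, l i ≤ 1 / dgval g
    · exact csInf_le hBbdd ⟨l, hl, hcase, hs⟩
    · push_neg at hcase
      have := hstrict l hl hcase
      rw [← hs] at this
      exact le_of_lt (lt_of_le_of_lt hBle1 this)
end

section
/- Let X be a measurable space, Ξ the set of probability measures on X, f : X → ℝ measurable with values in [0,1], and g : X → ℝ^m measurable with components in [−1,1]. If d_g > 0, then strong duality holds with the dual variables restricted to the truncated set D_{d_g}: sup_{ξ∈Ξ} inf_{λ∈D_{d_g}} L_{f,g}(ξ,λ) = inf_{λ∈D_{d_g}} sup_{ξ∈Ξ} L_{f,g}(ξ,λ) = OPT_{f,g}. -/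
open MeasureTheory Pointwise

namespace SD

variable {X : Type} [MeasurableSpace X] {m : ℕ}

noncomputable def FI (f : X → ℝ) (ξ : ProbabilityMeasure X) : ℝ := ∫ y, f y ∂(ξ : Measure X)

lemma integrable_bdd {μ : Measure X} [IsFiniteMeasure μ] {h : X → ℝ}
    (hmeas : Measurable h) (hb : ∀ y, |h y| ≤ 1) : Integrable h μ :=
  (integrable_const 1).mono' hmeas.aestronglyMeasurable (ae_of_all _ hb)

lemma FI_mem {h : X → ℝ} {a b : ℝ} (hmeas : Measurable h) (hb : ∀ y, h y ∈ Set.Icc a b)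
    (hab : |a| ≤ 1 ∧ |b| ≤ 1) (ξ : ProbabilityMeasure X) :
    FI h ξ ∈ Set.Icc a b := by
  have hint : Integrable h (ξ : Measure X) := by
    apply integrable_bdd hmeas
    intro y
    rcases hb y with ⟨h1, h2⟩
    rcases abs_le.mp hab.1 with ⟨ha1, _⟩
    rcases abs_le.mp hab.2 with ⟨_, hb2⟩
    exact abs_le.mpr ⟨by linarith, by linarith⟩
  constructor
  · have := integral_mono (integrable_const a) hint (fun y => (hb y).1)
    simpa [integral_const, FI] using this
  · have := integral_mono hint (integrable_const b) (fun y => (hb y).2)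
    simpa [integral_const, FI] using this

/-- Mixture of two probability measures. -/
lemma exists_mix (ξ₁ ξ₂ : ProbabilityMeasure X) {a b : ℝ} (ha : 0 ≤ a) (hb : 0 ≤ b)
    (hab : a + b = 1) :
    ∃ ξ : ProbabilityMeasure X, ∀ h : X → ℝ, Measurable h → (∀ y, |h y| ≤ 1) →
      ∫ y, h y ∂(ξ : Measure X)
        = a * ∫ y, h y ∂(ξ₁ : Measure X) + b * ∫ y, h y ∂(ξ₂ : Measure X) := by
  have hP : IsProbabilityMeasure
      (ENNReal.ofReal a • (ξ₁ : Measure X) + ENNReal.ofReal b • (ξ₂ : Measure X)) := by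
    constructor
    simp [Measure.add_apply, Measure.smul_apply, measure_univ, smul_eq_mul,
      ← ENNReal.ofReal_add ha hb, hab]
  refine ⟨⟨_, hP⟩, ?_⟩
  intro h hmeas hbd
  have i1 : Integrable h (ξ₁ : Measure X) := integrable_bdd hmeas hbd
  have i2 : Integrable h (ξ₂ : Measure X) := integrable_bdd hmeas hbd
  show ∫ y, h y ∂(ENNReal.ofReal a • (ξ₁ : Measure X) + ENNReal.ofReal b • (ξ₂ : Measure X)) = _
  rw [integral_add_measure (i1.smul_measure ENNReal.ofReal_ne_top)
      (i2.smul_measure ENNReal.ofReal_ne_top), integral_smul_measure, integral_smul_measure]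
  simp [ENNReal.toReal_ofReal ha, ENNReal.toReal_ofReal hb, smul_eq_mul]

variable {f : X → ℝ} {g : Fin m → X → ℝ}

lemma gabs (hg1 : ∀ i y, g i y ∈ Set.Icc (-1:ℝ) 1) (i : Fin m) (y : X) : |g i y| ≤ 1 :=
  abs_le.mpr ⟨(hg1 i y).1, (hg1 i y).2⟩

lemma fabs (hf01 : ∀ y, f y ∈ Set.Icc (0:ℝ) 1) (y : X) : |f y| ≤ 1 :=
  abs_le.mpr ⟨by linarith [(hf01 y).1], (hf01 y).2⟩

lemma FI01 (hfm : Measurable f) (hf01 : ∀ y, f y ∈ Set.Icc (0:ℝ) 1) (ξ : ProbabilityMeasure X) :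
    FI f ξ ∈ Set.Icc (0:ℝ) 1 :=
  FI_mem hfm hf01 ⟨by norm_num, by norm_num⟩ ξ

lemma GI11 (hgm : ∀ i, Measurable (g i)) (hg1 : ∀ i y, g i y ∈ Set.Icc (-1:ℝ) 1)
    (i : Fin m) (ξ : ProbabilityMeasure X) : FI (g i) ξ ∈ Set.Icc (-1:ℝ) 1 :=
  FI_mem (hgm i) (hg1 i) ⟨by norm_num, by norm_num⟩ ξ

/-- Slater point with slack close to `dgval g`. -/
lemma exists_slater (hm : 0 < m) (hgm : ∀ i, Measurable (g i))
    (hg1 : ∀ i y, g i y ∈ Set.Icc (-1:ℝ) 1) (hd : 0 < dgval g) {δ : ℝ} (hδ : 0 < δ) :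
    ∃ (ξ₀ : ProbabilityMeasure X) (r : ℝ),
      dgval g - δ < r ∧ r ≤ dgval g ∧ ∀ i, FI (g i) ξ₀ ≤ -r := by
  have hne : {r : ℝ | ∃ ξ : ProbabilityMeasure X,
      r = ⨅ i, -(∫ y, g i y ∂(ξ : Measure X))}.Nonempty := by
    by_contra hcon
    rw [Set.not_nonempty_iff_eq_empty] at hcon
    rw [dgval, hcon, Real.sSup_empty] at hd
    exact lt_irrefl _ hd
  have hub : ∀ r ∈ {r : ℝ | ∃ ξ : ProbabilityMeasure X,
      r = ⨅ i, -(∫ y, g i y ∂(ξ : Measure X))}, r ≤ 1 := by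
    rintro r ⟨ξ, rfl⟩
    have i0 : Fin m := ⟨0, hm⟩
    calc (⨅ i, -(∫ y, g i y ∂(ξ : Measure X))) ≤ -(∫ y, g i0 y ∂(ξ : Measure X)) :=
          ciInf_le (Finite.bddBelow_range _) i0
      _ ≤ 1 := by
          have := (GI11 hgm hg1 i0 ξ).1
          simp only [FI] at this; linarith
  obtain ⟨r, hrmem, hrgt⟩ := exists_lt_of_lt_csSup hne (by linarith : dgval g - δ < dgval g)
  obtain ⟨ξ₀, hr⟩ := hrmem
  refine ⟨ξ₀, r, hrgt, le_csSup ⟨1, fun x hx => hub x hx⟩ ⟨ξ₀, hr⟩, ?_⟩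
  intro i
  have : r ≤ -(∫ y, g i y ∂(ξ₀ : Measure X)) := hr ▸ ciInf_le (Finite.bddBelow_range _) i
  simp only [FI]; linarith

lemma opt_bddAbove (hfm : Measurable f) (hf01 : ∀ y, f y ∈ Set.Icc (0:ℝ) 1) :
    BddAbove {r : ℝ | ∃ ξ : ProbabilityMeasure X,
      (∀ i, ∫ y, g i y ∂(ξ : Measure X) ≤ 0) ∧ r = ∫ y, f y ∂(ξ : Measure X)} := by
  refine ⟨1, ?_⟩
  rintro r ⟨ξ, _, rfl⟩
  exact (FI01 hfm hf01 ξ).2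

lemma feas_le_opt (hfm : Measurable f) (hf01 : ∀ y, f y ∈ Set.Icc (0:ℝ) 1)
    {ξ : ProbabilityMeasure X} (hfeas : ∀ i, ∫ y, g i y ∂(ξ : Measure X) ≤ 0) :
    FI f ξ ≤ OPTval f g :=
  le_csSup (opt_bddAbove hfm hf01) ⟨ξ, hfeas, rfl⟩

lemma opt_le_one (hfm : Measurable f) (hf01 : ∀ y, f y ∈ Set.Icc (0:ℝ) 1) :
    OPTval f g ≤ 1 :=
  Real.sSup_le (by rintro r ⟨ξ, _, rfl⟩; exact (FI01 hfm hf01 ξ).2) zero_le_one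

/-- Separation step: for each `ε ∈ (0,1]` there are nonnegative multipliers with
`L(ξ, λ) ≤ OPT + ε` for every `ξ`. -/
lemma sep (hm : 0 < m) (hfm : Measurable f) (hf01 : ∀ y, f y ∈ Set.Icc (0:ℝ) 1)
    (hgm : ∀ i, Measurable (g i)) (hg1 : ∀ i y, g i y ∈ Set.Icc (-1:ℝ) 1)
    (hd : 0 < dgval g) {ε : ℝ} (hε : 0 < ε) (hε1 : ε ≤ 1) :
    ∃ l : Fin m → ℝ, (∀ i, 0 ≤ l i) ∧
      ∀ ξ : ProbabilityMeasure X, FI f ξ - ∑ i, l i * FI (g i) ξ ≤ OPTval f g + ε := by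
  obtain ⟨ξ₀, c, hc1, hc2, hslack⟩ := exists_slater hm hgm hg1 hd (half_pos hd)
  have hcpos : 0 < c := by linarith
  have hOPT0 : 0 ≤ OPTval f g := by
    have h0 : FI f ξ₀ ≤ OPTval f g := by
      apply feas_le_opt hfm hf01
      intro i
      have := hslack i
      simp only [FI] at this
      linarith
    linarith [(FI01 hfm hf01 ξ₀).1]
  have hOPT1 : OPTval f g ≤ 1 := opt_le_one hfm hf01
  -- the convex sets
  set B0 : Set ((Fin m → ℝ) × ℝ) :=
    {p | ∃ ξ : ProbabilityMeasure X, p = (fun i => FI (g i) ξ, FI f ξ)} with hB0def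
  set C : Set ((Fin m → ℝ) × ℝ) := {p | (∀ i, 0 ≤ p.1 i) ∧ p.2 ≤ 0} with hCdef
  have hB0conv : Convex ℝ B0 := by
    rintro x ⟨ξ₁, rfl⟩ y ⟨ξ₂, rfl⟩ a b ha hb hab
    obtain ⟨ξ, hξ⟩ := exists_mix ξ₁ ξ₂ ha hb hab
    refine ⟨ξ, ?_⟩
    have hff := hξ f hfm (fabs hf01)
    apply Prod.ext
    · funext i
      have hgg := hξ (g i) (hgm i) (gabs hg1 i)
      simp only [Prod.fst_add, Prod.smul_fst, Pi.add_apply, Pi.smul_apply, smul_eq_mul, FI]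
      rw [hgg]
    · simp only [Prod.snd_add, Prod.smul_snd, smul_eq_mul, FI]
      rw [hff]
  have hCconv : Convex ℝ C := by
    rintro x ⟨hx1, hx2⟩ y ⟨hy1, hy2⟩ a b ha hb hab
    constructor
    · intro i
      simp only [Prod.fst_add, Prod.smul_fst, Pi.add_apply, Pi.smul_apply, smul_eq_mul]
      have := mul_nonneg ha (hx1 i)
      have := mul_nonneg hb (hy1 i)
      linarith
    · simp only [Prod.snd_add, Prod.smul_snd, smul_eq_mul]
      have := mul_nonpos_of_nonneg_of_nonpos ha hx2
      have := mul_nonpos_of_nonneg_of_nonpos hb hy2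
      linarith
  have hBconv : Convex ℝ (B0 + C) := hB0conv.add hCconv
  set p : (Fin m → ℝ) × ℝ := (0, OPTval f g + ε) with hpdef
  -- p is not in the closure of B0 + C
  have hpnot : p ∉ closure (B0 + C) := by
    intro hmem
    set η : ℝ := c * ε / (2 * (c + 1)) with hηdef
    set θ : ℝ := ε / (2 * (c + 1)) with hθdef
    have hηpos : 0 < η := by positivity
    have hθ0 : 0 ≤ θ := by positivity
    have hθ1 : θ ≤ 1 := by
      rw [hθdef, div_le_one (by linarith)]
      linarith
    have hθc : θ * c = η := by rw [hθdef, hηdef]; ring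
    obtain ⟨b, hbB, hdist⟩ := Metric.mem_closure_iff.mp hmem η hηpos
    rw [Set.mem_add] at hbB
    obtain ⟨x, hx, q, hq, hxq⟩ := hbB
    obtain ⟨ξ, rfl⟩ := hx
    obtain ⟨hq1, hq2⟩ := hq
    -- coordinate estimates
    have hG : ∀ i, FI (g i) ξ < η := by
      intro i
      have h1 : dist (p.1 i) (b.1 i) ≤ dist p b :=
        (dist_le_pi_dist p.1 b.1 i).trans (by rw [Prod.dist_eq]; exact le_max_left _ _)
      have h2 : |b.1 i| < η := by
        have : dist (p.1 i) (b.1 i) < η := lt_of_le_of_lt h1 hdist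
        simpa [hpdef, Real.dist_eq, abs_sub_comm] using this
      have h3 : b.1 i = FI (g i) ξ + q.1 i := by
        rw [← hxq]; simp
      have h4 := abs_lt.mp h2
      have h5 := hq1 i
      linarith [h4.2]
    have hF : OPTval f g + ε - η < FI f ξ := by
      have h1 : dist p.2 b.2 ≤ dist p b := by rw [Prod.dist_eq]; exact le_max_right _ _
      have h2 : |OPTval f g + ε - b.2| < η := by
        have : dist p.2 b.2 < η := lt_of_le_of_lt h1 hdist
        simpa [hpdef, Real.dist_eq] using this
      have h3 : b.2 = FI f ξ + q.2 := by rw [← hxq]; simp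
      have := abs_lt.mp h2
      linarith [this.1]
    -- mix with the Slater point
    obtain ⟨ξ', hξ'⟩ := exists_mix ξ ξ₀ (by linarith : (0:ℝ) ≤ 1 - θ) hθ0 (by ring)
    have hfeas' : ∀ i, ∫ y, g i y ∂(ξ' : Measure X) ≤ 0 := by
      intro i
      rw [hξ' (g i) (hgm i) (gabs hg1 i)]
      have h1 : FI (g i) ξ < η := hG i
      have h2 : FI (g i) ξ₀ ≤ -c := hslack i
      have h3 : (1 - θ) * FI (g i) ξ ≤ (1 - θ) * η :=
        mul_le_mul_of_nonneg_left h1.le (by linarith)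
      have h4 : θ * FI (g i) ξ₀ ≤ θ * (-c) := mul_le_mul_of_nonneg_left h2 hθ0
      have : (1 - θ) * FI (g i) ξ + θ * FI (g i) ξ₀ ≤ (1 - θ) * η + θ * (-c) := by linarith
      have hcalc : (1 - θ) * η + θ * (-c) = -θ * η := by
        rw [← hθc]; ring
      simp only [FI] at this ⊢
      nlinarith [mul_nonneg hθ0 hηpos.le]
    have hval' : OPTval f g < FI f ξ' := by
      have := hξ' f hfm (fabs hf01)
      simp only [FI] at this ⊢
      have hF1 : FI f ξ ≤ 1 := (FI01 hfm hf01 ξ).2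
      have hF0 : 0 ≤ FI f ξ₀ := (FI01 hfm hf01 ξ₀).1
      have hηθ : η + θ = ε / 2 := by rw [hηdef, hθdef]; field_simp
      simp only [FI] at hF hF1 hF0
      nlinarith [mul_nonneg hθ0 hF0, mul_le_mul_of_nonneg_left hF1 hθ0]
    exact absurd (feas_le_opt hfm hf01 hfeas') (not_le.mpr hval')
  -- separate
  obtain ⟨φ, u, hpu, hub⟩ :=
    geometric_hahn_banach_point_closed (hBconv.closure) isClosed_closure hpnot
  have hub' : ∀ b ∈ B0 + C, u < φ b := fun b hb => hub b (subset_closure hb)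
  set x₀ : (Fin m → ℝ) × ℝ := (fun i => FI (g i) ξ₀, FI f ξ₀) with hx₀def
  have hx₀B : x₀ ∈ B0 + C := by
    have : x₀ + 0 ∈ B0 + C :=
      Set.add_mem_add ⟨ξ₀, rfl⟩ ⟨fun i => le_refl 0, le_refl 0⟩
    simpa using this
  have hx₀u : u < φ x₀ := hub' x₀ hx₀B
  have hcone : ∀ q ∈ C, u < φ x₀ + φ q := by
    intro q hq
    have : x₀ + q ∈ B0 + C := Set.add_mem_add ⟨ξ₀, rfl⟩ hq
    have := hub' _ this
    rwa [map_add] at this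
  set μ : Fin m → ℝ := fun i => φ (Pi.single i 1, 0) with hμdef
  set β : ℝ := φ (0, 1) with hβdef
  -- expansion of φ
  have hexp : ∀ (v : Fin m → ℝ) (t : ℝ), φ (v, t) = (∑ i, v i * μ i) + t * β := by
    intro v t
    have hsplit : ((v, t) : (Fin m → ℝ) × ℝ) = (v, 0) + (0, t) := by simp
    have h0t : ((0, t) : (Fin m → ℝ) × ℝ) = t • ((0 : Fin m → ℝ), (1:ℝ)) := by
      simp [Prod.smul_mk]
    have hv0 : ((v, (0:ℝ)) : (Fin m → ℝ) × ℝ)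
        = ∑ i, (v i) • ((Pi.single i 1 : Fin m → ℝ), (0:ℝ)) := by
      apply Prod.ext
      · rw [Prod.fst_sum]
        simp only [Prod.smul_fst]
        rw [← Finset.univ_sum_single v]
        apply Finset.sum_congr rfl
        intro i _
        rw [← Pi.single_smul, smul_eq_mul, mul_one, Finset.univ_sum_single]
      · rw [Prod.snd_sum]
        simp
    rw [hsplit, map_add, h0t, φ.map_smul, hv0, map_sum]
    simp only [ContinuousLinearMap.map_smul, smul_eq_mul]
    rfl
  have hμ0 : ∀ i, 0 ≤ μ i := by
    intro i
    by_contra hneg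
    push_neg at hneg
    set t : ℝ := (φ x₀ - u) / (-μ i) with htdef
    have ht0 : 0 ≤ t := div_nonneg (by linarith) (by linarith)
    have hqC : ((t • (Pi.single i 1 : Fin m → ℝ)), (0:ℝ)) ∈ C := by
      refine ⟨fun j => ?_, le_refl 0⟩
      simp only [Pi.smul_apply, smul_eq_mul]
      rcases eq_or_ne j i with h | h
      · subst h; simp [Pi.single_eq_same]; positivity
      · simp [Pi.single_eq_of_ne h]
    have hφq : φ ((t • (Pi.single i 1 : Fin m → ℝ)), (0:ℝ)) = t * μ i := by
      have : ((t • (Pi.single i 1 : Fin m → ℝ)), (0:ℝ))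
          = t • ((Pi.single i 1 : Fin m → ℝ), (0:ℝ)) := by simp [Prod.smul_mk]
      rw [this, φ.map_smul, smul_eq_mul, hμdef]
    have := hcone _ hqC
    rw [hφq] at this
    have htμ : t * μ i = u - φ x₀ := by
      rw [htdef, div_mul_eq_mul_div, div_eq_iff (show -μ i ≠ 0 by linarith)]; ring
    linarith
  have hβ0 : β ≤ 0 := by
    by_contra hpos
    push_neg at hpos
    set t : ℝ := (φ x₀ - u) / β with htdef
    have ht0 : 0 ≤ t := div_nonneg (by linarith) hpos.le
    have hqC : (((0:Fin m → ℝ)), -t) ∈ C := by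
      exact ⟨fun j => le_refl 0, neg_nonpos.mpr ht0⟩
    have hφq : φ ((0:Fin m → ℝ), -t) = -t * β := by
      have : (((0:Fin m → ℝ)), -t) = (-t) • ((0 : Fin m → ℝ), (1:ℝ)) := by
        simp [Prod.smul_mk]
      rw [this, φ.map_smul, smul_eq_mul, hβdef]
    have := hcone _ hqC
    rw [hφq] at this
    have htβ : t * β = φ x₀ - u := by
      rw [htdef]; exact div_mul_cancel₀ _ (ne_of_gt hpos)
    linarith
  have hφp : φ p = (OPTval f g + ε) * β := by
    rw [hpdef, hexp]
    simp
  have hφB0 : ∀ ξ : ProbabilityMeasure X,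
      u < (∑ i, FI (g i) ξ * μ i) + FI f ξ * β := by
    intro ξ
    have hmem : ((fun i => FI (g i) ξ, FI f ξ) : (Fin m → ℝ) × ℝ) ∈ B0 + C := by
      have : ((fun i => FI (g i) ξ, FI f ξ) : (Fin m → ℝ) × ℝ) + 0 ∈ B0 + C :=
        Set.add_mem_add ⟨ξ, rfl⟩ ⟨fun i => le_refl 0, le_refl 0⟩
      simpa using this
    have := hub' _ hmem
    rwa [hexp] at this
  have hβneg : β < 0 := by
    rcases lt_or_eq_of_le hβ0 with h | h
    · exact h
    · exfalso
      have hu0 : 0 < u := by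
        rw [hφp, h, mul_zero] at hpu
        exact hpu
      have := hφB0 ξ₀
      rw [h, mul_zero, add_zero] at this
      have hsum0 : (∑ i, FI (g i) ξ₀ * μ i) ≤ 0 := by
        apply Finset.sum_nonpos
        intro i _
        exact mul_nonpos_iff.mpr (Or.inr ⟨by linarith [hslack i], hμ0 i⟩)
      linarith
  set ν : ℝ := -β with hνdef
  have hνpos : 0 < ν := by rw [hνdef]; linarith
  refine ⟨fun i => μ i / ν, fun i => div_nonneg (hμ0 i) hνpos.le, ?_⟩
  intro ξ
  have hsum : ν * (∑ i, (μ i / ν) * FI (g i) ξ) = ∑ i, μ i * FI (g i) ξ := by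
    rw [Finset.mul_sum]
    apply Finset.sum_congr rfl
    intro i _
    field_simp
  have hchain : (OPTval f g + ε) * β < (∑ i, FI (g i) ξ * μ i) + FI f ξ * β := by
    calc (OPTval f g + ε) * β = φ p := hφp.symm
      _ < u := hpu
      _ < _ := hφB0 ξ
  have hβν : β = -ν := by rw [hνdef]; ring
  rw [hβν] at hchain
  have hcomm : (∑ i, FI (g i) ξ * μ i) = ∑ i, μ i * FI (g i) ξ := by
    apply Finset.sum_congr rfl; intro i _; ring
  rw [hcomm] at hchain
  have h1 : ν * (FI f ξ - (OPTval f g + ε)) < ν * (∑ i, (μ i / ν) * FI (g i) ξ) := by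
    rw [hsum]; nlinarith
  have := (mul_lt_mul_iff_right₀ hνpos).mp h1
  linarith

/-- Key lemma: approximate dual optimizers within the truncated set `D_{d_g}`. -/
lemma key (hm : 0 < m) (hfm : Measurable f) (hf01 : ∀ y, f y ∈ Set.Icc (0:ℝ) 1)
    (hgm : ∀ i, Measurable (g i)) (hg1 : ∀ i y, g i y ∈ Set.Icc (-1:ℝ) 1)
    (hd : 0 < dgval g) {ε : ℝ} (hε : 0 < ε) :
    ∃ l : Fin m → ℝ, (∀ i, 0 ≤ l i) ∧ (∑ i, l i ≤ 1 / dgval g) ∧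
      ∀ ξ : ProbabilityMeasure X, FI f ξ - ∑ i, l i * FI (g i) ξ ≤ OPTval f g + ε := by
  set d := dgval g with hddef
  set M : ℝ := min ε 1 with hMdef
  have hM0 : 0 < M := lt_min hε one_pos
  have hM1 : M ≤ 1 := min_le_right _ _
  have hMε : M ≤ ε := min_le_left _ _
  set ε₁ : ℝ := M / 4 with hε₁def
  have hε₁0 : 0 < ε₁ := by positivity
  have hε₁1 : ε₁ ≤ 1 := by rw [hε₁def]; linarith
  obtain ⟨ξ₁, r, hr1, hr2, hslack⟩ :=
    exists_slater hm hgm hg1 hd (show (0:ℝ) < d * M / 4 by positivity)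
  have hrpos : 0 < r := by nlinarith
  obtain ⟨l, hl0, hlub⟩ := sep hm hfm hf01 hgm hg1 hd hε₁0 hε₁1
  have hOPT0 : 0 ≤ OPTval f g := by
    have h0 : FI f ξ₁ ≤ OPTval f g := by
      apply feas_le_opt hfm hf01
      intro i
      have := hslack i
      simp only [FI] at this
      linarith
    linarith [(FI01 hfm hf01 ξ₁).1]
  have hOPT1 : OPTval f g ≤ 1 := opt_le_one hfm hf01
  -- norm bound on l
  have hnorm : r * (∑ i, l i) ≤ 1 + ε₁ := by
    have h1 : FI f ξ₁ - ∑ i, l i * FI (g i) ξ₁ ≤ OPTval f g + ε₁ := hlub ξ₁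
    have h2 : ∑ i, l i * r ≤ ∑ i, l i * (-FI (g i) ξ₁) := by
      apply Finset.sum_le_sum
      intro i _
      exact mul_le_mul_of_nonneg_left (by linarith [hslack i]) (hl0 i)
    have h3 : ∑ i, l i * (-FI (g i) ξ₁) = -(∑ i, l i * FI (g i) ξ₁) := by
      rw [← Finset.sum_neg_distrib]
      apply Finset.sum_congr rfl
      intro i _; ring
    have h4 : ∑ i, l i * r = r * ∑ i, l i := by
      rw [← Finset.sum_mul, mul_comm]
    have hF1 : 0 ≤ FI f ξ₁ := (FI01 hfm hf01 ξ₁).1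
    rw [h4] at h2
    rw [h3] at h2
    linarith
  set t : ℝ := r / (d * (1 + ε₁)) with htdef
  have hden : 0 < d * (1 + ε₁) := by positivity
  have ht0 : 0 ≤ t := by positivity
  have ht1 : t ≤ 1 := by
    rw [htdef, div_le_one hden]
    nlinarith
  refine ⟨fun i => t * l i, fun i => mul_nonneg ht0 (hl0 i), ?_, ?_⟩
  · -- norm bound
    have h1 : ∑ i, t * l i = t * ∑ i, l i := by rw [Finset.mul_sum]
    rw [h1]
    have h2 : t * ∑ i, l i ≤ t * ((1 + ε₁) / r) := by
      apply mul_le_mul_of_nonneg_left _ ht0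
      rw [le_div_iff₀ hrpos]
      linarith [hnorm]
    have h3 : t * ((1 + ε₁) / r) = 1 / d := by
      rw [htdef]
      field_simp
    linarith
  · intro ξ
    have h1 : FI f ξ - ∑ i, l i * FI (g i) ξ ≤ OPTval f g + ε₁ := hlub ξ
    have hsum : ∑ i, (t * l i) * FI (g i) ξ = t * ∑ i, l i * FI (g i) ξ := by
      rw [Finset.mul_sum]
      apply Finset.sum_congr rfl
      intro i _; ring
    rw [hsum]
    have hF : FI f ξ ∈ Set.Icc (0:ℝ) 1 := FI01 hfm hf01 ξ
    -- 1 - t ≤ M/2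
    have htlow : 1 - t ≤ M / 2 := by
      have h2 : (d - d * M / 4) / (d * (1 + ε₁)) ≤ t := by
        rw [htdef]
        exact (div_le_div_iff_of_pos_right hden).mpr (by linarith)
      have h3 : 1 - M / 2 ≤ (d - d * M / 4) / (d * (1 + ε₁)) := by
        rw [le_div_iff₀ hden, hε₁def]
        nlinarith
      linarith
    nlinarith [hF.1, hF.2, mul_le_mul_of_nonneg_left h1 ht0]

end SD

/-- Strong duality with duals restricted to the truncated set
`D_{d_g} = {λ ≥ 0 : ‖λ‖₁ ≤ 1/d_g}`. -/
theorem statement2 {X : Type} [MeasurableSpace X] {m : ℕ} (hm : 0 < m)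
    (f : X → ℝ) (g : Fin m → X → ℝ)
    (hfm : Measurable f) (hf01 : ∀ y, f y ∈ Set.Icc (0:ℝ) 1)
    (hgm : ∀ i, Measurable (g i)) (hg1 : ∀ i y, g i y ∈ Set.Icc (-1:ℝ) 1)
    (hd : 0 < dgval g) :
    sSup {r : ℝ | ∃ ξ : ProbabilityMeasure X,
        r = sInf {s : ℝ | ∃ l : Fin m → ℝ,
          (∀ i, 0 ≤ l i) ∧ (∑ i, l i ≤ 1 / dgval g) ∧ s = lagrangian f g ξ l}}
      = OPTval f g ∧
    sInf {s : ℝ | ∃ l : Fin m → ℝ, (∀ i, 0 ≤ l i) ∧ (∑ i, l i ≤ 1 / dgval g) ∧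
        s = sSup {r : ℝ | ∃ ξ : ProbabilityMeasure X, r = lagrangian f g ξ l}}
      = OPTval f g := by
  have hOPT1 : OPTval f g ≤ 1 := SD.opt_le_one hfm hf01
  obtain ⟨ξ₀, r₀, hr₀1, hr₀2, hslack₀⟩ := SD.exists_slater hm hgm hg1 hd (half_pos hd)
  have hr₀pos : 0 < r₀ := by linarith
  have hfeas₀ : ∀ i, ∫ y, g i y ∂(ξ₀ : Measure X) ≤ 0 := by
    intro i
    have := hslack₀ i
    simp only [SD.FI] at this
    linarith
  have hF₀ := SD.FI01 hfm hf01 ξ₀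
  have hOPT0 : 0 ≤ OPTval f g := le_trans hF₀.1 (SD.feas_le_opt hfm hf01 hfeas₀)
  have hdinv : (0:ℝ) ≤ 1 / dgval g := by positivity
  -- bounds on the Lagrangian over the truncated dual set
  have hLlow : ∀ (ξ : ProbabilityMeasure X) (l : Fin m → ℝ), (∀ i, 0 ≤ l i) →
      (∑ i, l i ≤ 1 / dgval g) → -(1 / dgval g) ≤ lagrangian f g ξ l := by
    intro ξ l hl0 hls
    have hF := SD.FI01 hfm hf01 ξ
    simp only [SD.FI] at hF
    have hsum : ∑ i, l i * (∫ y, g i y ∂(ξ : Measure X)) ≤ ∑ i, l i := by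
      apply Finset.sum_le_sum
      intro i _
      have h2 := (SD.GI11 hgm hg1 i ξ).2
      simp only [SD.FI] at h2
      calc l i * (∫ y, g i y ∂(ξ : Measure X)) ≤ l i * 1 :=
            mul_le_mul_of_nonneg_left h2 (hl0 i)
        _ = l i := mul_one _
    unfold lagrangian
    linarith [hF.1, hF.2]
  have hLhigh : ∀ (ξ : ProbabilityMeasure X) (l : Fin m → ℝ), (∀ i, 0 ≤ l i) →
      (∑ i, l i ≤ 1 / dgval g) → lagrangian f g ξ l ≤ 1 + 1 / dgval g := by
    intro ξ l hl0 hls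
    have hF := SD.FI01 hfm hf01 ξ
    simp only [SD.FI] at hF
    have hsum : -(∑ i, l i) ≤ ∑ i, l i * (∫ y, g i y ∂(ξ : Measure X)) := by
      rw [← Finset.sum_neg_distrib]
      apply Finset.sum_le_sum
      intro i _
      have h1 := (SD.GI11 hgm hg1 i ξ).1
      simp only [SD.FI] at h1
      calc -(l i) = l i * (-1) := by ring
        _ ≤ l i * (∫ y, g i y ∂(ξ : Measure X)) := mul_le_mul_of_nonneg_left h1 (hl0 i)
    unfold lagrangian
    linarith [hF.1, hF.2]
  have hLfeas : ∀ (ξ : ProbabilityMeasure X), (∀ i, ∫ y, g i y ∂(ξ : Measure X) ≤ 0) →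
      ∀ (l : Fin m → ℝ), (∀ i, 0 ≤ l i) →
      (∫ y, f y ∂(ξ : Measure X)) ≤ lagrangian f g ξ l := by
    intro ξ hfeas l hl0
    have hsum : ∑ i, l i * (∫ y, g i y ∂(ξ : Measure X)) ≤ 0 := by
      apply Finset.sum_nonpos
      intro i _
      exact mul_nonpos_iff.mpr (Or.inl ⟨hl0 i, hfeas i⟩)
    unfold lagrangian
    linarith
  have hzeroD : (∀ i : Fin m, 0 ≤ (0:ℝ)) ∧ ∑ i : Fin m, (0:ℝ) ≤ 1 / dgval g :=
    ⟨fun _ => le_refl 0, by simpa using hdinv⟩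
  have hL0 : ∀ ξ : ProbabilityMeasure X,
      lagrangian f g ξ (fun _ => 0) = ∫ y, f y ∂(ξ : Measure X) := by
    intro ξ; unfold lagrangian; simp
  constructor
  · -- sup-inf = OPT
    set P : Set ℝ := {r : ℝ | ∃ ξ : ProbabilityMeasure X,
        r = sInf {s : ℝ | ∃ l : Fin m → ℝ,
          (∀ i, 0 ≤ l i) ∧ (∑ i, l i ≤ 1 / dgval g) ∧ s = lagrangian f g ξ l}} with hPdef
    have hSne : ∀ ξ : ProbabilityMeasure X, {s : ℝ | ∃ l : Fin m → ℝ,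
        (∀ i, 0 ≤ l i) ∧ (∑ i, l i ≤ 1 / dgval g) ∧ s = lagrangian f g ξ l}.Nonempty :=
      fun ξ => ⟨lagrangian f g ξ (fun _ => 0), fun _ => (0:ℝ), fun _ => le_refl 0, hzeroD.2, rfl⟩
    have hSbdd : ∀ ξ : ProbabilityMeasure X, BddBelow {s : ℝ | ∃ l : Fin m → ℝ,
        (∀ i, 0 ≤ l i) ∧ (∑ i, l i ≤ 1 / dgval g) ∧ s = lagrangian f g ξ l} := by
      intro ξ
      refine ⟨-(1 / dgval g), ?_⟩
      rintro s ⟨l, hl0, hls, rfl⟩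
      exact hLlow ξ l hl0 hls
    have hPbdd : BddAbove P := by
      refine ⟨1, ?_⟩
      rintro x ⟨ξ, rfl⟩
      have h1 : sInf {s : ℝ | ∃ l : Fin m → ℝ,
          (∀ i, 0 ≤ l i) ∧ (∑ i, l i ≤ 1 / dgval g) ∧ s = lagrangian f g ξ l}
          ≤ lagrangian f g ξ (fun _ => 0) :=
        csInf_le (hSbdd ξ) ⟨fun _ => (0:ℝ), fun _ => le_refl 0, hzeroD.2, rfl⟩
      have hF := SD.FI01 hfm hf01 ξ
      simp only [SD.FI] at hF
      rw [hL0 ξ] at h1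
      linarith [hF.1, hF.2]
    have hfeas_le : ∀ ξ : ProbabilityMeasure X, (∀ i, ∫ y, g i y ∂(ξ : Measure X) ≤ 0) →
        (∫ y, f y ∂(ξ : Measure X)) ≤ sSup P := by
      intro ξ hfeas
      have h1 : (∫ y, f y ∂(ξ : Measure X)) ≤ sInf {s : ℝ | ∃ l : Fin m → ℝ,
          (∀ i, 0 ≤ l i) ∧ (∑ i, l i ≤ 1 / dgval g) ∧ s = lagrangian f g ξ l} := by
        apply le_csInf (hSne ξ)
        rintro s ⟨l, hl0, hls, rfl⟩
        exact hLfeas ξ hfeas l hl0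
      exact h1.trans (le_csSup hPbdd ⟨ξ, rfl⟩)
    have hsup0 : 0 ≤ sSup P := le_trans hF₀.1 (hfeas_le ξ₀ hfeas₀)
    apply le_antisymm
    · -- sSup P ≤ OPT
      apply Real.sSup_le _ hOPT0
      rintro x ⟨ξ, rfl⟩
      by_contra hcon
      push_neg at hcon
      set ε : ℝ := (sInf {s : ℝ | ∃ l : Fin m → ℝ,
          (∀ i, 0 ≤ l i) ∧ (∑ i, l i ≤ 1 / dgval g) ∧ s = lagrangian f g ξ l}
          - OPTval f g) / 2 with hεdef
      have hεpos : 0 < ε := by rw [hεdef]; linarith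
      obtain ⟨l, hl0, hls, hlub⟩ := SD.key hm hfm hf01 hgm hg1 hd hεpos
      have h1 : sInf {s : ℝ | ∃ l : Fin m → ℝ,
          (∀ i, 0 ≤ l i) ∧ (∑ i, l i ≤ 1 / dgval g) ∧ s = lagrangian f g ξ l}
          ≤ lagrangian f g ξ l := csInf_le (hSbdd ξ) ⟨l, hl0, hls, rfl⟩
      have h2 : lagrangian f g ξ l ≤ OPTval f g + ε := hlub ξ
      rw [hεdef] at h2
      linarith
    · -- OPT ≤ sSup P
      apply Real.sSup_le _ hsup0
      rintro x ⟨ξ, hfeas, rfl⟩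
      exact hfeas_le ξ hfeas
  · -- inf-sup = OPT
    set T : Set ℝ := {s : ℝ | ∃ l : Fin m → ℝ, (∀ i, 0 ≤ l i) ∧ (∑ i, l i ≤ 1 / dgval g) ∧
        s = sSup {r : ℝ | ∃ ξ : ProbabilityMeasure X, r = lagrangian f g ξ l}} with hTdef
    have hinbdd : ∀ l : Fin m → ℝ, (∀ i, 0 ≤ l i) → (∑ i, l i ≤ 1 / dgval g) →
        BddAbove {r : ℝ | ∃ ξ : ProbabilityMeasure X, r = lagrangian f g ξ l} := by
      intro l hl0 hls
      refine ⟨1 + 1 / dgval g, ?_⟩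
      rintro r ⟨ξ, rfl⟩
      exact hLhigh ξ l hl0 hls
    have hTne : T.Nonempty :=
      ⟨sSup {r : ℝ | ∃ ξ : ProbabilityMeasure X, r = lagrangian f g ξ (fun _ => 0)},
        fun _ => 0, fun _ => le_refl 0, hzeroD.2, rfl⟩
    have hTlb : ∀ s ∈ T, OPTval f g ≤ s := by
      rintro s ⟨l, hl0, hls, rfl⟩
      have hsup0' : 0 ≤ sSup {r : ℝ | ∃ ξ : ProbabilityMeasure X, r = lagrangian f g ξ l} := by
        have h1 : lagrangian f g ξ₀ l ≤ sSup {r : ℝ | ∃ ξ : ProbabilityMeasure X,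
            r = lagrangian f g ξ l} := le_csSup (hinbdd l hl0 hls) ⟨ξ₀, rfl⟩
        have h2 := hLfeas ξ₀ hfeas₀ l hl0
        have := hF₀.1
        simp only [SD.FI] at this
        linarith
      apply Real.sSup_le _ hsup0'
      rintro x ⟨ξ, hfeas, rfl⟩
      have h1 := hLfeas ξ hfeas l hl0
      have h2 : lagrangian f g ξ l ≤ sSup {r : ℝ | ∃ ξ : ProbabilityMeasure X,
          r = lagrangian f g ξ l} := le_csSup (hinbdd l hl0 hls) ⟨ξ, rfl⟩
      linarith
    apply le_antisymm
    · -- sInf T ≤ OPT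
      by_contra hcon
      push_neg at hcon
      set ε : ℝ := (sInf T - OPTval f g) / 2 with hεdef
      have hεpos : 0 < ε := by rw [hεdef]; linarith
      obtain ⟨l, hl0, hls, hlub⟩ := SD.key hm hfm hf01 hgm hg1 hd hεpos
      have h1 : sInf T ≤ sSup {r : ℝ | ∃ ξ : ProbabilityMeasure X, r = lagrangian f g ξ l} :=
        csInf_le ⟨OPTval f g, fun s hs => hTlb s hs⟩ ⟨l, hl0, hls, rfl⟩
      have h2 : sSup {r : ℝ | ∃ ξ : ProbabilityMeasure X, r = lagrangian f g ξ l}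
          ≤ OPTval f g + ε := by
        apply Real.sSup_le _ (by linarith)
        rintro r ⟨ξ, rfl⟩
        exact hlub ξ
      rw [hεdef] at h2
      linarith
    · exact le_csInf hTne hTlb
end

section
/- (Play-phase reward bound, stochastic constraints.) Let T, T₁ ∈ ℕ with 1 ≤ T₁ ≤ T, let ρ̃ > 0, and let x_1,…,x_{T₁} ∈ X, λ_1,…,λ_{T₁} ∈ D_{ρ̃}, reward functions f_t : X → [0,1], constraint functions g_t : X → [−1,1]^m, a measurable ḡ : X → [−1,1]^m, ξ* ∈ Ξ with ḡ_i(ξ*) ≤ 0 for all i ∈ [m], and constants R^P, R^D, E ≥ 0. Assume: (i) Σ_{t=1}^{T₁} (f_t(x_t) − ⟨λ_t, g_t(x_t)⟩) ≥ Σ_{t=1}^{T₁} (f_t(ξ*) − ⟨λ_t, g_t(ξ*)⟩) − (1 + 2/ρ̃)·R^P; (ii) for every λ ∈ D_{ρ̃}, Σ_{t=1}^{T₁} ⟨λ_t, g_t(x_t)⟩ ≥ Σ_{t=1}^{T₁} ⟨λ, g_t(x_t)⟩ − R^D/ρ̃; (iii) either T₁ = T, or max_{i∈[m]} Σ_{t=1}^{T₁}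 g_{t,i}(x_t) ≥ (T − T₁)·ρ̃; (iv) Σ_{t=1}^{T₁} ⟨λ_t, g_t(ξ*)⟩ ≤ Σ_{t=1}^{T₁} ⟨λ_t, ḡ(ξ*)⟩ + E/ρ̃. Then Σ_{t=1}^{T₁} f_t(x_t) ≥ Σ_{t=1}^{T₁} f_t(ξ*) + (T − T₁) − E/ρ̃ − (1 + 2/ρ̃)·R^P − R^D/ρ̃. -/
open MeasureTheory Finset

/-- Play-phase reward bound with stochastic constraints (Lemma: small regret). -/
theorem statement4 {X : Type} [MeasurableSpace X] {m : ℕ} (hm : 0 < m)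
    (T T₁ : ℕ) (hT₁ : 1 ≤ T₁) (hTT : T₁ ≤ T)
    (ρt : ℝ) (hρt : 0 < ρt)
    (x : ℕ → X) (lam : ℕ → Fin m → ℝ)
    -- the dual iterates lie in `D_{ρ̃}`
    (hlam : ∀ t ∈ Finset.Icc 1 T₁, (∀ i, 0 ≤ lam t i) ∧ ∑ i, lam t i ≤ 1 / ρt)
    (f : ℕ → X → ℝ) (g : ℕ → Fin m → X → ℝ)
    (hfm : ∀ t, Measurable (f t)) (hf01 : ∀ t y, f t y ∈ Set.Icc (0:ℝ) 1)
    (hgm : ∀ t i, Measurable (g t i)) (hg1 : ∀ t i y, g t i y ∈ Set.Icc (-1:ℝ) 1)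
    (gbar : Fin m → X → ℝ) (hgbm : ∀ i, Measurable (gbar i))
    (hgb1 : ∀ i y, gbar i y ∈ Set.Icc (-1:ℝ) 1)
    (ξs : ProbabilityMeasure X)
    (hfeas : ∀ i, ∫ y, gbar i y ∂(ξs : Measure X) ≤ 0)
    (RP RD E : ℝ) (hRP : 0 ≤ RP) (hRD : 0 ≤ RD) (hE : 0 ≤ E)
    -- (i) primal regret bound
    (h1 : ∑ t ∈ Finset.Icc 1 T₁, (f t (x t) - ∑ i, lam t i * g t i (x t)) ≥
          ∑ t ∈ Finset.Icc 1 T₁, ((∫ y, f t y ∂(ξs : Measure X)) -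
            ∑ i, lam t i * ∫ y, g t i y ∂(ξs : Measure X)) - (1 + 2 / ρt) * RP)
    -- (ii) dual regret bound
    (h2 : ∀ l : Fin m → ℝ, (∀ i, 0 ≤ l i) → (∑ i, l i ≤ 1 / ρt) →
          ∑ t ∈ Finset.Icc 1 T₁, ∑ i, lam t i * g t i (x t) ≥
          ∑ t ∈ Finset.Icc 1 T₁, ∑ i, l i * g t i (x t) - RD / ρt)
    -- (iii) either the play phase lasts the whole horizon or some constraint is violated a lot
    (h3 : T₁ = T ∨ ∃ i, ((T : ℝ) - (T₁ : ℝ)) * ρt ≤ ∑ t ∈ Finset.Icc 1 T₁, g t i (x t))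
    -- (iv) concentration of the constraints at ξ*
    (h4 : ∑ t ∈ Finset.Icc 1 T₁, ∑ i, lam t i * ∫ y, g t i y ∂(ξs : Measure X) ≤
          ∑ t ∈ Finset.Icc 1 T₁, ∑ i, lam t i * ∫ y, gbar i y ∂(ξs : Measure X) + E / ρt) :
    ∑ t ∈ Finset.Icc 1 T₁, f t (x t) ≥
      ∑ t ∈ Finset.Icc 1 T₁, (∫ y, f t y ∂(ξs : Measure X)) + ((T : ℝ) - (T₁ : ℝ))
        - E / ρt - (1 + 2 / ρt) * RP - RD / ρt := by

  -- bound on the Lagrangian term L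
  have hL : ∑ t ∈ Finset.Icc 1 T₁, ∑ i, lam t i * g t i (x t) ≥
      ((T : ℝ) - (T₁ : ℝ)) - RD / ρt := by
    rcases h3 with h3 | ⟨i, hi⟩
    · subst h3
      have h := h2 (fun _ => 0) (fun _ => le_refl 0) (by simp; positivity)
      simpa using h
    · set l : Fin m → ℝ := Pi.single i (1 / ρt) with hl
      have hl1 : ∀ j, 0 ≤ l j := by
        intro j
        rcases eq_or_ne j i with rfl | hj
        · simp [hl]; positivity
        · simp [hl, Pi.single_eq_of_ne hj]
      have hl2 : ∑ j, l j ≤ 1 / ρt := by simp [hl, Finset.sum_pi_single]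
      have h := h2 l hl1 hl2
      have heq : ∀ t, ∑ j, l j * g t j (x t)
          = (1 / ρt) * g t i (x t) := by
        intro t
        rw [Finset.sum_eq_single i]
        · simp [hl]
        · intro b _ hb; simp [hl, Pi.single_eq_of_ne hb]
        · simp
      have h' : ∑ t ∈ Finset.Icc 1 T₁, ∑ i, lam t i * g t i (x t) ≥
          (1 / ρt) * ∑ t ∈ Finset.Icc 1 T₁, g t i (x t) - RD / ρt := by
        rw [Finset.mul_sum]
        calc ∑ t ∈ Finset.Icc 1 T₁, ∑ i, lam t i * g t i (x t)
            ≥ ∑ t ∈ Finset.Icc 1 T₁, ∑ j, l j * g t j (x t) - RD / ρt := h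
          _ = ∑ t ∈ Finset.Icc 1 T₁, (1 / ρt) * g t i (x t) - RD / ρt := by
              congr 1; exact Finset.sum_congr rfl fun t _ => heq t
      have hmul : (1 / ρt) * (((T : ℝ) - (T₁ : ℝ)) * ρt) ≤
          (1 / ρt) * ∑ t ∈ Finset.Icc 1 T₁, g t i (x t) :=
        mul_le_mul_of_nonneg_left hi (by positivity)
      have hcalc : (1 / ρt) * (((T : ℝ) - (T₁ : ℝ)) * ρt) = (T : ℝ) - (T₁ : ℝ) := by
        field_simp
      linarith
  -- bound on constraints at ξ*
  have hC : ∑ t ∈ Finset.Icc 1 T₁, ∑ i, lam t i * ∫ y, g t i y ∂(ξs : Measure X) ≤ E / ρt := by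
    have hneg : ∑ t ∈ Finset.Icc 1 T₁, ∑ i, lam t i * ∫ y, gbar i y ∂(ξs : Measure X) ≤ 0 := by
      apply Finset.sum_nonpos
      intro t ht
      apply Finset.sum_nonpos
      intro i _
      exact mul_nonpos_of_nonneg_of_nonpos ((hlam t ht).1 i) (hfeas i)
    linarith
  rw [ge_iff_le, Finset.sum_sub_distrib, Finset.sum_sub_distrib] at h1
  linarith
end

section
/- (Recovery-phase violation bound, stochastic constraints.) Let T, T₁ ∈ ℕ with T₁ ≤ T, let ρ ∈ ℝ, and let x_{T₁+1},…,x_T ∈ X, λ_{T₁+1},…,λ_T ∈ Δ_m, constraint functions g_t : X → [−1,1]^m, a measurable ḡ : X → [−1,1]^m, ξ° ∈ Ξ with ḡ_i(ξ°) ≤ −ρ for all i ∈ [m], and constants R^P, R^D, E ≥ 0. Assume: (i) Σ_{t=T₁+1}^{T} (−⟨λ_t, g_t(x_t)⟩) ≥ Σ_{t=T₁+1}^{T} (−⟨λ_t, g_t(ξ°)⟩) − 2·R^P; (ii) for every λ ∈ Δ_m, Σ_{t=T₁+1}^{T} ⟨λ_t, g_t(x_t)⟩ ≥ Σ_{t=T₁+1}^{T}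 ⟨λ, g_t(x_t)⟩ − R^D; (iii) Σ_{t=T₁+1}^{T} ⟨λ_t, g_t(ξ°)⟩ ≤ Σ_{t=T₁+1}^{T} ⟨λ_t, ḡ(ξ°)⟩ + E. Then for every i ∈ [m], Σ_{t=T₁+1}^{T} g_{t,i}(x_t) ≤ −(T − T₁)·ρ + 2·R^P + R^D + E. -/
open MeasureTheory Finset

/-- Recovery-phase violation bound with stochastic constraints (Lemma: small violation). -/
theorem statement5 {X : Type} [MeasurableSpace X] {m : ℕ} (hm : 0 < m)
    (T T₁ : ℕ) (hTT : T₁ ≤ T)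
    (ρ : ℝ)
    (x : ℕ → X) (lam : ℕ → Fin m → ℝ)
    -- the dual iterates lie in the simplex `Δ_m`
    (hlam : ∀ t ∈ Finset.Icc (T₁ + 1) T, (∀ i, 0 ≤ lam t i) ∧ ∑ i, lam t i = 1)
    (g : ℕ → Fin m → X → ℝ)
    (hgm : ∀ t i, Measurable (g t i)) (hg1 : ∀ t i y, g t i y ∈ Set.Icc (-1:ℝ) 1)
    (gbar : Fin m → X → ℝ) (hgbm : ∀ i, Measurable (gbar i))
    (hgb1 : ∀ i y, gbar i y ∈ Set.Icc (-1:ℝ) 1)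
    (ξo : ProbabilityMeasure X)
    (hfeas : ∀ i, ∫ y, gbar i y ∂(ξo : Measure X) ≤ -ρ)
    (RP RD E : ℝ) (hRP : 0 ≤ RP) (hRD : 0 ≤ RD) (hE : 0 ≤ E)
    -- (i) primal regret bound in the recovery phase
    (h1 : ∑ t ∈ Finset.Icc (T₁ + 1) T, (-(∑ i, lam t i * g t i (x t))) ≥
          ∑ t ∈ Finset.Icc (T₁ + 1) T,
            (-(∑ i, lam t i * ∫ y, g t i y ∂(ξo : Measure X))) - 2 * RP)
    -- (ii) dual regret bound in the recovery phase
    (h2 : ∀ l : Fin m → ℝ, (∀ i, 0 ≤ l i) → (∑ i, l i = 1) →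
          ∑ t ∈ Finset.Icc (T₁ + 1) T, ∑ i, lam t i * g t i (x t) ≥
          ∑ t ∈ Finset.Icc (T₁ + 1) T, ∑ i, l i * g t i (x t) - RD)
    -- (iii) concentration of the constraints at ξ°
    (h3 : ∑ t ∈ Finset.Icc (T₁ + 1) T, ∑ i, lam t i * ∫ y, g t i y ∂(ξo : Measure X) ≤
          ∑ t ∈ Finset.Icc (T₁ + 1) T, ∑ i, lam t i * ∫ y, gbar i y ∂(ξo : Measure X) + E) :
    ∀ i, ∑ t ∈ Finset.Icc (T₁ + 1) T, g t i (x t) ≤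
      -(((T : ℝ) - (T₁ : ℝ)) * ρ) + 2 * RP + RD + E := by
  intro i
  -- step 1: pick l = indicator of i in h2
  have hl0 : ∀ j : Fin m, (0:ℝ) ≤ if j = i then 1 else 0 := by
    intro j; split <;> norm_num
  have hl1 : ∑ j : Fin m, (if j = i then (1:ℝ) else 0) = 1 := by
    simp
  have H2 := h2 (fun j => if j = i then 1 else 0) hl0 hl1
  have hsel : ∀ t, ∑ j : Fin m, (if j = i then (1:ℝ) else 0) * g t j (x t)
      = g t i (x t) := by
    intro t
    rw [Finset.sum_eq_single i]
    · simp
    · intro b _ hb; simp [hb]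
    · intro h; exact absurd (Finset.mem_univ i) h
  simp only [hsel] at H2
  -- step 2: bound sum of gbar means by -ρ
  have hstep : ∀ t ∈ Finset.Icc (T₁ + 1) T,
      ∑ j, lam t j * ∫ y, gbar j y ∂(ξo : Measure X) ≤ -ρ := by
    intro t ht
    obtain ⟨hpos, hsum⟩ := hlam t ht
    calc ∑ j, lam t j * ∫ y, gbar j y ∂(ξo : Measure X)
        ≤ ∑ j, lam t j * (-ρ) := by
          apply Finset.sum_le_sum
          intro j _
          exact mul_le_mul_of_nonneg_left (hfeas j) (hpos j)
      _ = -ρ := by rw [← Finset.sum_mul, hsum, one_mul]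
  have hsum2 : ∑ t ∈ Finset.Icc (T₁ + 1) T,
      ∑ j, lam t j * ∫ y, gbar j y ∂(ξo : Measure X)
      ≤ ((T:ℝ) - (T₁:ℝ)) * (-ρ) := by
    calc ∑ t ∈ Finset.Icc (T₁ + 1) T, ∑ j, lam t j * ∫ y, gbar j y ∂(ξo : Measure X)
        ≤ ∑ t ∈ Finset.Icc (T₁ + 1) T, (-ρ) := Finset.sum_le_sum hstep
      _ = ((Finset.Icc (T₁ + 1) T).card : ℝ) * (-ρ) := by
          rw [Finset.sum_const, nsmul_eq_mul]
      _ = ((T:ℝ) - (T₁:ℝ)) * (-ρ) := by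
          rw [Nat.card_Icc]
          have : T + 1 - (T₁ + 1) = T - T₁ := by omega
          rw [this, Nat.cast_sub hTT]
  have h1' : ∑ t ∈ Finset.Icc (T₁ + 1) T, ∑ j, lam t j * g t j (x t)
      ≤ ∑ t ∈ Finset.Icc (T₁ + 1) T, ∑ j, lam t j * ∫ y, g t j y ∂(ξo : Measure X)
        + 2 * RP := by
    have := h1
    simp only [Finset.sum_neg_distrib] at this
    linarith
  linarith
end

section
/- (Deterministic core of the main guarantee with adversarial rewards and stochastic constraints, under the Slater-type condition.) Let T, T₁ ∈ ℕ with 1 ≤ T₁ ≤ T, let 0 < ρ̃ ≤ ρ, and let x_1,…,x_T ∈ X, λ_1,…,λ_{T₁} ∈ D_{ρ̃}, λ_{T₁+1},…,λ_T ∈ Δ_m, reward functions f_t : X → [0,1], constraint functions g_t : X → [−1,1]^m, a measurable ḡ : X → [−1,1]^m, ξ*, ξ° ∈ Ξ with ḡ_i(ξ*) ≤ 0 and ḡ_i(ξ°) ≤ −ρ for all i ∈ [m], and constants M, R^P₁, R^D₁, R^P₂, R^D₂, E ≥ 0. Assume: (i) Σ_{t=1}^{T₁}(f_t(x_t) − ⟨λ_t,g_t(x_t)⟩)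 ≥ Σ_{t=1}^{T₁}(f_t(ξ*) − ⟨λ_t,g_t(ξ*)⟩) − (1+2/ρ̃)R^P₁; (ii) for every λ ∈ D_{ρ̃}, Σ_{t=1}^{T₁}⟨λ_t,g_t(x_t)⟩ ≥ Σ_{t=1}^{T₁}⟨λ,g_t(x_t)⟩ − R^D₁/ρ̃; (iii) either T₁ = T or max_i Σ_{t=1}^{T₁} g_{t,i}(x_t) ≥ (T−T₁)ρ̃; (iv) for every i, Σ_{t=1}^{T₁} g_{t,i}(x_t) ≤ (T−T₁)ρ̃ + M; (v) Σ_{t=1}^{T₁}⟨λ_t,g_t(ξ*)⟩ ≤ Σ_{t=1}^{T₁}⟨λ_t,ḡ(ξ*)⟩ + E/ρ̃ and Σ_{t=T₁+1}^{T}⟨λ_t,g_t(ξ°)⟩ ≤ Σ_{t=T₁+1}^{T}⟨λ_t,ḡ(ξ°)⟩ + E; (vi) Σ_{t=T₁+1}^{T}(−⟨λ_t,g_t(x_t)⟩) ≥ Σ_{t=T₁+1}^{T}(−⟨λ_t,g_t(ξ°)⟩) − 2R^P₂; (vii) for every λ ∈ Δ_m, Σ_{t=T₁+1}^{T}⟨λ_t,g_t(x_t)⟩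 ≥ Σ_{t=T₁+1}^{T}⟨λ,g_t(x_t)⟩ − R^D₂. Then: Σ_{t=1}^{T} f_t(x_t) ≥ Σ_{t=1}^{T} f_t(ξ*) − E/ρ̃ − (1+2/ρ̃)R^P₁ − R^D₁/ρ̃, and for every i ∈ [m], Σ_{t=1}^{T} g_{t,i}(x_t) ≤ M + 2R^P₂ + R^D₂ + E. -/
open MeasureTheory Finset

/-- Deterministic core of the main guarantee with adversarial rewards and stochastic
constraints, under the Slater-type condition (`0 < ρ̃ ≤ ρ`). -/
theorem statement6 {X : Type} [MeasurableSpace X] {m : ℕ} (hm : 0 < m)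
    (T T₁ : ℕ) (hT₁ : 1 ≤ T₁) (hTT : T₁ ≤ T)
    (ρt ρ : ℝ) (hρt : 0 < ρt) (hρ : ρt ≤ ρ)
    (x : ℕ → X) (lam : ℕ → Fin m → ℝ)
    -- play-phase duals lie in `D_{ρ̃}`, recovery-phase duals lie in `Δ_m`
    (hlam1 : ∀ t ∈ Finset.Icc 1 T₁, (∀ i, 0 ≤ lam t i) ∧ ∑ i, lam t i ≤ 1 / ρt)
    (hlam2 : ∀ t ∈ Finset.Icc (T₁ + 1) T, (∀ i, 0 ≤ lam t i) ∧ ∑ i, lam t i = 1)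
    (f : ℕ → X → ℝ) (g : ℕ → Fin m → X → ℝ)
    (hfm : ∀ t, Measurable (f t)) (hf01 : ∀ t y, f t y ∈ Set.Icc (0:ℝ) 1)
    (hgm : ∀ t i, Measurable (g t i)) (hg1 : ∀ t i y, g t i y ∈ Set.Icc (-1:ℝ) 1)
    (gbar : Fin m → X → ℝ) (hgbm : ∀ i, Measurable (gbar i))
    (hgb1 : ∀ i y, gbar i y ∈ Set.Icc (-1:ℝ) 1)
    (ξs ξo : ProbabilityMeasure X)
    (hfeass : ∀ i, ∫ y, gbar i y ∂(ξs : Measure X) ≤ 0)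
    (hfeaso : ∀ i, ∫ y, gbar i y ∂(ξo : Measure X) ≤ -ρ)
    (M RP1 RD1 RP2 RD2 E : ℝ)
    (hM : 0 ≤ M) (hRP1 : 0 ≤ RP1) (hRD1 : 0 ≤ RD1) (hRP2 : 0 ≤ RP2) (hRD2 : 0 ≤ RD2)
    (hE : 0 ≤ E)
    -- (i) play-phase primal regret bound
    (h1 : ∑ t ∈ Finset.Icc 1 T₁, (f t (x t) - ∑ i, lam t i * g t i (x t)) ≥
          ∑ t ∈ Finset.Icc 1 T₁, ((∫ y, f t y ∂(ξs : Measure X)) -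
            ∑ i, lam t i * ∫ y, g t i y ∂(ξs : Measure X)) - (1 + 2 / ρt) * RP1)
    -- (ii) play-phase dual regret bound
    (h2 : ∀ l : Fin m → ℝ, (∀ i, 0 ≤ l i) → (∑ i, l i ≤ 1 / ρt) →
          ∑ t ∈ Finset.Icc 1 T₁, ∑ i, lam t i * g t i (x t) ≥
          ∑ t ∈ Finset.Icc 1 T₁, ∑ i, l i * g t i (x t) - RD1 / ρt)
    -- (iii) stopping condition of the play phase
    (h3 : T₁ = T ∨ ∃ i, ((T : ℝ) - (T₁ : ℝ)) * ρt ≤ ∑ t ∈ Finset.Icc 1 T₁, g t i (x t))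
    -- (iv) play-phase violation threshold
    (h4 : ∀ i, ∑ t ∈ Finset.Icc 1 T₁, g t i (x t) ≤ ((T : ℝ) - (T₁ : ℝ)) * ρt + M)
    -- (v) concentration of the constraints at ξ* and ξ°
    (h5a : ∑ t ∈ Finset.Icc 1 T₁, ∑ i, lam t i * ∫ y, g t i y ∂(ξs : Measure X) ≤
           ∑ t ∈ Finset.Icc 1 T₁, ∑ i, lam t i * ∫ y, gbar i y ∂(ξs : Measure X) + E / ρt)
    (h5b : ∑ t ∈ Finset.Icc (T₁ + 1) T, ∑ i, lam t i * ∫ y, g t i y ∂(ξo : Measure X) ≤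
           ∑ t ∈ Finset.Icc (T₁ + 1) T, ∑ i, lam t i * ∫ y, gbar i y ∂(ξo : Measure X) + E)
    -- (vi) recovery-phase primal regret bound
    (h6 : ∑ t ∈ Finset.Icc (T₁ + 1) T, (-(∑ i, lam t i * g t i (x t))) ≥
          ∑ t ∈ Finset.Icc (T₁ + 1) T,
            (-(∑ i, lam t i * ∫ y, g t i y ∂(ξo : Measure X))) - 2 * RP2)
    -- (vii) recovery-phase dual regret bound
    (h7 : ∀ l : Fin m → ℝ, (∀ i, 0 ≤ l i) → (∑ i, l i = 1) →
          ∑ t ∈ Finset.Icc (T₁ + 1) T, ∑ i, lam t i * g t i (x t) ≥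
          ∑ t ∈ Finset.Icc (T₁ + 1) T, ∑ i, l i * g t i (x t) - RD2) :
    (∑ t ∈ Finset.Icc 1 T, f t (x t) ≥
      ∑ t ∈ Finset.Icc 1 T, (∫ y, f t y ∂(ξs : Measure X))
        - E / ρt - (1 + 2 / ρt) * RP1 - RD1 / ρt) ∧
    (∀ i, ∑ t ∈ Finset.Icc 1 T, g t i (x t) ≤ M + 2 * RP2 + RD2 + E) := by

  -- split sums over Icc 1 T into play phase and recovery phase
  have hIcc1 : ∀ n : ℕ, Finset.Icc 1 n = Finset.Ioc 0 n := fun n => Finset.Icc_add_one_left_eq_Ioc 0 n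
  have hIcc2 : Finset.Icc (T₁ + 1) T = Finset.Ioc T₁ T := Finset.Icc_add_one_left_eq_Ioc T₁ T
  have hsplit : ∀ h : ℕ → ℝ,
      ∑ t ∈ Finset.Icc 1 T, h t =
        ∑ t ∈ Finset.Icc 1 T₁, h t + ∑ t ∈ Finset.Icc (T₁ + 1) T, h t := by
    intro h
    rw [hIcc1, hIcc1, hIcc2]
    exact (Finset.sum_Ioc_consecutive h (Nat.zero_le T₁) hTT).symm
  have hcard2 : ((Finset.Icc (T₁ + 1) T).card : ℝ) = (T : ℝ) - (T₁ : ℝ) := by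
    rw [hIcc2, Nat.card_Ioc]
    exact Nat.cast_sub hTT
  -- integrals of f are between 0 and 1
  have hfint : ∀ t, ∫ y, f t y ∂(ξs : Measure X) ≤ 1 := by
    intro t
    by_cases hI : Integrable (f t) (ξs : Measure X)
    · calc ∫ y, f t y ∂(ξs : Measure X) ≤ ∫ _, (1:ℝ) ∂(ξs : Measure X) :=
            integral_mono hI (integrable_const 1) (fun y => (hf01 t y).2)
        _ = 1 := by simp
    · simp [integral_undef hI]
  have hfint0 : ∀ t, 0 ≤ ∫ y, f t y ∂(ξs : Measure X) := fun t =>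
    integral_nonneg (fun y => (hf01 t y).1)
  -- ⟨λ_t, ḡ(ξ*)⟩ ≤ 0 for play-phase duals
  have hgs : ∀ t ∈ Finset.Icc 1 T₁,
      ∑ i, lam t i * ∫ y, gbar i y ∂(ξs : Measure X) ≤ 0 := by
    intro t ht
    apply Finset.sum_nonpos
    intro i _
    exact mul_nonpos_of_nonneg_of_nonpos ((hlam1 t ht).1 i) (hfeass i)
  have hξstar : ∑ t ∈ Finset.Icc 1 T₁, ∑ i, lam t i * ∫ y, g t i y ∂(ξs : Measure X)
      ≤ E / ρt := by
    have := Finset.sum_nonpos hgs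
    linarith [h5a]
  -- lower bound on play-phase ⟨λ_t, g_t(x_t)⟩ using l = 0
  have hzero : ∑ t ∈ Finset.Icc 1 T₁, ∑ i, lam t i * g t i (x t) ≥ - (RD1 / ρt) := by
    have := h2 (fun _ => 0) (fun _ => le_refl 0)
      (by simp; positivity)
    simpa using this
  -- split hypothesis (i)
  have h1' : ∑ t ∈ Finset.Icc 1 T₁, f t (x t)
        - ∑ t ∈ Finset.Icc 1 T₁, ∑ i, lam t i * g t i (x t)
      ≥ ∑ t ∈ Finset.Icc 1 T₁, (∫ y, f t y ∂(ξs : Measure X))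
        - ∑ t ∈ Finset.Icc 1 T₁, ∑ i, lam t i * ∫ y, g t i y ∂(ξs : Measure X)
        - (1 + 2 / ρt) * RP1 := by
    have := h1
    rw [Finset.sum_sub_distrib, Finset.sum_sub_distrib] at this
    linarith
  constructor
  · -- reward bound
    rcases h3 with hTeq | ⟨i, hi⟩
    · subst hTeq
      linarith [h1', hξstar, hzero]
    · -- use l = (1/ρt) e_i in (ii)
      have hl : ∑ t ∈ Finset.Icc 1 T₁, ∑ i, lam t i * g t i (x t)
          ≥ (1 / ρt) * ∑ t ∈ Finset.Icc 1 T₁, g t i (x t) - RD1 / ρt := by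
        have h := h2 (fun j => if j = i then 1 / ρt else 0)
          (fun j => by positivity) (by simp)
        have hs : ∀ t, ∑ j, (if j = i then 1 / ρt else 0) * g t j (x t)
            = (1 / ρt) * g t i (x t) := by
          intro t
          rw [Fintype.sum_eq_single i]
          · simp
          · intro j hj; simp [hj]
        simp only [hs] at h
        rw [← Finset.mul_sum] at h
        exact h
      have hge : ∑ t ∈ Finset.Icc 1 T₁, ∑ i, lam t i * g t i (x t)
          ≥ ((T : ℝ) - (T₁ : ℝ)) - RD1 / ρt := by
        have : (1 / ρt) * (((T : ℝ) - (T₁ : ℝ)) * ρt) ≤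
            (1 / ρt) * ∑ t ∈ Finset.Icc 1 T₁, g t i (x t) := by
          apply mul_le_mul_of_nonneg_left hi (by positivity)
        have heq : (1 / ρt) * (((T : ℝ) - (T₁ : ℝ)) * ρt) = (T : ℝ) - (T₁ : ℝ) := by
          field_simp
        linarith
      have hfx2 : 0 ≤ ∑ t ∈ Finset.Icc (T₁ + 1) T, f t (x t) :=
        Finset.sum_nonneg (fun t _ => (hf01 t (x t)).1)
      have hfs2 : ∑ t ∈ Finset.Icc (T₁ + 1) T, (∫ y, f t y ∂(ξs : Measure X))
          ≤ (T : ℝ) - (T₁ : ℝ) := by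
        calc ∑ t ∈ Finset.Icc (T₁ + 1) T, (∫ y, f t y ∂(ξs : Measure X))
            ≤ ∑ _t ∈ Finset.Icc (T₁ + 1) T, (1:ℝ) :=
              Finset.sum_le_sum (fun t _ => hfint t)
          _ = (T : ℝ) - (T₁ : ℝ) := by rw [Finset.sum_const, nsmul_eq_mul, mul_one, hcard2]
      rw [hsplit (fun t => f t (x t)), hsplit (fun t => ∫ y, f t y ∂(ξs : Measure X))]
      linarith [h1', hξstar]
  · -- constraint violation bound
    intro i
    -- l = e_i in (vii)
    have h7' : ∑ t ∈ Finset.Icc (T₁ + 1) T, g t i (x t)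
        ≤ ∑ t ∈ Finset.Icc (T₁ + 1) T, ∑ i, lam t i * g t i (x t) + RD2 := by
      have h := h7 (fun j => if j = i then 1 else 0)
        (fun j => by positivity) (by simp)
      have hs : ∀ t, ∑ j, (if j = i then (1:ℝ) else 0) * g t j (x t) = g t i (x t) := by
        intro t
        rw [Fintype.sum_eq_single i]
        · simp
        · intro j hj; simp [hj]
      simp only [hs] at h
      linarith
    -- ⟨λ_t, ḡ(ξ°)⟩ ≤ -ρt for recovery-phase duals
    have hgo : ∀ t ∈ Finset.Icc (T₁ + 1) T,
        ∑ j, lam t j * ∫ y, gbar j y ∂(ξo : Measure X) ≤ -ρt := by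
      intro t ht
      calc ∑ j, lam t j * ∫ y, gbar j y ∂(ξo : Measure X)
          ≤ ∑ j, lam t j * (-ρ) := by
            apply Finset.sum_le_sum
            intro j _
            exact mul_le_mul_of_nonneg_left (hfeaso j) ((hlam2 t ht).1 j)
        _ = -ρ := by rw [← Finset.sum_mul, (hlam2 t ht).2, one_mul]
        _ ≤ -ρt := by linarith
    have hgo' : ∑ t ∈ Finset.Icc (T₁ + 1) T, ∑ j, lam t j * ∫ y, gbar j y ∂(ξo : Measure X)
        ≤ -(((T : ℝ) - (T₁ : ℝ)) * ρt) := by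
      calc ∑ t ∈ Finset.Icc (T₁ + 1) T, ∑ j, lam t j * ∫ y, gbar j y ∂(ξo : Measure X)
          ≤ ∑ _t ∈ Finset.Icc (T₁ + 1) T, (-ρt) := Finset.sum_le_sum hgo
        _ = -(((T : ℝ) - (T₁ : ℝ)) * ρt) := by
            rw [Finset.sum_const, nsmul_eq_mul, hcard2]; ring
    have h6' : ∑ t ∈ Finset.Icc (T₁ + 1) T, ∑ j, lam t j * g t j (x t)
        ≤ ∑ t ∈ Finset.Icc (T₁ + 1) T, ∑ j, lam t j * ∫ y, g t j y ∂(ξo : Measure X)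
          + 2 * RP2 := by
      have := h6
      rw [Finset.sum_neg_distrib, Finset.sum_neg_distrib] at this
      linarith
    rw [hsplit (fun t => g t i (x t))]
    linarith [h4 i, h5b]
end

section
/- (Deterministic core of the guarantee without the Slater-type condition, ρ̃ = T^{−1/4}.) Let T, T₁ ∈ ℕ with 1 ≤ T₁ ≤ T, set ρ̃ := T^{−1/4}, let ρ ≥ 0, and let x_1,…,x_T ∈ X, λ_1,…,λ_{T₁} ∈ D_{ρ̃}, λ_{T₁+1},…,λ_T ∈ Δ_m, reward functions f_t : X → [0,1], constraint functions g_t : X → [−1,1]^m, measurable ḡ : X → [−1,1]^m, ξ*, ξ° ∈ Ξ with ḡ_i(ξ*) ≤ 0 and ḡ_i(ξ°) ≤ −ρ for all i, and constants M, R^P₁, R^D₁, R^P₂, R^D₂, E ≥ 0 satisfying hypotheses (i)–(vii) as follows: (i) Σ_{t=1}^{T₁}(f_t(x_t) − ⟨λ_t,g_t(x_t)⟩) ≥ Σ_{t=1}^{T₁}(f_t(ξ*) − ⟨λ_t,g_t(ξ*)⟩) − (1+2T^{1/4})R^P₁; (ii) for every λ ∈ D_{ρ̃}, Σ_{t=1}^{T₁}⟨λ_t,g_t(x_t)⟩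 ≥ Σ_{t=1}^{T₁}⟨λ,g_t(x_t)⟩ − T^{1/4}R^D₁; (iii) either T₁ = T or max_i Σ_{t=1}^{T₁} g_{t,i}(x_t) ≥ (T−T₁)T^{−1/4}; (iv) for every i, Σ_{t=1}^{T₁} g_{t,i}(x_t) ≤ (T−T₁)T^{−1/4} + M; (v) Σ_{t=1}^{T₁}⟨λ_t,g_t(ξ*)⟩ ≤ Σ_{t=1}^{T₁}⟨λ_t,ḡ(ξ*)⟩ + T^{1/4}E and Σ_{t=T₁+1}^{T}⟨λ_t,g_t(ξ°)⟩ ≤ Σ_{t=T₁+1}^{T}⟨λ_t,ḡ(ξ°)⟩ + E; (vi) Σ_{t=T₁+1}^{T}(−⟨λ_t,g_t(x_t)⟩) ≥ Σ_{t=T₁+1}^{T}(−⟨λ_t,g_t(ξ°)⟩) − 2R^P₂; (vii) for every λ ∈ Δ_m, Σ_{t=T₁+1}^{T}⟨λ_t,g_t(x_t)⟩ ≥ Σ_{t=T₁+1}^{T}⟨λ,g_t(x_t)⟩ − R^D₂. Then: Σ_{t=1}^{T} f_t(x_t) ≥ Σ_{t=1}^{T} f_t(ξ*) − T^{1/4}E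 − (1+2T^{1/4})R^P₁ − T^{1/4}R^D₁, and for every i ∈ [m], Σ_{t=1}^{T} g_{t,i}(x_t) ≤ T^{3/4} + M + 2R^P₂ + R^D₂ + E. -/
open MeasureTheory Finset

/-- Deterministic core of the guarantee without the Slater-type condition, with
`ρ̃ = T^{-1/4}` (real powers of the natural number `T`). -/
theorem statement7 {X : Type} [MeasurableSpace X] {m : ℕ} (hm : 0 < m)
    (T T₁ : ℕ) (hT₁ : 1 ≤ T₁) (hTT : T₁ ≤ T)
    (ρt ρ : ℝ) (hρt : ρt = (T : ℝ) ^ (-(1/4 : ℝ))) (hρ : 0 ≤ ρ)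
    (x : ℕ → X) (lam : ℕ → Fin m → ℝ)
    -- play-phase duals lie in `D_{ρ̃}`, recovery-phase duals lie in `Δ_m`
    (hlam1 : ∀ t ∈ Finset.Icc 1 T₁, (∀ i, 0 ≤ lam t i) ∧ ∑ i, lam t i ≤ 1 / ρt)
    (hlam2 : ∀ t ∈ Finset.Icc (T₁ + 1) T, (∀ i, 0 ≤ lam t i) ∧ ∑ i, lam t i = 1)
    (f : ℕ → X → ℝ) (g : ℕ → Fin m → X → ℝ)
    (hfm : ∀ t, Measurable (f t)) (hf01 : ∀ t y, f t y ∈ Set.Icc (0:ℝ) 1)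
    (hgm : ∀ t i, Measurable (g t i)) (hg1 : ∀ t i y, g t i y ∈ Set.Icc (-1:ℝ) 1)
    (gbar : Fin m → X → ℝ) (hgbm : ∀ i, Measurable (gbar i))
    (hgb1 : ∀ i y, gbar i y ∈ Set.Icc (-1:ℝ) 1)
    (ξs ξo : ProbabilityMeasure X)
    (hfeass : ∀ i, ∫ y, gbar i y ∂(ξs : Measure X) ≤ 0)
    (hfeaso : ∀ i, ∫ y, gbar i y ∂(ξo : Measure X) ≤ -ρ)
    (M RP1 RD1 RP2 RD2 E : ℝ)
    (hM : 0 ≤ M) (hRP1 : 0 ≤ RP1) (hRD1 : 0 ≤ RD1) (hRP2 : 0 ≤ RP2) (hRD2 : 0 ≤ RD2)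
    (hE : 0 ≤ E)
    -- (i) play-phase primal regret bound
    (h1 : ∑ t ∈ Finset.Icc 1 T₁, (f t (x t) - ∑ i, lam t i * g t i (x t)) ≥
          ∑ t ∈ Finset.Icc 1 T₁, ((∫ y, f t y ∂(ξs : Measure X)) -
            ∑ i, lam t i * ∫ y, g t i y ∂(ξs : Measure X))
          - (1 + 2 * (T : ℝ) ^ ((1/4 : ℝ))) * RP1)
    -- (ii) play-phase dual regret bound
    (h2 : ∀ l : Fin m → ℝ, (∀ i, 0 ≤ l i) → (∑ i, l i ≤ 1 / ρt) →
          ∑ t ∈ Finset.Icc 1 T₁, ∑ i, lam t i * g t i (x t) ≥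
          ∑ t ∈ Finset.Icc 1 T₁, ∑ i, l i * g t i (x t) - (T : ℝ) ^ ((1/4 : ℝ)) * RD1)
    -- (iii) stopping condition of the play phase
    (h3 : T₁ = T ∨ ∃ i, ((T : ℝ) - (T₁ : ℝ)) * (T : ℝ) ^ (-(1/4 : ℝ)) ≤
            ∑ t ∈ Finset.Icc 1 T₁, g t i (x t))
    -- (iv) play-phase violation threshold
    (h4 : ∀ i, ∑ t ∈ Finset.Icc 1 T₁, g t i (x t) ≤
            ((T : ℝ) - (T₁ : ℝ)) * (T : ℝ) ^ (-(1/4 : ℝ)) + M)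
    -- (v) concentration of the constraints at ξ* and ξ°
    (h5a : ∑ t ∈ Finset.Icc 1 T₁, ∑ i, lam t i * ∫ y, g t i y ∂(ξs : Measure X) ≤
           ∑ t ∈ Finset.Icc 1 T₁, ∑ i, lam t i * ∫ y, gbar i y ∂(ξs : Measure X)
             + (T : ℝ) ^ ((1/4 : ℝ)) * E)
    (h5b : ∑ t ∈ Finset.Icc (T₁ + 1) T, ∑ i, lam t i * ∫ y, g t i y ∂(ξo : Measure X) ≤
           ∑ t ∈ Finset.Icc (T₁ + 1) T, ∑ i, lam t i * ∫ y, gbar i y ∂(ξo : Measure X) + E)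
    -- (vi) recovery-phase primal regret bound
    (h6 : ∑ t ∈ Finset.Icc (T₁ + 1) T, (-(∑ i, lam t i * g t i (x t))) ≥
          ∑ t ∈ Finset.Icc (T₁ + 1) T,
            (-(∑ i, lam t i * ∫ y, g t i y ∂(ξo : Measure X))) - 2 * RP2)
    -- (vii) recovery-phase dual regret bound
    (h7 : ∀ l : Fin m → ℝ, (∀ i, 0 ≤ l i) → (∑ i, l i = 1) →
          ∑ t ∈ Finset.Icc (T₁ + 1) T, ∑ i, lam t i * g t i (x t) ≥
          ∑ t ∈ Finset.Icc (T₁ + 1) T, ∑ i, l i * g t i (x t) - RD2) :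
    (∑ t ∈ Finset.Icc 1 T, f t (x t) ≥
      ∑ t ∈ Finset.Icc 1 T, (∫ y, f t y ∂(ξs : Measure X))
        - (T : ℝ) ^ ((1/4 : ℝ)) * E - (1 + 2 * (T : ℝ) ^ ((1/4 : ℝ))) * RP1
        - (T : ℝ) ^ ((1/4 : ℝ)) * RD1) ∧
    (∀ i, ∑ t ∈ Finset.Icc 1 T, g t i (x t) ≤
      (T : ℝ) ^ ((3/4 : ℝ)) + M + 2 * RP2 + RD2 + E) := by

  have hT : 1 ≤ T := le_trans hT₁ hTT
  have hTpos : (0:ℝ) < (T:ℝ) := by exact_mod_cast hT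
  have hρtpos : 0 < ρt := by rw [hρt]; positivity
  have hq : (T:ℝ) ^ ((1/4:ℝ)) * (T:ℝ) ^ (-(1/4:ℝ)) = 1 := by
    rw [← Real.rpow_add hTpos]; norm_num
  have hinv : 1 / ρt = (T:ℝ) ^ ((1/4:ℝ)) := by
    rw [hρt, Real.rpow_neg hTpos.le, one_div, inv_inv]
  have hq14 : (0:ℝ) ≤ (T:ℝ) ^ ((1/4:ℝ)) := Real.rpow_nonneg hTpos.le _
  have hqneg : (0:ℝ) ≤ (T:ℝ) ^ (-(1/4:ℝ)) := Real.rpow_nonneg hTpos.le _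
  have hIcc : Finset.Icc 1 T = Finset.Icc 1 T₁ ∪ Finset.Icc (T₁+1) T := by
    ext a; simp only [Finset.mem_union, Finset.mem_Icc]; omega
  have hdisj : Disjoint (Finset.Icc 1 T₁) (Finset.Icc (T₁+1) T) := by
    simp only [Finset.disjoint_left, Finset.mem_Icc]; omega
  have hsplit : ∀ F : ℕ → ℝ, ∑ t ∈ Finset.Icc 1 T, F t
      = ∑ t ∈ Finset.Icc 1 T₁, F t + ∑ t ∈ Finset.Icc (T₁+1) T, F t := fun F => by
    rw [hIcc, Finset.sum_union hdisj]
  have hcard : ((Finset.Icc (T₁+1) T).card : ℝ) = (T:ℝ) - (T₁:ℝ) := by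
    rw [Nat.card_Icc]
    have : T + 1 - (T₁ + 1) = T - T₁ := by omega
    rw [this, Nat.cast_sub hTT]
  -- play-phase dual sum lower bound
  have hS1 : ∑ t ∈ Finset.Icc 1 T₁, ∑ i, lam t i * g t i (x t)
      ≥ ((T:ℝ) - (T₁:ℝ)) - (T:ℝ) ^ ((1/4:ℝ)) * RD1 := by
    rcases h3 with h3 | ⟨i, hi⟩
    · subst h3
      have := h2 (fun _ => 0) (fun _ => le_refl 0)
        (by simp only [Finset.sum_const_zero]; exact div_nonneg zero_le_one hρtpos.le)
      simp only [zero_mul, Finset.sum_const_zero] at this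
      simpa using this
    · have := h2 (fun j => if j = i then (T:ℝ) ^ ((1/4:ℝ)) else 0)
        (fun j => by split; exacts [hq14, le_rfl])
        (by rw [hinv]; simp)
      have hrw : ∀ t, ∑ j, (if j = i then (T:ℝ) ^ ((1/4:ℝ)) else 0) * g t j (x t)
          = (T:ℝ) ^ ((1/4:ℝ)) * g t i (x t) := by
        intro t
        simp [ite_mul]
      simp only [hrw] at this
      rw [← Finset.mul_sum] at this
      have hmul : (T:ℝ) ^ ((1/4:ℝ)) * (((T:ℝ) - (T₁:ℝ)) * (T:ℝ) ^ (-(1/4:ℝ)))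
          ≤ (T:ℝ) ^ ((1/4:ℝ)) * ∑ t ∈ Finset.Icc 1 T₁, g t i (x t) :=
        mul_le_mul_of_nonneg_left hi hq14
      calc ∑ t ∈ Finset.Icc 1 T₁, ∑ i, lam t i * g t i (x t)
          ≥ (T:ℝ) ^ ((1/4:ℝ)) * ∑ t ∈ Finset.Icc 1 T₁, g t i (x t)
            - (T:ℝ) ^ ((1/4:ℝ)) * RD1 := this
        _ ≥ ((T:ℝ) - (T₁:ℝ)) - (T:ℝ) ^ ((1/4:ℝ)) * RD1 := by
            have : (T:ℝ) ^ ((1/4:ℝ)) * (((T:ℝ) - (T₁:ℝ)) * (T:ℝ) ^ (-(1/4:ℝ)))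
                = (T:ℝ) - (T₁:ℝ) := by
              rw [mul_comm ((T:ℝ) - (T₁:ℝ)), ← mul_assoc, hq, one_mul]
            linarith
  constructor
  · -- reward bound
    have hfeasS : ∑ t ∈ Finset.Icc 1 T₁, ∑ i, lam t i * ∫ y, gbar i y ∂(ξs : Measure X) ≤ 0 := by
      apply Finset.sum_nonpos
      intro t ht
      apply Finset.sum_nonpos
      intro i _
      exact mul_nonpos_of_nonneg_of_nonpos ((hlam1 t ht).1 i) (hfeass i)
    have h5a' : ∑ t ∈ Finset.Icc 1 T₁, ∑ i, lam t i * ∫ y, g t i y ∂(ξs : Measure X)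
        ≤ (T:ℝ) ^ ((1/4:ℝ)) * E := by linarith
    have hfle1 : ∀ t, ∫ y, f t y ∂(ξs : Measure X) ≤ 1 := by
      intro t
      calc ∫ y, f t y ∂(ξs : Measure X) ≤ ∫ _, (1:ℝ) ∂(ξs : Measure X) := by
            apply integral_mono_of_nonneg
            · exact Filter.Eventually.of_forall (fun y => (hf01 t y).1)
            · exact integrable_const 1
            · exact Filter.Eventually.of_forall (fun y => (hf01 t y).2)
        _ = 1 := by simp
    have hrest : ∑ t ∈ Finset.Icc (T₁+1) T, ∫ y, f t y ∂(ξs : Measure X)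
        ≤ (T:ℝ) - (T₁:ℝ) := by
      calc ∑ t ∈ Finset.Icc (T₁+1) T, ∫ y, f t y ∂(ξs : Measure X)
          ≤ (Finset.Icc (T₁+1) T).card • (1:ℝ) :=
            Finset.sum_le_card_nsmul _ _ 1 (fun t _ => hfle1 t)
        _ = (T:ℝ) - (T₁:ℝ) := by rw [nsmul_eq_mul, mul_one, hcard]
    have hxnn : 0 ≤ ∑ t ∈ Finset.Icc (T₁+1) T, f t (x t) :=
      Finset.sum_nonneg (fun t _ => (hf01 t (x t)).1)
    have e1 := hsplit (fun t => f t (x t))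
    have e2 := hsplit (fun t => ∫ y, f t y ∂(ξs : Measure X))
    rw [Finset.sum_sub_distrib, Finset.sum_sub_distrib] at h1
    linarith
  · -- constraint bound
    intro i
    have hT34 : (T:ℝ) ^ ((3/4:ℝ)) = (T:ℝ) * (T:ℝ) ^ (-(1/4:ℝ)) := by
      rw [show (3/4:ℝ) = 1 + (-(1/4)) by norm_num, Real.rpow_add hTpos, Real.rpow_one]
    have h7' := h7 (fun j => if j = i then 1 else 0)
      (fun j => by split; exacts [zero_le_one, le_rfl])
      (by simp)
    have hrw : ∀ t, ∑ j, (if j = i then (1:ℝ) else 0) * g t j (x t) = g t i (x t) := by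
      intro t
      simp [ite_mul]
    simp only [hrw] at h7'
    have hfeasO : ∑ t ∈ Finset.Icc (T₁+1) T, ∑ j, lam t j * ∫ y, gbar j y ∂(ξo : Measure X)
        ≤ 0 := by
      apply Finset.sum_nonpos
      intro t ht
      apply Finset.sum_nonpos
      intro j _
      exact mul_nonpos_of_nonneg_of_nonpos ((hlam2 t ht).1 j) (le_trans (hfeaso j) (by linarith))
    rw [Finset.sum_neg_distrib, Finset.sum_neg_distrib] at h6
    have hplay := h4 i
    have hTT' : ((T:ℝ) - (T₁:ℝ)) * (T:ℝ) ^ (-(1/4:ℝ)) ≤ (T:ℝ) * (T:ℝ) ^ (-(1/4:ℝ)) := by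
      have h0 : (0:ℝ) ≤ (T₁:ℝ) := Nat.cast_nonneg _
      nlinarith
    have e3 := hsplit (fun t => g t i (x t))
    linarith
end

section
/- (Lower bound on the cumulative Lagrangian value of the primal player, fully stochastic setting.) Let τ ∈ ℕ with τ ≥ 1, ρ̃ > 0, and let x_1,…,x_τ ∈ X, λ_1,…,λ_τ ∈ D_{ρ̃}, reward functions f_t : X → [0,1], constraint functions g_t : X → [−1,1]^m, measurable f̄ : X → [0,1] and ḡ : X → [−1,1]^m, ξ* ∈ Ξ with ḡ_i(ξ*) ≤ 0 for all i and f̄(ξ*) = OPT_{f̄,ḡ}, and constants R^P, E ≥ 0. Assume: (i) Σ_{t=1}^{τ}(f_t(x_t) − ⟨λ_t,g_t(x_t)⟩) ≥ Σ_{t=1}^{τ}(f_t(ξ*) − ⟨λ_t,g_t(ξ*)⟩) − (1+2/ρ̃)R^P; (ii) |Σ_{t=1}^{τ} f_t(ξ*) − τ·f̄(ξ*)| ≤ E; (iii) |Σ_{t=1}^{τ}⟨λ_t, g_t(ξ*)⟩ − Σ_{t=1}^{τ}⟨λ_t, ḡ(ξ*)⟩| ≤ E/ρ̃. Then Σ_{t=1}^{τ}(f_t(x_t)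 − ⟨λ_t,g_t(x_t)⟩) ≥ τ·OPT_{f̄,ḡ} − (1+2/ρ̃)R^P − (1+1/ρ̃)E. -/
open MeasureTheory Finset

/-- Lower bound on the cumulative Lagrangian value of the primal player in the fully
stochastic setting. -/
theorem statement8 {X : Type} [MeasurableSpace X] {m : ℕ} (hm : 0 < m)
    (τ : ℕ) (hτ : 1 ≤ τ)
    (ρt : ℝ) (hρt : 0 < ρt)
    (x : ℕ → X) (lam : ℕ → Fin m → ℝ)
    -- the dual iterates lie in `D_{ρ̃}`
    (hlam : ∀ t ∈ Finset.Icc 1 τ, (∀ i, 0 ≤ lam t i) ∧ ∑ i, lam t i ≤ 1 / ρt)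
    (f : ℕ → X → ℝ) (g : ℕ → Fin m → X → ℝ)
    (hfm : ∀ t, Measurable (f t)) (hf01 : ∀ t y, f t y ∈ Set.Icc (0:ℝ) 1)
    (hgm : ∀ t i, Measurable (g t i)) (hg1 : ∀ t i y, g t i y ∈ Set.Icc (-1:ℝ) 1)
    (fbar : X → ℝ) (hfbm : Measurable fbar) (hfb01 : ∀ y, fbar y ∈ Set.Icc (0:ℝ) 1)
    (gbar : Fin m → X → ℝ) (hgbm : ∀ i, Measurable (gbar i))
    (hgb1 : ∀ i y, gbar i y ∈ Set.Icc (-1:ℝ) 1)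
    (ξs : ProbabilityMeasure X)
    (hfeas : ∀ i, ∫ y, gbar i y ∂(ξs : Measure X) ≤ 0)
    (hopt : (∫ y, fbar y ∂(ξs : Measure X)) = OPTval fbar gbar)
    (RP E : ℝ) (hRP : 0 ≤ RP) (hE : 0 ≤ E)
    -- (i) primal regret bound
    (h1 : ∑ t ∈ Finset.Icc 1 τ, (f t (x t) - ∑ i, lam t i * g t i (x t)) ≥
          ∑ t ∈ Finset.Icc 1 τ, ((∫ y, f t y ∂(ξs : Measure X)) -
            ∑ i, lam t i * ∫ y, g t i y ∂(ξs : Measure X)) - (1 + 2 / ρt) * RP)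
    -- (ii) concentration of rewards at ξ*
    (h2 : |∑ t ∈ Finset.Icc 1 τ, (∫ y, f t y ∂(ξs : Measure X)) -
            (τ : ℝ) * ∫ y, fbar y ∂(ξs : Measure X)| ≤ E)
    -- (iii) concentration of the constraints at ξ*
    (h3 : |∑ t ∈ Finset.Icc 1 τ, ∑ i, lam t i * ∫ y, g t i y ∂(ξs : Measure X) -
            ∑ t ∈ Finset.Icc 1 τ, ∑ i, lam t i * ∫ y, gbar i y ∂(ξs : Measure X)| ≤ E / ρt) :
    ∑ t ∈ Finset.Icc 1 τ, (f t (x t) - ∑ i, lam t i * g t i (x t)) ≥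
      (τ : ℝ) * OPTval fbar gbar - (1 + 2 / ρt) * RP - (1 + 1 / ρt) * E := by
  have hC : ∑ t ∈ Finset.Icc 1 τ, ∑ i, lam t i * ∫ y, gbar i y ∂(ξs : Measure X) ≤ 0 := by
    apply Finset.sum_nonpos
    intro t ht
    apply Finset.sum_nonpos
    intro i _
    exact mul_nonpos_of_nonneg_of_nonpos ((hlam t ht).1 i) (hfeas i)
  have h2' := abs_le.mp h2
  have h3' := abs_le.mp h3
  have hsum : ∑ t ∈ Finset.Icc 1 τ, ((∫ y, f t y ∂(ξs : Measure X)) -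
      ∑ i, lam t i * ∫ y, g t i y ∂(ξs : Measure X)) =
      ∑ t ∈ Finset.Icc 1 τ, (∫ y, f t y ∂(ξs : Measure X)) -
      ∑ t ∈ Finset.Icc 1 τ, ∑ i, lam t i * ∫ y, g t i y ∂(ξs : Measure X) :=
    Finset.sum_sub_distrib _ _
  have heq : (1 + 1 / ρt) * E = E + E / ρt := by ring
  rw [hsum] at h1
  rw [← hopt]
  linarith [h2'.1, h2'.2, h3'.1, h3'.2]
end

section
/- (Upper bound on the cumulative Lagrangian value via the dual player, fully stochastic setting.) Let τ ∈ ℕ with τ ≥ 1, let ρ > 0 satisfy ρ = sup_{ξ∈Ξ} min_{i∈[m]}(−ḡ_i(ξ)), let 0 < ρ̃ ≤ ρ/2, and let x_1,…,x_τ ∈ X, λ_1,…,λ_τ ∈ D_{ρ̃}, reward functions f_t : X → [0,1], constraint functions g_t : X → [−1,1]^m, measurable f̄ : X → [0,1] and ḡ : X → [−1,1]^m, and constants R^D, E ≥ 0. Assume: (i) for every λ ∈ D_{ρ̃}, Σ_{t=1}^{τ}⟨λ_t, g_t(x_t)⟩ ≥ Σ_{t=1}^{τ}⟨λ, g_t(x_t)⟩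 − R^D/ρ̃; (ii) |Σ_{t=1}^{τ} f_t(x_t) − Σ_{t=1}^{τ} f̄(x_t)| ≤ E; (iii) for every i ∈ [m], |Σ_{t=1}^{τ} g_{t,i}(x_t) − Σ_{t=1}^{τ} ḡ_i(x_t)| ≤ E. Then for every i ∈ [m]: Σ_{t=1}^{τ}(f_t(x_t) − ⟨λ_t,g_t(x_t)⟩) ≤ τ·OPT_{f̄,ḡ} + R^D/ρ̃ + (1+2/ρ̃)E − Σ_{t=1}^{τ} g_{t,i}(x_t). -/
open MeasureTheory Finset ENNReal

section Aux
variable {X : Type} [MeasurableSpace X]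

lemma myInt (μ : Measure X) [IsFiniteMeasure μ] {h : X → ℝ} (hmeas : Measurable h)
    {a b : ℝ} (hb : ∀ y, h y ∈ Set.Icc a b) : Integrable h μ := by
  refine (integrable_const (max |a| |b|)).mono' hmeas.aestronglyMeasurable ?_
  refine ae_of_all _ fun y => ?_
  rcases hb y with ⟨l, r⟩
  rw [Real.norm_eq_abs, abs_le]
  constructor
  · calc -(max |a| |b|) ≤ -|a| := by simp
      _ ≤ a := neg_abs_le a
      _ ≤ h y := l
  · exact r.trans ((le_abs_self b).trans (le_max_right _ _))

lemma intBounds (μ : Measure X) [IsProbabilityMeasure μ] {h : X → ℝ} (hmeas : Measurable h)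
    {a b : ℝ} (hb : ∀ y, h y ∈ Set.Icc a b) : ∫ y, h y ∂μ ∈ Set.Icc a b := by
  constructor
  · calc a = ∫ _, a ∂μ := by simp
      _ ≤ _ := integral_mono (integrable_const a) (myInt μ hmeas hb) fun y => (hb y).1
  · calc ∫ y, h y ∂μ ≤ ∫ _, b ∂μ :=
        integral_mono (myInt μ hmeas hb) (integrable_const b) fun y => (hb y).2
      _ = b := by simp

lemma empirical (x : ℕ → X) (τ : ℕ) (hτ : 1 ≤ τ) :
    ∃ ξ : ProbabilityMeasure X, ∀ (h : X → ℝ) (a b : ℝ), Measurable h →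
      (∀ y, h y ∈ Set.Icc a b) →
      ∫ y, h y ∂(ξ : Measure X) = (τ:ℝ)⁻¹ * ∑ t ∈ Finset.Icc 1 τ, h (x t) := by
  have hτ0 : (τ:ℝ≥0∞) ≠ 0 := by
    simp only [ne_eq, Nat.cast_eq_zero]; omega
  set μ : Measure X := ((τ:ℝ≥0∞)⁻¹) • ∑ t ∈ Finset.Icc 1 τ, Measure.dirac (x t) with hμ
  have hprob : IsProbabilityMeasure μ := by
    constructor
    rw [hμ]
    rw [Measure.smul_apply, Measure.finset_sum_apply]
    simp only [measure_univ, Finset.sum_const, Nat.card_Icc, smul_eq_mul, mul_one]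
    rw [Nat.add_sub_cancel, nsmul_eq_mul, mul_one]
    exact ENNReal.inv_mul_cancel hτ0 (ENNReal.natCast_ne_top τ)
  refine ⟨⟨μ, hprob⟩, fun h a b hmeas hb => ?_⟩
  show ∫ y, h y ∂μ = _
  rw [hμ, integral_smul_measure,
    integral_finset_sum_measure (fun t _ => myInt _ hmeas hb)]
  simp only [integral_dirac' _ _ hmeas.stronglyMeasurable]
  rw [smul_eq_mul, ENNReal.toReal_inv]
  simp

lemma mixture (ξ₁ ξ₂ : ProbabilityMeasure X) (θ : ℝ) (hθ0 : 0 ≤ θ) (hθ1 : θ ≤ 1) :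
    ∃ ξ : ProbabilityMeasure X, ∀ (h : X → ℝ) (a b : ℝ), Measurable h →
      (∀ y, h y ∈ Set.Icc a b) →
      ∫ y, h y ∂(ξ : Measure X) =
        (1-θ) * ∫ y, h y ∂(ξ₁ : Measure X) + θ * ∫ y, h y ∂(ξ₂ : Measure X) := by
  set μ : Measure X := ENNReal.ofReal (1-θ) • (ξ₁ : Measure X)
      + ENNReal.ofReal θ • (ξ₂ : Measure X) with hμ
  have hprob : IsProbabilityMeasure μ := by
    constructor
    rw [hμ]
    simp only [Measure.add_apply, Measure.smul_apply, measure_univ, smul_eq_mul, mul_one]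
    rw [← ENNReal.ofReal_add (by linarith) hθ0]
    norm_num
  refine ⟨⟨μ, hprob⟩, fun h a b hmeas hb => ?_⟩
  show ∫ y, h y ∂μ = _
  rw [hμ, integral_add_measure
    ((myInt _ hmeas hb).smul_measure ENNReal.ofReal_ne_top)
    ((myInt _ hmeas hb).smul_measure ENNReal.ofReal_ne_top)]
  rw [integral_smul_measure, integral_smul_measure,
    ENNReal.toReal_ofReal (by linarith), ENNReal.toReal_ofReal hθ0]
  simp [smul_eq_mul]

end Aux

/-- Upper bound on the cumulative Lagrangian value via the dual player in the fully
stochastic setting. -/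
theorem statement9 {X : Type} [MeasurableSpace X] {m : ℕ} (hm : 0 < m)
    (τ : ℕ) (hτ : 1 ≤ τ)
    (ρ ρt : ℝ) (hρpos : 0 < ρ)
    (gbar : Fin m → X → ℝ) (hgbm : ∀ i, Measurable (gbar i))
    (hgb1 : ∀ i y, gbar i y ∈ Set.Icc (-1:ℝ) 1)
    (hρ : ρ = dgval gbar)
    (hρt : 0 < ρt) (hρt2 : ρt ≤ ρ / 2)
    (x : ℕ → X) (lam : ℕ → Fin m → ℝ)
    -- the dual iterates lie in `D_{ρ̃}`
    (hlam : ∀ t ∈ Finset.Icc 1 τ, (∀ i, 0 ≤ lam t i) ∧ ∑ i, lam t i ≤ 1 / ρt)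
    (f : ℕ → X → ℝ) (g : ℕ → Fin m → X → ℝ)
    (hfm : ∀ t, Measurable (f t)) (hf01 : ∀ t y, f t y ∈ Set.Icc (0:ℝ) 1)
    (hgm : ∀ t i, Measurable (g t i)) (hg1 : ∀ t i y, g t i y ∈ Set.Icc (-1:ℝ) 1)
    (fbar : X → ℝ) (hfbm : Measurable fbar) (hfb01 : ∀ y, fbar y ∈ Set.Icc (0:ℝ) 1)
    (RD E : ℝ) (hRD : 0 ≤ RD) (hE : 0 ≤ E)
    -- (i) dual regret bound
    (h1 : ∀ l : Fin m → ℝ, (∀ i, 0 ≤ l i) → (∑ i, l i ≤ 1 / ρt) →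
          ∑ t ∈ Finset.Icc 1 τ, ∑ i, lam t i * g t i (x t) ≥
          ∑ t ∈ Finset.Icc 1 τ, ∑ i, l i * g t i (x t) - RD / ρt)
    -- (ii) concentration of rewards along the trajectory
    (h2 : |∑ t ∈ Finset.Icc 1 τ, f t (x t) - ∑ t ∈ Finset.Icc 1 τ, fbar (x t)| ≤ E)
    -- (iii) concentration of constraints along the trajectory
    (h3 : ∀ i, |∑ t ∈ Finset.Icc 1 τ, g t i (x t) -
            ∑ t ∈ Finset.Icc 1 τ, gbar i (x t)| ≤ E) :
    ∀ i, ∑ t ∈ Finset.Icc 1 τ, (f t (x t) - ∑ j, lam t j * g t j (x t)) ≤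
      (τ : ℝ) * OPTval fbar gbar + RD / ρt + (1 + 2 / ρt) * E
        - ∑ t ∈ Finset.Icc 1 τ, g t i (x t) := by
  intro i
  rw [Finset.sum_sub_distrib]
  have hτpos : (0:ℝ) < τ := by exact_mod_cast hτ
  have hτne : (τ:ℝ) ≠ 0 := ne_of_gt hτpos
  have hτinv : (0:ℝ) ≤ (τ:ℝ)⁻¹ := by positivity
  -- the dgval set
  have hSdne : {r : ℝ | ∃ ξ : ProbabilityMeasure X,
      r = ⨅ j, -(∫ y, gbar j y ∂(ξ : Measure X))}.Nonempty := by
    by_contra hc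
    rw [Set.not_nonempty_iff_eq_empty] at hc
    have h0 : dgval gbar = 0 := by
      show sSup _ = 0
      rw [hc, Real.sSup_empty]
    rw [hρ, h0] at hρpos
    exact lt_irrefl _ hρpos
  have hbddI : ∀ ξ : ProbabilityMeasure X,
      BddBelow (Set.range fun j : Fin m => -(∫ y, gbar j y ∂(ξ : Measure X))) :=
    fun ξ => (Set.finite_range _).bddBelow
  have hρ1 : ρ ≤ 1 := by
    rw [hρ]
    apply Real.sSup_le _ zero_le_one
    rintro r ⟨ξ, rfl⟩
    have hle := ciInf_le (hbddI ξ) (⟨0, hm⟩ : Fin m)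
    have hib := intBounds (ξ : Measure X) (hgbm ⟨0, hm⟩) (fun y => hgb1 ⟨0, hm⟩ y)
    have := hib.1
    simp only [Set.mem_Icc] at hib
    linarith [hib.1]
  have hρth : ρt ≤ 1/2 := by linarith
  have hEdiv : E ≤ E / ρt := by
    rw [le_div_iff₀ hρt]; nlinarith [mul_le_mul_of_nonneg_left hρth hE]
  have hEρ0 : 0 ≤ E / ρt := div_nonneg hE hρt.le
  -- OPT set facts
  have hOPTbdd : BddAbove {r : ℝ | ∃ ξ : ProbabilityMeasure X,
      (∀ j, ∫ y, gbar j y ∂(ξ : Measure X) ≤ 0) ∧ r = ∫ y, fbar y ∂(ξ : Measure X)} := by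
    refine ⟨1, ?_⟩
    rintro r ⟨ξ, -, rfl⟩
    exact (intBounds (ξ : Measure X) hfbm hfb01).2
  have hOPTle : ∀ ξ : ProbabilityMeasure X, (∀ j, ∫ y, gbar j y ∂(ξ : Measure X) ≤ 0) →
      ∫ y, fbar y ∂(ξ : Measure X) ≤ OPTval fbar gbar := by
    intro ξ hfeas
    exact le_csSup hOPTbdd ⟨ξ, hfeas, rfl⟩
  -- empirical measure
  obtain ⟨ξh, hξh⟩ := empirical x τ hτ
  have hfbI : ∫ y, fbar y ∂(ξh : Measure X)
      = (τ:ℝ)⁻¹ * ∑ t ∈ Finset.Icc 1 τ, fbar (x t) := hξh fbar 0 1 hfbm hfb01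
  have hgbI : ∀ j, ∫ y, gbar j y ∂(ξh : Measure X)
      = (τ:ℝ)⁻¹ * ∑ t ∈ Finset.Icc 1 τ, gbar j (x t) :=
    fun j => hξh (gbar j) (-1) 1 (hgbm j) (hgb1 j)
  -- dual bound at a basis vector
  have hLjs : ∀ j : Fin m,
      (1/ρt) * (∑ t ∈ Finset.Icc 1 τ, g t j (x t)) - RD/ρt ≤
        ∑ t ∈ Finset.Icc 1 τ, ∑ k, lam t k * g t k (x t) := by
    intro j
    have hl1 : ∀ k : Fin m, (0:ℝ) ≤ if k = j then 1/ρt else 0 := by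
      intro k
      split
      · positivity
      · exact le_rfl
    have hl2 : ∑ k : Fin m, (if k = j then 1/ρt else 0) ≤ 1/ρt := by
      rw [Finset.sum_ite_eq' Finset.univ j (fun _ => 1/ρt)]
      simp
    have h1' := h1 (fun k => if k = j then 1/ρt else 0) hl1 hl2
    have hsum : ∀ t, ∑ k, (if k = j then 1/ρt else 0) * g t k (x t)
        = (1/ρt) * g t j (x t) := by
      intro t
      rw [Finset.sum_eq_single j]
      · simp
      · intro b _ hbj; simp [hbj]
      · intro hj; exact absurd (Finset.mem_univ j) hj
    simp only [hsum] at h1'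
    rw [← Finset.mul_sum] at h1'
    linarith [h1']
  -- maximizing coordinate
  obtain ⟨js, -, hjs⟩ := Finset.exists_max_image (Finset.univ : Finset (Fin m))
    (fun j => ∑ t ∈ Finset.Icc 1 τ, gbar j (x t)) ⟨⟨0, hm⟩, Finset.mem_univ _⟩
  rcases le_or_gt (∑ t ∈ Finset.Icc 1 τ, gbar js (x t)) 0 with hcase | hcase
  · -- empirical measure is feasible
    have hfeas : ∀ j, ∫ y, gbar j y ∂(ξh : Measure X) ≤ 0 := by
      intro j
      rw [hgbI j]
      have hvj : ∑ t ∈ Finset.Icc 1 τ, gbar j (x t) ≤ 0 :=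
        le_trans (hjs j (Finset.mem_univ j)) hcase
      exact mul_nonpos_of_nonneg_of_nonpos hτinv hvj
    have hOPT1 := hOPTle ξh hfeas
    rw [hfbI] at hOPT1
    have hSfble : ∑ t ∈ Finset.Icc 1 τ, fbar (x t) ≤ (τ:ℝ) * OPTval fbar gbar := by
      have := mul_le_mul_of_nonneg_left hOPT1 hτpos.le
      have hcanc : (τ:ℝ) * ((τ:ℝ)⁻¹ * ∑ t ∈ Finset.Icc 1 τ, fbar (x t))
          = ∑ t ∈ Finset.Icc 1 τ, fbar (x t) := by
        field_simp
      linarith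
    have hA := (abs_le.1 h2).2
    have hB := (abs_le.1 (h3 i)).2
    have hvi : ∑ t ∈ Finset.Icc 1 τ, gbar i (x t) ≤ 0 :=
      le_trans (hjs i (Finset.mem_univ i)) hcase
    have hL0 : -(RD/ρt) ≤ ∑ t ∈ Finset.Icc 1 τ, ∑ k, lam t k * g t k (x t) := by
      have := h1 (fun _ => 0) (fun _ => le_rfl) (by simp; positivity)
      simpa using this
    have hexp : (1 + 2/ρt) * E = E + 2*(E/ρt) := by ring
    linarith
  · -- near-feasible mixing argument, with ε-slack
    apply le_of_forall_sub_le
    intro ε hε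
    rw [sub_le_iff_le_add]
    set V := ∑ t ∈ Finset.Icc 1 τ, gbar js (x t) with hV
    set δ := min (ρ/2) (ε * ρ^2 / (2*V)) with hδ
    have hδpos : 0 < δ := lt_min (by linarith) (by positivity)
    have hδle : δ ≤ ρ/2 := min_le_left _ _
    have hδle2 : δ * (2*V) ≤ ε * ρ^2 := by
      have := min_le_right (ρ/2) (ε * ρ^2 / (2*V))
      rw [← hδ] at this
      calc δ * (2*V) ≤ (ε * ρ^2 / (2*V)) * (2*V) :=
            mul_le_mul_of_nonneg_right this (by positivity)
        _ = ε * ρ^2 := by field_simp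
    set ρ' := ρ - δ with hρ'
    have hρ'pos : 0 < ρ' := by rw [hρ']; linarith
    have hρ'lt : ρ' < ρ := by rw [hρ']; linarith
    have hρ'half : ρ/2 ≤ ρ' := by rw [hρ']; linarith
    obtain ⟨r, ⟨ξ0, rfl⟩, hr⟩ := exists_lt_of_lt_csSup hSdne
      (show ρ' < sSup {r : ℝ | ∃ ξ : ProbabilityMeasure X,
        r = ⨅ j, -(∫ y, gbar j y ∂(ξ : Measure X))} by rw [hρ] at hρ'lt; exact hρ'lt)
    have hξ0 : ∀ j, ∫ y, gbar j y ∂(ξ0 : Measure X) ≤ -ρ' := by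
      intro j
      have := ciInf_le (hbddI ξ0) j
      linarith
    have hden : 0 < V + τ * ρ' := by positivity
    set θ := V / (V + τ * ρ') with hθ
    have hθ0 : 0 ≤ θ := by positivity
    have hθ1 : θ ≤ 1 := by
      rw [hθ, div_le_one hden]
      linarith [mul_pos hτpos hρ'pos]
    obtain ⟨ξθ, hξθ⟩ := mixture ξh ξ0 θ hθ0 hθ1
    have hkey : (1-θ) * ((τ:ℝ)⁻¹ * V) = θ * ρ' := by
      rw [hθ]
      field_simp
      ring
    have hfeas : ∀ j, ∫ y, gbar j y ∂(ξθ : Measure X) ≤ 0 := by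
      intro j
      rw [hξθ (gbar j) (-1) 1 (hgbm j) (hgb1 j), hgbI j]
      have hvj : ∑ t ∈ Finset.Icc 1 τ, gbar j (x t) ≤ V := hjs j (Finset.mem_univ j)
      have ht1 : (1-θ) * ((τ:ℝ)⁻¹ * ∑ t ∈ Finset.Icc 1 τ, gbar j (x t))
          ≤ (1-θ) * ((τ:ℝ)⁻¹ * V) :=
        mul_le_mul_of_nonneg_left (mul_le_mul_of_nonneg_left hvj hτinv) (by linarith)
      have ht2 : θ * ∫ y, gbar j y ∂(ξ0 : Measure X) ≤ θ * (-ρ') :=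
        mul_le_mul_of_nonneg_left (hξ0 j) hθ0
      calc (1-θ) * ((τ:ℝ)⁻¹ * ∑ t ∈ Finset.Icc 1 τ, gbar j (x t))
            + θ * ∫ y, gbar j y ∂(ξ0 : Measure X)
          ≤ (1-θ) * ((τ:ℝ)⁻¹ * V) + θ * (-ρ') := add_le_add ht1 ht2
        _ = θ * ρ' + θ * (-ρ') := by rw [hkey]
        _ = 0 := by ring
    have hOPTθ := hOPTle ξθ hfeas
    rw [hξθ fbar 0 1 hfbm hfb01, hfbI] at hOPTθ
    have hf0b := (intBounds (ξ0 : Measure X) hfbm hfb01).1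
    have hfhb' := intBounds (ξh : Measure X) hfbm hfb01
    rw [hfbI] at hfhb'
    have hq : (τ:ℝ)⁻¹ * ∑ t ∈ Finset.Icc 1 τ, fbar (x t) ≤ OPTval fbar gbar + θ := by
      have h5 : 0 ≤ θ * ∫ y, fbar y ∂(ξ0 : Measure X) := mul_nonneg hθ0 hf0b
      have h6 : θ * ((τ:ℝ)⁻¹ * ∑ t ∈ Finset.Icc 1 τ, fbar (x t)) ≤ θ * 1 :=
        mul_le_mul_of_nonneg_left hfhb'.2 hθ0
      linarith [hOPTθ, h5, h6]
    have hSfb2 : ∑ t ∈ Finset.Icc 1 τ, fbar (x t)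
        ≤ (τ:ℝ) * OPTval fbar gbar + (τ:ℝ) * θ := by
      have := mul_le_mul_of_nonneg_left hq hτpos.le
      have hcanc : (τ:ℝ) * ((τ:ℝ)⁻¹ * ∑ t ∈ Finset.Icc 1 τ, fbar (x t))
          = ∑ t ∈ Finset.Icc 1 τ, fbar (x t) := by field_simp
      linarith [this, hcanc]
    have hτθ : (τ:ℝ) * θ ≤ V / ρ' := by
      have he : (τ:ℝ) * θ = (τ * V) / (V + τ * ρ') := by rw [hθ]; ring
      rw [he, div_le_div_iff₀ hden hρ'pos]
      linarith [sq_nonneg V]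
    have hVρ' : V / ρ' ≤ V / ρ + ε := by
      have he : V/ρ + ε = (V + ε*ρ)/ρ := by field_simp
      rw [he, div_le_div_iff₀ hρ'pos hρpos, hρ']
      have h7 : (ε*ρ)*δ ≤ (ε*ρ)*(ρ/2) :=
        mul_le_mul_of_nonneg_left hδle (by positivity)
      linarith [hδle2, h7]
    have hVρ2 : V / ρ ≤ V / (2*ρt) :=
      div_le_div_of_nonneg_left hcase.le (by positivity) (by linarith)
    have hVle : V ≤ V / (2*ρt) := by
      rw [le_div_iff₀ (by positivity)]
      have h8 : V * (2*ρt) ≤ V * 1 :=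
        mul_le_mul_of_nonneg_left (by linarith) hcase.le
      linarith
    have hsplit : V/(2*ρt) + V/(2*ρt) = V/ρt := by
      field_simp
      ring
    have hgjs := (abs_le.1 (h3 js)).1
    have hmul : (1/ρt) * (V - E) ≤ (1/ρt) * (∑ t ∈ Finset.Icc 1 τ, g t js (x t)) :=
      mul_le_mul_of_nonneg_left (by linarith) (by positivity)
    have hexp2 : (1/ρt) * (V - E) = V/ρt - E/ρt := by ring
    have hexp : (1 + 2/ρt) * E = E + 2*(E/ρt) := by ring
    have hA := (abs_le.1 h2).2
    have hBi := (abs_le.1 (h3 i)).2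
    have hvi : ∑ t ∈ Finset.Icc 1 τ, gbar i (x t) ≤ V := hjs i (Finset.mem_univ i)
    have hLj := hLjs js
    linarith
end

section
/- (Deterministic core of 'the algorithm never enters the recovery phase' in the fully stochastic setting.) Let τ ∈ ℕ with τ ≥ 1, let ρ > 0 satisfy ρ = sup_{ξ∈Ξ} min_{i∈[m]}(−ḡ_i(ξ)), let 0 < ρ̃ ≤ ρ/2, and let x_1,…,x_τ ∈ X, λ_1,…,λ_τ ∈ D_{ρ̃}, reward functions f_t : X → [0,1], constraint functions g_t : X → [−1,1]^m, measurable f̄ : X → [0,1] and ḡ : X → [−1,1]^m, ξ* ∈ Ξ with ḡ_i(ξ*) ≤ 0 for all i and f̄(ξ*) = OPT_{f̄,ḡ}, and constants R^P, R^D, E ≥ 0. Assume: (i) Σ_{t=1}^{τ}(f_t(x_t) − ⟨λ_t,g_t(x_t)⟩) ≥ Σ_{t=1}^{τ}(f_t(ξ*) − ⟨λ_t,g_t(ξ*)⟩) − (1+2/ρ̃)R^P; (ii) for every λ ∈ D_{ρ̃}, Σ_{t=1}^{τ}⟨λ_t, g_t(x_t)⟩ ≥ Σ_{t=1}^{τ}⟨λ,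 g_t(x_t)⟩ − R^D/ρ̃; (iii) |Σ_{t=1}^{τ} f_t(ξ*) − τ·f̄(ξ*)| ≤ E and |Σ_{t=1}^{τ}⟨λ_t, g_t(ξ*)⟩ − Σ_{t=1}^{τ}⟨λ_t, ḡ(ξ*)⟩| ≤ E/ρ̃; (iv) |Σ_{t=1}^{τ} f_t(x_t) − Σ_{t=1}^{τ} f̄(x_t)| ≤ E and, for every i ∈ [m], |Σ_{t=1}^{τ} g_{t,i}(x_t) − Σ_{t=1}^{τ} ḡ_i(x_t)| ≤ E. Then for every i ∈ [m]: Σ_{t=1}^{τ} g_{t,i}(x_t) ≤ (2+3/ρ̃)E + (1+2/ρ̃)R^P + R^D/ρ̃. -/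
open MeasureTheory Finset

open scoped ENNReal

lemma aux_integrable {X : Type} [MeasurableSpace X] (μ : Measure X) [IsFiniteMeasure μ]
    (h : X → ℝ) (hmeas : Measurable h) (c : ℝ) (hb : ∀ y, |h y| ≤ c) : Integrable h μ :=
  (integrable_const c).mono' hmeas.aestronglyMeasurable
    (Filter.Eventually.of_forall (by simpa [Real.norm_eq_abs] using hb))

lemma aux_int_le {X : Type} [MeasurableSpace X] (μ : Measure X) [IsProbabilityMeasure μ]
    (h : X → ℝ) (hmeas : Measurable h) (c : ℝ) (hb : ∀ y, |h y| ≤ c) :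
    ∫ y, h y ∂μ ≤ c := by
  calc ∫ y, h y ∂μ ≤ ∫ _, c ∂μ :=
        integral_mono (aux_integrable μ h hmeas c hb) (integrable_const c)
          (fun y => (abs_le.mp (hb y)).2)
    _ = c := by simp

lemma aux_int_ge {X : Type} [MeasurableSpace X] (μ : Measure X) [IsProbabilityMeasure μ]
    (h : X → ℝ) (hmeas : Measurable h) (c : ℝ) (hb : ∀ y, |h y| ≤ c) :
    -c ≤ ∫ y, h y ∂μ := by
  calc (-c : ℝ) = ∫ _, (-c : ℝ) ∂μ := by simp
    _ ≤ ∫ y, h y ∂μ := integral_mono (integrable_const (-c))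
        (aux_integrable μ h hmeas c hb) (fun y => (abs_le.mp (hb y)).1)

lemma aux_int_dirac {X : Type} [MeasurableSpace X] (h : X → ℝ) (hmeas : Measurable h) (a : X) :
    Integrable h (Measure.dirac a) := by
  refine ⟨hmeas.aestronglyMeasurable, ?_⟩
  rw [HasFiniteIntegral, lintegral_dirac' a hmeas.enorm]
  exact ENNReal.coe_lt_top

lemma aux_emp_prob {X : Type} [MeasurableSpace X] (τ : ℕ) (hτ : 1 ≤ τ) (x : ℕ → X) :
    IsProbabilityMeasure (((τ:ℝ≥0∞)⁻¹ • ∑ t ∈ Finset.Icc 1 τ, Measure.dirac (x t)) : Measure X) := by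
  constructor
  have hτ0 : (τ:ℝ≥0∞) ≠ 0 := by exact_mod_cast Nat.one_le_iff_ne_zero.mp hτ
  simp [Measure.smul_apply, Measure.finset_sum_apply, Nat.card_Icc,
    ENNReal.inv_mul_cancel hτ0 (ENNReal.natCast_ne_top τ)]

lemma aux_emp_integral {X : Type} [MeasurableSpace X] (τ : ℕ) (x : ℕ → X)
    (h : X → ℝ) (hmeas : Measurable h) :
    ∫ y, h y ∂(((τ:ℝ≥0∞)⁻¹ • ∑ t ∈ Finset.Icc 1 τ, Measure.dirac (x t)) : Measure X)
      = (τ:ℝ)⁻¹ * ∑ t ∈ Finset.Icc 1 τ, h (x t) := by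
  rw [integral_smul_measure, integral_finset_sum_measure
      (fun t _ => aux_int_dirac h hmeas (x t))]
  simp only [integral_dirac' h _ hmeas.stronglyMeasurable]
  simp [ENNReal.toReal_inv, smul_eq_mul]

lemma aux_mix_prob {X : Type} [MeasurableSpace X] (μ ν : Measure X)
    [IsProbabilityMeasure μ] [IsProbabilityMeasure ν] (γ : ℝ) (h0 : 0 ≤ γ) (h1 : γ ≤ 1) :
    IsProbabilityMeasure ((ENNReal.ofReal (1 - γ)) • μ + (ENNReal.ofReal γ) • ν) := by
  constructor
  simp only [Measure.add_apply, Measure.smul_apply, measure_univ, smul_eq_mul, mul_one]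
  rw [← ENNReal.ofReal_add (by linarith) h0]
  norm_num

lemma aux_mix_integral {X : Type} [MeasurableSpace X] (μ ν : Measure X)
    [IsProbabilityMeasure μ] [IsProbabilityMeasure ν] (γ : ℝ) (h0 : 0 ≤ γ) (h1 : γ ≤ 1)
    (h : X → ℝ) (hmeas : Measurable h) (c : ℝ) (hb : ∀ y, |h y| ≤ c) :
    ∫ y, h y ∂((ENNReal.ofReal (1 - γ)) • μ + (ENNReal.ofReal γ) • ν)
      = (1 - γ) * ∫ y, h y ∂μ + γ * ∫ y, h y ∂ν := by
  rw [integral_add_measure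
      ((aux_integrable μ h hmeas c hb).smul_measure ENNReal.ofReal_ne_top)
      ((aux_integrable ν h hmeas c hb).smul_measure ENNReal.ofReal_ne_top),
    integral_smul_measure, integral_smul_measure,
    ENNReal.toReal_ofReal (by linarith), ENNReal.toReal_ofReal h0, smul_eq_mul, smul_eq_mul]

set_option maxHeartbeats 2000000 in
/-- Deterministic core of "the algorithm never enters the recovery phase" in the fully
stochastic setting: the cumulative violation after `τ` play-phase rounds stays small. -/
theorem statement10 {X : Type} [MeasurableSpace X] {m : ℕ} (hm : 0 < m)
    (τ : ℕ) (hτ : 1 ≤ τ)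
    (ρ ρt : ℝ) (hρpos : 0 < ρ)
    (gbar : Fin m → X → ℝ) (hgbm : ∀ i, Measurable (gbar i))
    (hgb1 : ∀ i y, gbar i y ∈ Set.Icc (-1:ℝ) 1)
    (hρ : ρ = dgval gbar)
    (hρt : 0 < ρt) (hρt2 : ρt ≤ ρ / 2)
    (x : ℕ → X) (lam : ℕ → Fin m → ℝ)
    -- the dual iterates lie in `D_{ρ̃}`
    (hlam : ∀ t ∈ Finset.Icc 1 τ, (∀ i, 0 ≤ lam t i) ∧ ∑ i, lam t i ≤ 1 / ρt)
    (f : ℕ → X → ℝ) (g : ℕ → Fin m → X → ℝ)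
    (hfm : ∀ t, Measurable (f t)) (hf01 : ∀ t y, f t y ∈ Set.Icc (0:ℝ) 1)
    (hgm : ∀ t i, Measurable (g t i)) (hg1 : ∀ t i y, g t i y ∈ Set.Icc (-1:ℝ) 1)
    (fbar : X → ℝ) (hfbm : Measurable fbar) (hfb01 : ∀ y, fbar y ∈ Set.Icc (0:ℝ) 1)
    (ξs : ProbabilityMeasure X)
    (hfeas : ∀ i, ∫ y, gbar i y ∂(ξs : Measure X) ≤ 0)
    (hopt : (∫ y, fbar y ∂(ξs : Measure X)) = OPTval fbar gbar)
    (RP RD E : ℝ) (hRP : 0 ≤ RP) (hRD : 0 ≤ RD) (hE : 0 ≤ E)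
    -- (i) primal regret bound
    (h1 : ∑ t ∈ Finset.Icc 1 τ, (f t (x t) - ∑ i, lam t i * g t i (x t)) ≥
          ∑ t ∈ Finset.Icc 1 τ, ((∫ y, f t y ∂(ξs : Measure X)) -
            ∑ i, lam t i * ∫ y, g t i y ∂(ξs : Measure X)) - (1 + 2 / ρt) * RP)
    -- (ii) dual regret bound
    (h2 : ∀ l : Fin m → ℝ, (∀ i, 0 ≤ l i) → (∑ i, l i ≤ 1 / ρt) →
          ∑ t ∈ Finset.Icc 1 τ, ∑ i, lam t i * g t i (x t) ≥
          ∑ t ∈ Finset.Icc 1 τ, ∑ i, l i * g t i (x t) - RD / ρt)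
    -- (iii) concentration at ξ*
    (h3a : |∑ t ∈ Finset.Icc 1 τ, (∫ y, f t y ∂(ξs : Measure X)) -
             (τ : ℝ) * ∫ y, fbar y ∂(ξs : Measure X)| ≤ E)
    (h3b : |∑ t ∈ Finset.Icc 1 τ, ∑ i, lam t i * ∫ y, g t i y ∂(ξs : Measure X) -
             ∑ t ∈ Finset.Icc 1 τ, ∑ i, lam t i * ∫ y, gbar i y ∂(ξs : Measure X)| ≤ E / ρt)
    -- (iv) concentration along the trajectory
    (h4a : |∑ t ∈ Finset.Icc 1 τ, f t (x t) - ∑ t ∈ Finset.Icc 1 τ, fbar (x t)| ≤ E)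
    (h4b : ∀ i, |∑ t ∈ Finset.Icc 1 τ, g t i (x t) -
             ∑ t ∈ Finset.Icc 1 τ, gbar i (x t)| ≤ E) :
    ∀ i, ∑ t ∈ Finset.Icc 1 τ, g t i (x t) ≤
      (2 + 3 / ρt) * E + (1 + 2 / ρt) * RP + RD / ρt := by
  haveI : Nonempty (Fin m) := ⟨⟨0, hm⟩⟩
  intro i
  set T : ℝ := (2 + 3 / ρt) * E + (1 + 2 / ρt) * RP + RD / ρt with hTdef
  set S : Fin m → ℝ := fun j => ∑ t ∈ Finset.Icc 1 τ, g t j (x t) with hSdef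
  clear_value T S
  have hτR : (0:ℝ) < τ := by exact_mod_cast hτ
  have hτ1 : (τ:ℝ)⁻¹ * τ = 1 := inv_mul_cancel₀ hτR.ne'
  have h1t : (0:ℝ) ≤ 1 / ρt := by positivity
  have h2t : (0:ℝ) ≤ 2 / ρt := by positivity
  have h3t : (0:ℝ) ≤ 3 / ρt := by positivity
  have hdgne : Set.Nonempty {r : ℝ | ∃ ξ : ProbabilityMeasure X,
      r = ⨅ j, -(∫ y, gbar j y ∂(ξ : Measure X))} :=
    ⟨⨅ j, -(∫ y, gbar j y ∂(ξs : Measure X)), ξs, rfl⟩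
  -- ρ ≤ 1
  have hρ1 : ρ ≤ 1 := by
    rw [hρ, dgval]
    refine csSup_le hdgne ?_
    rintro r ⟨ξ, rfl⟩
    have h0 := ciInf_le (Set.Finite.bddBelow (Set.finite_range
      (fun j => -(∫ y, gbar j y ∂(ξ : Measure X))))) (⟨0, hm⟩ : Fin m)
    have hge := aux_int_ge (ξ : Measure X) (gbar ⟨0, hm⟩) (hgbm _) 1
      (fun y => abs_le.mpr (hgb1 _ y))
    linarith
  have hρt12 : ρt ≤ 1 / 2 := by linarith
  have hPge2 : (2:ℝ) ≤ 1 / ρt := by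
    rw [le_div_iff₀ hρt]; linarith
  have hT0 : 0 ≤ T := by
    have := mul_nonneg (by linarith : (0:ℝ) ≤ 2 + 3 / ρt) hE
    have := mul_nonneg (by linarith : (0:ℝ) ≤ 1 + 2 / ρt) hRP
    have := div_nonneg hRD hρt.le
    rw [hTdef]; linarith
  -- maximal coordinate
  obtain ⟨i₀, -, hmax⟩ := Finset.exists_max_image Finset.univ S ⟨i, Finset.mem_univ i⟩
  suffices hS0 : S i₀ ≤ T by
    have hmi := hmax i (Finset.mem_univ i)
    simp only [hSdef] at hmi hS0
    exact le_trans hmi hS0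
  rcases le_or_gt (S i₀) 0 with hcase | hcase
  · linarith
  -- Step A : dual bound with l = indicator of i₀
  have hA : (1 / ρt) * S i₀ - RD / ρt ≤
      ∑ t ∈ Finset.Icc 1 τ, ∑ j, lam t j * g t j (x t) := by
    have hl := h2 (fun j => if j = i₀ then 1 / ρt else 0)
      (fun j => by
        show (0:ℝ) ≤ if j = i₀ then 1 / ρt else 0
        split
        · exact h1t
        · exact le_refl 0)
      (by simp)
    have he : ∀ t, ∑ j, (if j = i₀ then 1 / ρt else 0) * g t j (x t)
        = (1 / ρt) * g t i₀ (x t) := by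
      intro t
      rw [Finset.sum_eq_single i₀]
      · simp
      · intro b _ hb; simp [hb]
      · simp
    simp only [he] at hl
    have hSA : ∑ t ∈ Finset.Icc 1 τ, (1 / ρt) * g t i₀ (x t) = (1 / ρt) * S i₀ := by
      simp only [hSdef]
      rw [Finset.mul_sum]
    rw [hSA] at hl
    linarith
  -- Step B : primal bound
  have hB : ∑ t ∈ Finset.Icc 1 τ, ∑ j, lam t j * g t j (x t) ≤
      (∑ t ∈ Finset.Icc 1 τ, fbar (x t)) - (τ:ℝ) * (∫ y, fbar y ∂(ξs : Measure X))
        + 2 * E + E / ρt + (1 + 2 / ρt) * RP := by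
    rw [Finset.sum_sub_distrib, Finset.sum_sub_distrib] at h1
    have hfeas0 : ∑ t ∈ Finset.Icc 1 τ, ∑ j, lam t j * ∫ y, gbar j y ∂(ξs : Measure X) ≤ 0 := by
      apply Finset.sum_nonpos
      intro t ht
      apply Finset.sum_nonpos
      intro j _
      have := mul_le_mul_of_nonneg_left (hfeas j) ((hlam t ht).1 j)
      simpa using this
    have ha1 := (abs_le.mp h4a).2
    have ha2 := (abs_le.mp h3a).1
    have ha3 := (abs_le.mp h3b).2
    linarith
  -- Step C : for every ρ' < ρ, the trajectory average is nearly optimal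
  have hC : ∀ ρ' : ℝ, 0 < ρ' → ρ' < ρ →
      (∑ t ∈ Finset.Icc 1 τ, fbar (x t)) ≤
        (τ:ℝ) * (∫ y, fbar y ∂(ξs : Measure X)) + (S i₀ + E) / ρ' := by
    intro ρ' hρ'0 hρ'ρ
    obtain ⟨r, ⟨ξ0, hr⟩, hρ'r⟩ := exists_lt_of_lt_csSup hdgne
      (by rw [hρ, dgval] at hρ'ρ; exact hρ'ρ)
    have hξ0 : ∀ j, ∫ y, gbar j y ∂(ξ0 : Measure X) ≤ -ρ' := by
      intro j
      have h0 : r ≤ -(∫ y, gbar j y ∂(ξ0 : Measure X)) := by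
        rw [hr]
        exact ciInf_le (Set.Finite.bddBelow (Set.finite_range _)) j
      linarith
    set W : ℝ := S i₀ + E with hWdef
    have hW : 0 < W := by linarith
    have hτρ' : 0 < (τ:ℝ) * ρ' := mul_pos hτR hρ'0
    set γ : ℝ := W / (W + τ * ρ') with hγdef
    have hden : 0 < W + τ * ρ' := by linarith
    have hγ0 : 0 ≤ γ := div_nonneg hW.le hden.le
    have hγ1 : γ < 1 := (div_lt_one hden).mpr (by linarith)
    have hγZ : γ * (W + τ * ρ') = W := div_mul_cancel₀ W hden.ne'
    clear_value W γ
    set μhat : Measure X := (τ:ℝ≥0∞)⁻¹ • ∑ t ∈ Finset.Icc 1 τ, Measure.dirac (x t) with hμdef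
    haveI hμp : IsProbabilityMeasure μhat := aux_emp_prob τ hτ x
    set ν : Measure X := ENNReal.ofReal (1 - γ) • μhat + ENNReal.ofReal γ • (ξ0 : Measure X)
      with hνdef
    haveI hνp : IsProbabilityMeasure ν := aux_mix_prob μhat (ξ0 : Measure X) γ hγ0 hγ1.le
    clear_value μhat ν
    -- feasibility of the mixture
    have hfeasν : ∀ j, ∫ y, gbar j y ∂ν ≤ 0 := by
      intro j
      rw [hνdef, aux_mix_integral μhat (ξ0 : Measure X) γ hγ0 hγ1.le (gbar j) (hgbm j) 1
        (fun y => abs_le.mpr (hgb1 j y)), hμdef, aux_emp_integral τ x (gbar j) (hgbm j)]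
      have hsum : ∑ t ∈ Finset.Icc 1 τ, gbar j (x t) ≤ W := by
        have hb := (abs_le.mp (h4b j)).1
        have hmj := hmax j (Finset.mem_univ j)
        rw [hWdef]; simp only [hSdef] at hmj ⊢
        linarith
      have hu : (0:ℝ) < (τ:ℝ)⁻¹ := by positivity
      have hkey2 : (1 - γ) * ((τ:ℝ)⁻¹ * W) = γ * ρ' := by
        linear_combination (-(τ:ℝ)⁻¹) * hγZ + (γ * ρ') * hτ1
      have hb1 : (1 - γ) * ((τ:ℝ)⁻¹ * ∑ t ∈ Finset.Icc 1 τ, gbar j (x t))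
          ≤ (1 - γ) * ((τ:ℝ)⁻¹ * W) :=
        mul_le_mul_of_nonneg_left (mul_le_mul_of_nonneg_left hsum hu.le) (by linarith)
      have hb2 : γ * ∫ y, gbar j y ∂(ξ0 : Measure X) ≤ γ * (-ρ') :=
        mul_le_mul_of_nonneg_left (hξ0 j) hγ0
      linarith
    -- the mixture value is at most OPT
    have hbdd : BddAbove {r : ℝ | ∃ ξ : ProbabilityMeasure X,
        (∀ i, ∫ y, gbar i y ∂(ξ : Measure X) ≤ 0) ∧ r = ∫ y, fbar y ∂(ξ : Measure X)} := by
      refine ⟨1, ?_⟩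
      rintro r ⟨ξ, -, rfl⟩
      exact aux_int_le (ξ : Measure X) fbar hfbm 1
        (fun y => abs_le.mpr ⟨by linarith [(hfb01 y).1], (hfb01 y).2⟩)
    have hle : ∫ y, fbar y ∂ν ≤ OPTval fbar gbar :=
      le_csSup hbdd ⟨⟨ν, hνp⟩, hfeasν, rfl⟩
    rw [← hopt] at hle
    rw [hνdef, aux_mix_integral μhat (ξ0 : Measure X) γ hγ0 hγ1.le fbar hfbm 1
      (fun y => abs_le.mpr ⟨by linarith [(hfb01 y).1], (hfb01 y).2⟩),
      hμdef, aux_emp_integral τ x fbar hfbm] at hle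
    have hf0 : 0 ≤ ∫ y, fbar y ∂(ξ0 : Measure X) := integral_nonneg (fun y => (hfb01 y).1)
    have hfx1 : ∑ t ∈ Finset.Icc 1 τ, fbar (x t) ≤ τ := by
      calc ∑ t ∈ Finset.Icc 1 τ, fbar (x t) ≤ ∑ _t ∈ Finset.Icc 1 τ, (1:ℝ) :=
            Finset.sum_le_sum (fun t _ => (hfb01 _).2)
        _ = τ := by simp
    have hfx0 : 0 ≤ ∑ t ∈ Finset.Icc 1 τ, fbar (x t) :=
      Finset.sum_nonneg (fun t _ => (hfb01 _).1)
    -- γ * τ ≤ W / ρ'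
    have hγτ : γ * τ ≤ W / ρ' := by
      rw [le_div_iff₀ hρ'0]
      have hq : γ * τ * ρ' = W - γ * W := by linear_combination hγZ
      have := mul_nonneg hγ0 hW.le
      linarith
    have hmul := mul_le_mul_of_nonneg_left hle hτR.le
    have hsplit : (τ:ℝ) * ((1 - γ) * ((τ:ℝ)⁻¹ * ∑ t ∈ Finset.Icc 1 τ, fbar (x t))
          + γ * ∫ y, fbar y ∂(ξ0 : Measure X))
        = (1 - γ) * (∑ t ∈ Finset.Icc 1 τ, fbar (x t))
          + (τ:ℝ) * (γ * ∫ y, fbar y ∂(ξ0 : Measure X)) := by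
      linear_combination ((1 - γ) * (∑ t ∈ Finset.Icc 1 τ, fbar (x t))) * hτ1
    have hγI : 0 ≤ (τ:ℝ) * (γ * ∫ y, fbar y ∂(ξ0 : Measure X)) :=
      mul_nonneg hτR.le (mul_nonneg hγ0 hf0)
    have hgS : γ * (∑ t ∈ Finset.Icc 1 τ, fbar (x t)) ≤ γ * τ :=
      mul_le_mul_of_nonneg_left hfx1 hγ0
    have hexp2 : (1 - γ) * (∑ t ∈ Finset.Icc 1 τ, fbar (x t))
        = (∑ t ∈ Finset.Icc 1 τ, fbar (x t))
          - γ * (∑ t ∈ Finset.Icc 1 τ, fbar (x t)) := by ring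
    linarith
  -- Step D : key affine inequality for ρ' < ρ, then take the limit ρ' → ρ
  set Dst : ℝ := 2 * E + E / ρt + (1 + 2 / ρt) * RP + RD / ρt with hDdef
  clear_value Dst
  have hkey : ∀ ρ' : ℝ, 0 < ρ' → ρ' < ρ →
      S i₀ * (ρ' - ρt) ≤ ρt * E + ρt * ρ' * Dst := by
    intro ρ' hρ'0 hρ'ρ
    have h5 : (1 / ρt) * S i₀ ≤ (S i₀ + E) / ρ' + Dst := by
      have := hC ρ' hρ'0 hρ'ρ
      rw [hDdef]; linarith
    have h6 := mul_le_mul_of_nonneg_right h5 (mul_pos hρt hρ'0).le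
    have e1 : (1 / ρt) * S i₀ * (ρt * ρ') = S i₀ * ρ' := by
      field_simp
    have e2 : ((S i₀ + E) / ρ' + Dst) * (ρt * ρ') = ρt * (S i₀ + E) + Dst * (ρt * ρ') := by
      field_simp
    rw [e1, e2] at h6
    nlinarith [h6]
  have hlim : S i₀ * (ρ - ρt) ≤ ρt * E + ρt * ρ * Dst := by
    have hdiv : Filter.Tendsto (fun n : ℕ => ρ / ((n:ℝ) + 2)) Filter.atTop (nhds 0) := by
      apply Filter.Tendsto.div_atTop (tendsto_const_nhds)
      exact Filter.tendsto_atTop_add_const_right _ 2 tendsto_natCast_atTop_atTop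
    have hseq : Filter.Tendsto (fun n : ℕ => ρ - ρ / ((n:ℝ) + 2)) Filter.atTop (nhds ρ) := by
      simpa using (tendsto_const_nhds : Filter.Tendsto (fun _ : ℕ => ρ) _ _).sub hdiv
    apply le_of_tendsto_of_tendsto'
      ((hseq.sub_const ρt).const_mul (S i₀))
      (((hseq.const_mul ρt).mul_const Dst).const_add (ρt * E))
    intro n
    have hn0 : (0:ℝ) ≤ (n:ℝ) := Nat.cast_nonneg n
    have hn2 : (0:ℝ) < (n:ℝ) + 2 := by linarith
    have hlt : ρ / ((n:ℝ) + 2) < ρ := div_lt_self hρpos (by linarith)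
    have hgt : 0 < ρ / ((n:ℝ) + 2) := div_pos hρpos hn2
    exact hkey _ (by linarith) (by linarith)
  -- Final arithmetic
  have hEρt : E / ρt * ρt = E := div_mul_cancel₀ E hρt.ne'
  have hRDρt : RD / ρt * ρt = RD := div_mul_cancel₀ RD hρt.ne'
  have e1 : 2 / ρt * RP * ρt = 2 * RP := by
    field_simp
  have hexp : 2 * ρt * Dst = 4 * ρt * E + 2 * E + 2 * ρt * RP + 4 * RP + 2 * RD := by
    rw [hDdef]
    linear_combination 2 * hEρt + 2 * e1 + 2 * hRDρt
  have hDst0 : 0 ≤ Dst := by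
    rw [hDdef]
    have := mul_nonneg (by linarith : (0:ℝ) ≤ 1 + 2 / ρt) hRP
    have := div_nonneg hE hρt.le
    have := div_nonneg hRD hρt.le
    linarith
  have hs1 : S i₀ * (ρ / 2) ≤ ρt * E + ρt * ρ * Dst := by
    have := mul_le_mul_of_nonneg_left (by linarith : ρ / 2 ≤ ρ - ρt) hcase.le
    linarith
  have hs2 : S i₀ ≤ E + 2 * ρt * Dst := by
    have hhalf : (0:ℝ) < ρ / 2 := by linarith
    rw [← mul_le_mul_iff_of_pos_right hhalf]
    have hr1 : ρt * E ≤ (ρ / 2) * E := mul_le_mul_of_nonneg_right hρt2 hE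
    have hr2 : ρt * ρ * Dst = (ρ / 2) * (2 * ρt * Dst) := by ring
    calc S i₀ * (ρ / 2) ≤ ρt * E + ρt * ρ * Dst := hs1
      _ ≤ (ρ / 2) * E + (ρ / 2) * (2 * ρt * Dst) := by rw [hr2]; linarith
      _ = (E + 2 * ρt * Dst) * (ρ / 2) := by ring
  have hfin : E + 2 * ρt * Dst ≤ T := by
    rw [hTdef, hexp]
    have b1 : (3:ℝ) ≤ 3 / ρt := by rw [le_div_iff₀ hρt]; linarith
    have a1 : 3 * E ≤ 3 / ρt * E := mul_le_mul_of_nonneg_right b1 hE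
    have a2 : 4 * ρt * E ≤ 2 * E := by nlinarith
    have a3 : 2 * ρt * RP ≤ RP := by nlinarith
    have b4 : (4:ℝ) ≤ 2 / ρt := by rw [le_div_iff₀ hρt]; linarith
    have a4 : 4 * RP ≤ 2 / ρt * RP := mul_le_mul_of_nonneg_right b4 hRP
    have a5 : 2 * RD ≤ RD / ρt := by
      rw [le_div_iff₀ hρt]; nlinarith
    linarith
  linarith
end

section
/- (Play-phase reward bound with adversarial constraints.) Let T, T₁ ∈ ℕ with 1 ≤ T₁ ≤ T, let ρ̃ > 0 and ρ ≥ 0, and let x_1,…,x_{T₁} ∈ X, λ_1,…,λ_{T₁} ∈ D_{ρ̃}, reward functions f_t : X → [0,1], constraint functions g_t : X → [−1,1]^m, measures ξ*, ξ° ∈ Ξ such that g_{t,i}(ξ°) ≤ −ρ for all t ∈ [T] and i ∈ [m], and constants R^P, R^D ≥ 0. Assume: (i) for every ξ ∈ Ξ, Σ_{t=1}^{T₁}(f_t(x_t) − ⟨λ_t,g_t(x_t)⟩) ≥ Σ_{t=1}^{T₁}(f_t(ξ) − ⟨λ_t,g_t(ξ)⟩) − (1+2/ρ̃)R^P; (ii)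 for every λ ∈ D_{ρ̃}, Σ_{t=1}^{T₁}⟨λ_t,g_t(x_t)⟩ ≥ Σ_{t=1}^{T₁}⟨λ,g_t(x_t)⟩ − R^D/ρ̃; (iii) either T₁ = T, or max_{i∈[m]} Σ_{t=1}^{T₁} g_{t,i}(x_t) ≥ (T−T₁)ρ̃. Then Σ_{t=1}^{T₁} f_t(x_t) ≥ (ρ/(1+ρ))·Σ_{t=1}^{T₁} f_t(ξ*) + (T − T₁) − (1+2/ρ̃)R^P − R^D/ρ̃. -/
open MeasureTheory Finset

/-- Play-phase reward bound with adversarial constraints: the primal player secures a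
`ρ/(1+ρ)` fraction of the reward of any fixed mixture `ξ*`, plus `T − T₁`. -/
theorem statement11 {X : Type} [MeasurableSpace X] {m : ℕ} (hm : 0 < m)
    (T T₁ : ℕ) (hT₁ : 1 ≤ T₁) (hTT : T₁ ≤ T)
    (ρt ρ : ℝ) (hρt : 0 < ρt) (hρ : 0 ≤ ρ)
    (x : ℕ → X) (lam : ℕ → Fin m → ℝ)
    -- the dual iterates lie in `D_{ρ̃}`
    (hlam : ∀ t ∈ Finset.Icc 1 T₁, (∀ i, 0 ≤ lam t i) ∧ ∑ i, lam t i ≤ 1 / ρt)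
    (f : ℕ → X → ℝ) (g : ℕ → Fin m → X → ℝ)
    (hfm : ∀ t, Measurable (f t)) (hf01 : ∀ t y, f t y ∈ Set.Icc (0:ℝ) 1)
    (hgm : ∀ t i, Measurable (g t i)) (hg1 : ∀ t i y, g t i y ∈ Set.Icc (-1:ℝ) 1)
    (ξs ξo : ProbabilityMeasure X)
    -- ξ° is strictly feasible by margin ρ for every round's constraints
    (hfeaso : ∀ t ∈ Finset.Icc 1 T, ∀ i, ∫ y, g t i y ∂(ξo : Measure X) ≤ -ρ)
    (RP RD : ℝ) (hRP : 0 ≤ RP) (hRD : 0 ≤ RD)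
    -- (i) primal regret bound against every fixed mixture
    (h1 : ∀ ξ : ProbabilityMeasure X,
          ∑ t ∈ Finset.Icc 1 T₁, (f t (x t) - ∑ i, lam t i * g t i (x t)) ≥
          ∑ t ∈ Finset.Icc 1 T₁, ((∫ y, f t y ∂(ξ : Measure X)) -
            ∑ i, lam t i * ∫ y, g t i y ∂(ξ : Measure X)) - (1 + 2 / ρt) * RP)
    -- (ii) dual regret bound
    (h2 : ∀ l : Fin m → ℝ, (∀ i, 0 ≤ l i) → (∑ i, l i ≤ 1 / ρt) →
          ∑ t ∈ Finset.Icc 1 T₁, ∑ i, lam t i * g t i (x t) ≥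
          ∑ t ∈ Finset.Icc 1 T₁, ∑ i, l i * g t i (x t) - RD / ρt)
    -- (iii) stopping condition of the play phase
    (h3 : T₁ = T ∨ ∃ i, ((T : ℝ) - (T₁ : ℝ)) * ρt ≤ ∑ t ∈ Finset.Icc 1 T₁, g t i (x t)) :
    ∑ t ∈ Finset.Icc 1 T₁, f t (x t) ≥
      (ρ / (1 + ρ)) * ∑ t ∈ Finset.Icc 1 T₁, (∫ y, f t y ∂(ξs : Measure X))
        + ((T : ℝ) - (T₁ : ℝ)) - (1 + 2 / ρt) * RP - RD / ρt := by
  have h1ρ : (0:ℝ) < 1 + ρ := by linarith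
  set a : ℝ := 1 / (1 + ρ) with ha
  set b : ℝ := ρ / (1 + ρ) with hb
  have ha0 : 0 ≤ a := by positivity
  have hb0 : 0 ≤ b := by positivity
  have hab : a + b = 1 := by rw [ha, hb]; field_simp
  -- integrability of bounded measurable functions over finite measures
  have hIB : ∀ (ν : Measure X) [IsFiniteMeasure ν] (h : X → ℝ), Measurable h →
      (∀ y, |h y| ≤ 1) → Integrable h ν := by
    intro ν _ h hmeas hbd
    exact (integrable_const (1:ℝ)).mono' hmeas.aestronglyMeasurable
      (Filter.Eventually.of_forall fun y => by simpa using hbd y)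
  have hfb : ∀ t y, |f t y| ≤ 1 := fun t y =>
    abs_le.2 ⟨by linarith [(hf01 t y).1], (hf01 t y).2⟩
  have hgb : ∀ t i y, |g t i y| ≤ 1 := fun t i y =>
    abs_le.2 ⟨(hg1 t i y).1, (hg1 t i y).2⟩
  -- the mixture measure
  set μ : Measure X := ENNReal.ofReal a • (ξo : Measure X) + ENNReal.ofReal b • (ξs : Measure X)
    with hμ
  haveI hfin1 : IsFiniteMeasure (ENNReal.ofReal a • (ξo : Measure X)) := by
    constructor
    simp only [Measure.smul_apply, smul_eq_mul, measure_univ, mul_one]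
    exact ENNReal.ofReal_lt_top
  haveI hfin2 : IsFiniteMeasure (ENNReal.ofReal b • (ξs : Measure X)) := by
    constructor
    simp only [Measure.smul_apply, smul_eq_mul, measure_univ, mul_one]
    exact ENNReal.ofReal_lt_top
  haveI : IsProbabilityMeasure μ := by
    constructor
    rw [hμ]
    simp only [Measure.add_apply, Measure.smul_apply, smul_eq_mul, measure_univ, mul_one]
    rw [← ENNReal.ofReal_add ha0 hb0, hab, ENNReal.ofReal_one]
  set ξ : ProbabilityMeasure X := ⟨μ, inferInstance⟩ with hξ
  have hcoe : (ξ : Measure X) = μ := rfl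
  -- integral decomposition
  have hint : ∀ (h : X → ℝ), Measurable h → (∀ y, |h y| ≤ 1) →
      ∫ y, h y ∂μ = a * (∫ y, h y ∂(ξo : Measure X)) + b * (∫ y, h y ∂(ξs : Measure X)) := by
    intro h hmeas hbd
    have i1 : Integrable h (ENNReal.ofReal a • (ξo : Measure X)) := hIB _ h hmeas hbd
    have i2 : Integrable h (ENNReal.ofReal b • (ξs : Measure X)) := hIB _ h hmeas hbd
    rw [hμ, integral_add_measure i1 i2, integral_smul_measure, integral_smul_measure,
        ENNReal.toReal_ofReal ha0, ENNReal.toReal_ofReal hb0, smul_eq_mul, smul_eq_mul]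
  -- per-round lower bound on the comparator payoff under ξ
  have hterm : ∀ t ∈ Finset.Icc 1 T₁,
      b * ∫ y, f t y ∂(ξs : Measure X) ≤
        (∫ y, f t y ∂(ξ : Measure X)) - ∑ i, lam t i * ∫ y, g t i y ∂(ξ : Measure X) := by
    intro t ht
    have htT : t ∈ Finset.Icc 1 T := by
      rw [Finset.mem_Icc] at ht ⊢; exact ⟨ht.1, ht.2.trans hTT⟩
    have hfdec : ∫ y, f t y ∂(ξ : Measure X)
        = a * (∫ y, f t y ∂(ξo : Measure X)) + b * (∫ y, f t y ∂(ξs : Measure X)) := by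
      rw [hcoe]; exact hint (f t) (hfm t) (hfb t)
    have hfo : 0 ≤ ∫ y, f t y ∂(ξo : Measure X) :=
      integral_nonneg fun y => (hf01 t y).1
    have hgneg : ∀ i, ∫ y, g t i y ∂(ξ : Measure X) ≤ 0 := by
      intro i
      have hdec : ∫ y, g t i y ∂(ξ : Measure X)
          = a * (∫ y, g t i y ∂(ξo : Measure X)) + b * (∫ y, g t i y ∂(ξs : Measure X)) := by
        rw [hcoe]; exact hint (g t i) (hgm t i) (hgb t i)
      have h1' : ∫ y, g t i y ∂(ξo : Measure X) ≤ -ρ := hfeaso t htT i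
      have h2' : ∫ y, g t i y ∂(ξs : Measure X) ≤ 1 := by
        have := integral_mono (hIB (ξs : Measure X) (g t i) (hgm t i) (hgb t i)) (integrable_const 1)
          (fun y => (hg1 t i y).2)
        simpa using this
      have hcalc : a * (∫ y, g t i y ∂(ξo : Measure X)) + b * (∫ y, g t i y ∂(ξs : Measure X))
          ≤ a * (-ρ) + b * 1 := by
        gcongr
      rw [hdec]
      have : a * (-ρ) + b * 1 = 0 := by rw [ha, hb]; field_simp; ring
      linarith
    have hsum0 : ∑ i, lam t i * ∫ y, g t i y ∂(ξ : Measure X) ≤ 0 := by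
      apply Finset.sum_nonpos
      intro i _
      exact mul_nonpos_of_nonneg_of_nonpos ((hlam t ht).1 i) (hgneg i)
    nlinarith [mul_nonneg hb0 (integral_nonneg (μ := (ξs : Measure X)) fun y => (hf01 t y).1),
      mul_nonneg ha0 hfo]
  -- primal bound
  have hprim := h1 ξ
  have hsumterm : b * ∑ t ∈ Finset.Icc 1 T₁, (∫ y, f t y ∂(ξs : Measure X)) ≤
      ∑ t ∈ Finset.Icc 1 T₁, ((∫ y, f t y ∂(ξ : Measure X)) -
        ∑ i, lam t i * ∫ y, g t i y ∂(ξ : Measure X)) := by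
    rw [Finset.mul_sum]
    exact Finset.sum_le_sum hterm
  -- dual bound
  have hdual : ∑ t ∈ Finset.Icc 1 T₁, ∑ i, lam t i * g t i (x t) ≥
      ((T : ℝ) - (T₁ : ℝ)) - RD / ρt := by
    rcases h3 with rfl | ⟨i, hi⟩
    · have h0 := h2 (fun _ => 0) (fun _ => le_rfl) (by simp; positivity)
      simp only [zero_mul, Finset.sum_const_zero, zero_sub] at h0
      simp only [sub_self]
      linarith
    · set l : Fin m → ℝ := fun j => if j = i then 1 / ρt else 0 with hl
      have hl0 : ∀ j, 0 ≤ l j := by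
        intro j; rw [hl]; dsimp only; split <;> positivity
      have hlsum : ∑ j, l j ≤ 1 / ρt := by
        rw [hl]
        simp [Finset.sum_ite_eq']
      have hd := h2 l hl0 hlsum
      have hgval : ∀ t, ∑ j, l j * g t j (x t) = (1 / ρt) * g t i (x t) := by
        intro t
        rw [hl]
        simp [ite_mul, Finset.sum_ite_eq']
      have hsumg : ∑ t ∈ Finset.Icc 1 T₁, ∑ j, l j * g t j (x t)
          = (1 / ρt) * ∑ t ∈ Finset.Icc 1 T₁, g t i (x t) := by
        rw [Finset.mul_sum]
        exact Finset.sum_congr rfl fun t _ => hgval t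
      have hge : (1 / ρt) * ∑ t ∈ Finset.Icc 1 T₁, g t i (x t)
          ≥ ((T : ℝ) - (T₁ : ℝ)) := by
        have := mul_le_mul_of_nonneg_left hi (le_of_lt (by positivity : (0:ℝ) < 1 / ρt))
        calc ((T : ℝ) - (T₁ : ℝ)) = (1 / ρt) * (((T : ℝ) - (T₁ : ℝ)) * ρt) := by
              field_simp
          _ ≤ (1 / ρt) * ∑ t ∈ Finset.Icc 1 T₁, g t i (x t) := this
      rw [hsumg] at hd
      linarith
  -- combine
  have hsplit : ∑ t ∈ Finset.Icc 1 T₁, (f t (x t) - ∑ i, lam t i * g t i (x t))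
      = ∑ t ∈ Finset.Icc 1 T₁, f t (x t)
        - ∑ t ∈ Finset.Icc 1 T₁, ∑ i, lam t i * g t i (x t) :=
    Finset.sum_sub_distrib _ _
  rw [hsplit] at hprim
  rw [hb] at hsumterm
  linarith
end

section
/- (Recovery-phase violation bound with adversarial constraints.) Let T, T₁ ∈ ℕ with T₁ ≤ T, let ρ ∈ ℝ, and let x_{T₁+1},…,x_T ∈ X, λ_{T₁+1},…,λ_T ∈ Δ_m, constraint functions g_t : X → [−1,1]^m, ξ° ∈ Ξ with g_{t,i}(ξ°) ≤ −ρ for all t and all i ∈ [m], and constants R^P, R^D ≥ 0. Assume: (i) Σ_{t=T₁+1}^{T}(−⟨λ_t,g_t(x_t)⟩) ≥ Σ_{t=T₁+1}^{T}(−⟨λ_t,g_t(ξ°)⟩) − 2·R^P; (ii) for every λ ∈ Δ_m, Σ_{t=T₁+1}^{T}⟨λ_t,g_t(x_t)⟩ ≥ Σ_{t=T₁+1}^{T}⟨λ,g_t(x_t)⟩ − R^D. Then for every i ∈ [m], Σ_{t=T₁+1}^{T} g_{t,i}(x_t) ≤ −(T − T₁)·ρ + R^D + 2·R^P. -/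
open MeasureTheory Finset

/-- Recovery-phase violation bound with adversarial constraints. -/
theorem statement12 {X : Type} [MeasurableSpace X] {m : ℕ} (hm : 0 < m)
    (T T₁ : ℕ) (hTT : T₁ ≤ T)
    (ρ : ℝ)
    (x : ℕ → X) (lam : ℕ → Fin m → ℝ)
    -- the dual iterates lie in the simplex `Δ_m`
    (hlam : ∀ t ∈ Finset.Icc (T₁ + 1) T, (∀ i, 0 ≤ lam t i) ∧ ∑ i, lam t i = 1)
    (g : ℕ → Fin m → X → ℝ)
    (hgm : ∀ t i, Measurable (g t i)) (hg1 : ∀ t i y, g t i y ∈ Set.Icc (-1:ℝ) 1)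
    (ξo : ProbabilityMeasure X)
    -- ξ° is strictly feasible by margin ρ for every round's constraints
    (hfeaso : ∀ t, ∀ i, ∫ y, g t i y ∂(ξo : Measure X) ≤ -ρ)
    (RP RD : ℝ) (hRP : 0 ≤ RP) (hRD : 0 ≤ RD)
    -- (i) primal regret bound in the recovery phase
    (h1 : ∑ t ∈ Finset.Icc (T₁ + 1) T, (-(∑ i, lam t i * g t i (x t))) ≥
          ∑ t ∈ Finset.Icc (T₁ + 1) T,
            (-(∑ i, lam t i * ∫ y, g t i y ∂(ξo : Measure X))) - 2 * RP)
    -- (ii) dual regret bound in the recovery phase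
    (h2 : ∀ l : Fin m → ℝ, (∀ i, 0 ≤ l i) → (∑ i, l i = 1) →
          ∑ t ∈ Finset.Icc (T₁ + 1) T, ∑ i, lam t i * g t i (x t) ≥
          ∑ t ∈ Finset.Icc (T₁ + 1) T, ∑ i, l i * g t i (x t) - RD) :
    ∀ i, ∑ t ∈ Finset.Icc (T₁ + 1) T, g t i (x t) ≤
      -(((T : ℝ) - (T₁ : ℝ)) * ρ) + RD + 2 * RP := by
  intro i
  -- use l = indicator of i
  have hl := h2 (fun j => if j = i then (1:ℝ) else 0)
    (fun j => by split <;> norm_num)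
    (by simp)
  have hsel : ∑ t ∈ Finset.Icc (T₁ + 1) T,
      ∑ j, (if j = i then (1:ℝ) else 0) * g t j (x t)
      = ∑ t ∈ Finset.Icc (T₁ + 1) T, g t i (x t) := by
    apply Finset.sum_congr rfl
    intro t _
    simp [Finset.sum_ite_eq']
  -- bound the dual-weighted ξ° value
  have hfeas : ∀ t ∈ Finset.Icc (T₁ + 1) T,
      ∑ j, lam t j * ∫ y, g t j y ∂(ξo : Measure X) ≤ -ρ := by
    intro t ht
    obtain ⟨hpos, hsum⟩ := hlam t ht
    calc ∑ j, lam t j * ∫ y, g t j y ∂(ξo : Measure X)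
        ≤ ∑ j, lam t j * (-ρ) := by
          apply Finset.sum_le_sum
          intro j _
          exact mul_le_mul_of_nonneg_left (hfeaso t j) (hpos j)
      _ = -ρ := by rw [← Finset.sum_mul, hsum, one_mul]
  have hcard : ((Finset.Icc (T₁ + 1) T).card : ℝ) = (T : ℝ) - (T₁ : ℝ) := by
    rw [Nat.card_Icc]
    have : T + 1 - (T₁ + 1) = T - T₁ := by omega
    rw [this, Nat.cast_sub hTT]
  have hsum2 : ∑ t ∈ Finset.Icc (T₁ + 1) T,
      ∑ j, lam t j * ∫ y, g t j y ∂(ξo : Measure X)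
      ≤ -(((T : ℝ) - (T₁ : ℝ)) * ρ) := by
    calc ∑ t ∈ Finset.Icc (T₁ + 1) T, ∑ j, lam t j * ∫ y, g t j y ∂(ξo : Measure X)
        ≤ ∑ t ∈ Finset.Icc (T₁ + 1) T, (-ρ) := Finset.sum_le_sum hfeas
      _ = ((Finset.Icc (T₁ + 1) T).card : ℝ) * (-ρ) := by rw [Finset.sum_const, nsmul_eq_mul]
      _ = -(((T : ℝ) - (T₁ : ℝ)) * ρ) := by rw [hcard]; ring
  have h1' : ∑ t ∈ Finset.Icc (T₁ + 1) T, ∑ j, lam t j * g t j (x t)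
      ≤ ∑ t ∈ Finset.Icc (T₁ + 1) T, ∑ j, lam t j * ∫ y, g t j y ∂(ξo : Measure X) + 2 * RP := by
    have := h1
    simp only [Finset.sum_neg_distrib] at this
    linarith
  calc ∑ t ∈ Finset.Icc (T₁ + 1) T, g t i (x t)
      = ∑ t ∈ Finset.Icc (T₁ + 1) T, ∑ j, (if j = i then (1:ℝ) else 0) * g t j (x t) := hsel.symm
    _ ≤ ∑ t ∈ Finset.Icc (T₁ + 1) T, ∑ j, lam t j * g t j (x t) + RD := by linarith [hl]
    _ ≤ -(((T : ℝ) - (T₁ : ℝ)) * ρ) + RD + 2 * RP := by linarith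
end

section
/- (Deterministic core of the guarantee with adversarial rewards and adversarial constraints.) Let T, T₁ ∈ ℕ with 1 ≤ T₁ ≤ T, let ρ ≥ 0 and 0 < ρ̃ ≤ ρ, and let x_1,…,x_T ∈ X, λ_1,…,λ_{T₁} ∈ D_{ρ̃}, λ_{T₁+1},…,λ_T ∈ Δ_m, reward functions f_t : X → [0,1], constraint functions g_t : X → [−1,1]^m, ξ*, ξ° ∈ Ξ with g_{t,i}(ξ°) ≤ −ρ for all t ∈ [T] and i ∈ [m], and constants M, R^P₁, R^D₁, R^P₂, R^D₂ ≥ 0. Assume: (i) for every ξ ∈ Ξ, Σ_{t=1}^{T₁}(f_t(x_t) − ⟨λ_t,g_t(x_t)⟩) ≥ Σ_{t=1}^{T₁}(f_t(ξ) − ⟨λ_t,g_t(ξ)⟩) − (1+2/ρ̃)R^P₁; (ii) for every λ ∈ D_{ρ̃}, Σ_{t=1}^{T₁}⟨λ_t,g_t(x_t)⟩ ≥ Σ_{t=1}^{T₁}⟨λ,g_t(x_t)⟩ − R^D₁/ρ̃; (iii) either T₁ = T or max_i Σ_{t=1}^{T₁} g_{t,i}(x_t) ≥ (T−T₁)ρ̃;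 (iv) for every i, Σ_{t=1}^{T₁} g_{t,i}(x_t) ≤ (T−T₁)ρ̃ + M; (v) Σ_{t=T₁+1}^{T}(−⟨λ_t,g_t(x_t)⟩) ≥ Σ_{t=T₁+1}^{T}(−⟨λ_t,g_t(ξ°)⟩) − 2R^P₂; (vi) for every λ ∈ Δ_m, Σ_{t=T₁+1}^{T}⟨λ_t,g_t(x_t)⟩ ≥ Σ_{t=T₁+1}^{T}⟨λ,g_t(x_t)⟩ − R^D₂. Then: Σ_{t=1}^{T} f_t(x_t) ≥ (ρ/(1+ρ))·Σ_{t=1}^{T} f_t(ξ*) − (1+2/ρ̃)R^P₁ − R^D₁/ρ̃, and for every i ∈ [m], Σ_{t=1}^{T} g_{t,i}(x_t) ≤ M + 2R^P₂ + R^D₂. -/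
open MeasureTheory Finset

lemma integral_bounds' {X : Type} [MeasurableSpace X] (μ : ProbabilityMeasure X)
    {h : X → ℝ} (hmeas : Measurable h) {a b : ℝ}
    (hab : ∀ y, a ≤ h y ∧ h y ≤ b) :
    a ≤ (∫ y, h y ∂(μ : Measure X)) ∧ (∫ y, h y ∂(μ : Measure X)) ≤ b := by
  have hint : Integrable h (μ : Measure X) :=
    ⟨hmeas.aestronglyMeasurable, HasFiniteIntegral.of_bounded (C := max |a| |b|)
      (ae_of_all _ fun y => by
        rcases hab y with ⟨h1, h2⟩
        rw [Real.norm_eq_abs, abs_le]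
        constructor
        · calc -(max |a| |b|) ≤ -|a| := by simp
            _ ≤ a := neg_abs_le a
            _ ≤ h y := h1
        · calc h y ≤ b := h2
            _ ≤ |b| := le_abs_self b
            _ ≤ max |a| |b| := le_max_right _ _)⟩
  constructor
  · calc a = ∫ _, a ∂(μ : Measure X) := by simp
      _ ≤ _ := integral_mono (integrable_const a) hint fun y => (hab y).1
  · calc (∫ y, h y ∂(μ : Measure X)) ≤ ∫ _, b ∂(μ : Measure X) :=
        integral_mono hint (integrable_const b) fun y => (hab y).2
      _ = b := by simp

set_option maxHeartbeats 1000000 in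
/-- Deterministic core of the guarantee with adversarial rewards and adversarial
constraints: `ρ/(1+ρ)` fraction of the reward of any fixed mixture, sublinear violation. -/
theorem statement13 {X : Type} [MeasurableSpace X] {m : ℕ} (hm : 0 < m)
    (T T₁ : ℕ) (hT₁ : 1 ≤ T₁) (hTT : T₁ ≤ T)
    (ρt ρ : ℝ) (hρ : 0 ≤ ρ) (hρt : 0 < ρt) (hρtρ : ρt ≤ ρ)
    (x : ℕ → X) (lam : ℕ → Fin m → ℝ)
    -- play-phase duals lie in `D_{ρ̃}`, recovery-phase duals lie in `Δ_m`
    (hlam1 : ∀ t ∈ Finset.Icc 1 T₁, (∀ i, 0 ≤ lam t i) ∧ ∑ i, lam t i ≤ 1 / ρt)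
    (hlam2 : ∀ t ∈ Finset.Icc (T₁ + 1) T, (∀ i, 0 ≤ lam t i) ∧ ∑ i, lam t i = 1)
    (f : ℕ → X → ℝ) (g : ℕ → Fin m → X → ℝ)
    (hfm : ∀ t, Measurable (f t)) (hf01 : ∀ t y, f t y ∈ Set.Icc (0:ℝ) 1)
    (hgm : ∀ t i, Measurable (g t i)) (hg1 : ∀ t i y, g t i y ∈ Set.Icc (-1:ℝ) 1)
    (ξs ξo : ProbabilityMeasure X)
    -- ξ° is strictly feasible by margin ρ for every round's constraints
    (hfeaso : ∀ t ∈ Finset.Icc 1 T, ∀ i, ∫ y, g t i y ∂(ξo : Measure X) ≤ -ρ)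
    (M RP1 RD1 RP2 RD2 : ℝ)
    (hM : 0 ≤ M) (hRP1 : 0 ≤ RP1) (hRD1 : 0 ≤ RD1) (hRP2 : 0 ≤ RP2) (hRD2 : 0 ≤ RD2)
    -- (i) play-phase primal regret bound against every fixed mixture
    (h1 : ∀ ξ : ProbabilityMeasure X,
          ∑ t ∈ Finset.Icc 1 T₁, (f t (x t) - ∑ i, lam t i * g t i (x t)) ≥
          ∑ t ∈ Finset.Icc 1 T₁, ((∫ y, f t y ∂(ξ : Measure X)) -
            ∑ i, lam t i * ∫ y, g t i y ∂(ξ : Measure X)) - (1 + 2 / ρt) * RP1)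
    -- (ii) play-phase dual regret bound
    (h2 : ∀ l : Fin m → ℝ, (∀ i, 0 ≤ l i) → (∑ i, l i ≤ 1 / ρt) →
          ∑ t ∈ Finset.Icc 1 T₁, ∑ i, lam t i * g t i (x t) ≥
          ∑ t ∈ Finset.Icc 1 T₁, ∑ i, l i * g t i (x t) - RD1 / ρt)
    -- (iii) stopping condition of the play phase
    (h3 : T₁ = T ∨ ∃ i, ((T : ℝ) - (T₁ : ℝ)) * ρt ≤ ∑ t ∈ Finset.Icc 1 T₁, g t i (x t))
    -- (iv) play-phase violation threshold
    (h4 : ∀ i, ∑ t ∈ Finset.Icc 1 T₁, g t i (x t) ≤ ((T : ℝ) - (T₁ : ℝ)) * ρt + M)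
    -- (v) recovery-phase primal regret bound
    (h5 : ∑ t ∈ Finset.Icc (T₁ + 1) T, (-(∑ i, lam t i * g t i (x t))) ≥
          ∑ t ∈ Finset.Icc (T₁ + 1) T,
            (-(∑ i, lam t i * ∫ y, g t i y ∂(ξo : Measure X))) - 2 * RP2)
    -- (vi) recovery-phase dual regret bound
    (h6 : ∀ l : Fin m → ℝ, (∀ i, 0 ≤ l i) → (∑ i, l i = 1) →
          ∑ t ∈ Finset.Icc (T₁ + 1) T, ∑ i, lam t i * g t i (x t) ≥
          ∑ t ∈ Finset.Icc (T₁ + 1) T, ∑ i, l i * g t i (x t) - RD2) :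
    (∑ t ∈ Finset.Icc 1 T, f t (x t) ≥
      (ρ / (1 + ρ)) * ∑ t ∈ Finset.Icc 1 T, (∫ y, f t y ∂(ξs : Measure X))
        - (1 + 2 / ρt) * RP1 - RD1 / ρt) ∧
    (∀ i, ∑ t ∈ Finset.Icc 1 T, g t i (x t) ≤ M + 2 * RP2 + RD2) := by
  have hρ1 : (0:ℝ) < 1 + ρ := by linarith
  set β : ℝ := ρ / (1 + ρ) with hβdef
  have hβ0 : 0 ≤ β := div_nonneg hρ hρ1.le
  have hβ1 : β ≤ 1 := (div_le_one hρ1).mpr (by linarith)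
  have hβρ : β = (1 - β) * ρ := by rw [hβdef, one_sub_div hρ1.ne', add_sub_cancel_right, div_mul_eq_mul_div, one_mul]
  -- sum splitting
  have hsplit : ∀ h : ℕ → ℝ, ∑ t ∈ Finset.Icc 1 T, h t =
      ∑ t ∈ Finset.Icc 1 T₁, h t + ∑ t ∈ Finset.Icc (T₁+1) T, h t := by
    intro h
    have e1 : Finset.Icc 1 T = Finset.Ioc 0 T := by rw [← Finset.Icc_add_one_left_eq_Ioc]; rfl
    have e2 : Finset.Icc 1 T₁ = Finset.Ioc 0 T₁ := by rw [← Finset.Icc_add_one_left_eq_Ioc]; rfl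
    have e3 : Finset.Icc (T₁+1) T = Finset.Ioc T₁ T := Finset.Icc_add_one_left_eq_Ioc T₁ T
    rw [e1, e2, e3, Finset.sum_Ioc_consecutive h (Nat.zero_le T₁) hTT]
  have hcard : ((Finset.Icc (T₁+1) T).card : ℝ) = (T : ℝ) - (T₁ : ℝ) := by
    rw [Nat.card_Icc]
    have : T + 1 - (T₁ + 1) = T - T₁ := by omega
    rw [this, Nat.cast_sub hTT]
  -- integral bounds
  have hfs : ∀ (ξ : ProbabilityMeasure X) t,
      0 ≤ (∫ y, f t y ∂(ξ : Measure X)) ∧ (∫ y, f t y ∂(ξ : Measure X)) ≤ 1 := by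
    intro ξ t
    exact integral_bounds' ξ (hfm t) (fun y => ⟨(hf01 t y).1, (hf01 t y).2⟩)
  have hgs : ∀ (ξ : ProbabilityMeasure X) t i,
      -1 ≤ (∫ y, g t i y ∂(ξ : Measure X)) ∧ (∫ y, g t i y ∂(ξ : Measure X)) ≤ 1 := by
    intro ξ t i
    exact integral_bounds' ξ (hgm t i) (fun y => ⟨(hg1 t i y).1, (hg1 t i y).2⟩)
  constructor
  · -- reward bound
    set A := ∑ t ∈ Finset.Icc 1 T₁, (f t (x t) - ∑ i, lam t i * g t i (x t)) with hA
    set Ss := ∑ t ∈ Finset.Icc 1 T₁, ((∫ y, f t y ∂(ξs : Measure X)) -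
        ∑ i, lam t i * ∫ y, g t i y ∂(ξs : Measure X)) with hSs
    set So := ∑ t ∈ Finset.Icc 1 T₁, ((∫ y, f t y ∂(ξo : Measure X)) -
        ∑ i, lam t i * ∫ y, g t i y ∂(ξo : Measure X)) with hSo
    have hAs := h1 ξs
    have hAo := h1 ξo
    -- combine the two instances with weights β, 1-β
    have hcomb : A ≥ β * Ss + (1 - β) * So - (1 + 2 / ρt) * RP1 := by
      have k1 : β * (Ss - (1 + 2 / ρt) * RP1) ≤ β * A :=
        mul_le_mul_of_nonneg_left hAs hβ0
      have k2 : (1 - β) * (So - (1 + 2 / ρt) * RP1) ≤ (1 - β) * A :=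
        mul_le_mul_of_nonneg_left hAo (by linarith)
      nlinarith [k1, k2]
    -- the convex combination dominates β times the ξs reward
    have hkey : β * Ss + (1 - β) * So ≥
        β * ∑ t ∈ Finset.Icc 1 T₁, (∫ y, f t y ∂(ξs : Measure X)) := by
      rw [hSs, hSo, Finset.mul_sum, Finset.mul_sum, Finset.mul_sum,
        ← Finset.sum_add_distrib]
      apply Finset.sum_le_sum
      intro t ht
      have hlt := hlam1 t ht
      have hG : ∑ i, lam t i * (β * (∫ y, g t i y ∂(ξs : Measure X)) +
          (1 - β) * (∫ y, g t i y ∂(ξo : Measure X))) ≤ 0 := by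
        apply Finset.sum_nonpos
        intro i _
        apply mul_nonpos_of_nonneg_of_nonpos (hlt.1 i)
        have hgo : (∫ y, g t i y ∂(ξo : Measure X)) ≤ -ρ := by
          apply hfeaso t _ i
          rw [Finset.mem_Icc] at ht ⊢
          exact ⟨ht.1, le_trans ht.2 hTT⟩
        have hgsb := (hgs ξs t i).2
        nlinarith [mul_le_mul_of_nonneg_left hgsb hβ0,
          mul_le_mul_of_nonneg_left hgo (show (0:ℝ) ≤ 1 - β by linarith)]
      have hGsum : ∑ i, lam t i * (β * (∫ y, g t i y ∂(ξs : Measure X)) +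
          (1 - β) * (∫ y, g t i y ∂(ξo : Measure X))) =
          β * (∑ i, lam t i * ∫ y, g t i y ∂(ξs : Measure X)) +
          (1 - β) * (∑ i, lam t i * ∫ y, g t i y ∂(ξo : Measure X)) := by
        rw [Finset.mul_sum, Finset.mul_sum, ← Finset.sum_add_distrib]
        exact Finset.sum_congr rfl fun i _ => by ring
      have hfo := (hfs ξo t).1
      nlinarith [mul_le_mul_of_nonneg_left hfo (show (0:ℝ) ≤ 1 - β by linarith)]
    have hAfin : A ≥ β * ∑ t ∈ Finset.Icc 1 T₁, (∫ y, f t y ∂(ξs : Measure X)) -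
        (1 + 2 / ρt) * RP1 := by linarith
    have hAeq : ∑ t ∈ Finset.Icc 1 T₁, f t (x t) =
        A + ∑ t ∈ Finset.Icc 1 T₁, ∑ i, lam t i * g t i (x t) := by
      rw [hA, ← Finset.sum_add_distrib]
      exact Finset.sum_congr rfl fun t _ => by ring
    rcases h3 with hTeq | ⟨i, hi⟩
    · -- T₁ = T
      subst hTeq
      have hL := h2 (fun _ => 0) (fun _ => le_refl 0)
        (by simp; positivity)
      simp only [zero_mul, Finset.sum_const_zero] at hL
      linarith
    · -- stopping condition case
      have hL := h2 (fun j => if j = i then 1 / ρt else 0)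
        (fun j => by split <;> positivity)
        (by simp)
      have hLsum : ∑ t ∈ Finset.Icc 1 T₁, ∑ j,
          (if j = i then 1 / ρt else 0) * g t j (x t) =
          (1 / ρt) * ∑ t ∈ Finset.Icc 1 T₁, g t i (x t) := by
        rw [Finset.mul_sum]
        refine Finset.sum_congr rfl fun t _ => ?_
        rw [Finset.sum_eq_single i (fun j _ hj => by simp [hj]) (by simp)]
        simp
      rw [hLsum] at hL
      have hgl : (1 / ρt) * (((T : ℝ) - (T₁ : ℝ)) * ρt) ≤
          (1 / ρt) * ∑ t ∈ Finset.Icc 1 T₁, g t i (x t) :=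
        mul_le_mul_of_nonneg_left hi (by positivity)
      have hglv : (1 / ρt) * (((T : ℝ) - (T₁ : ℝ)) * ρt) = (T : ℝ) - (T₁ : ℝ) := by
        field_simp
      -- tail sums
      have htail1 : 0 ≤ ∑ t ∈ Finset.Icc (T₁+1) T, f t (x t) :=
        Finset.sum_nonneg fun t _ => (hf01 t (x t)).1
      have htail2 : ∑ t ∈ Finset.Icc (T₁+1) T, (∫ y, f t y ∂(ξs : Measure X)) ≤
          (T : ℝ) - (T₁ : ℝ) := by
        calc ∑ t ∈ Finset.Icc (T₁+1) T, (∫ y, f t y ∂(ξs : Measure X)) ≤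
            ∑ _t ∈ Finset.Icc (T₁+1) T, (1:ℝ) :=
              Finset.sum_le_sum fun t _ => (hfs ξs t).2
          _ = ((Finset.Icc (T₁+1) T).card : ℝ) := by simp
          _ = (T : ℝ) - (T₁ : ℝ) := hcard
      have htail2' : β * ∑ t ∈ Finset.Icc (T₁+1) T, (∫ y, f t y ∂(ξs : Measure X)) ≤
          (T : ℝ) - (T₁ : ℝ) := by
        have h0 : 0 ≤ ∑ t ∈ Finset.Icc (T₁+1) T, (∫ y, f t y ∂(ξs : Measure X)) :=
          Finset.sum_nonneg fun t _ => (hfs ξs t).1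
        have hTT0 : (0:ℝ) ≤ (T : ℝ) - (T₁ : ℝ) := le_trans h0 htail2
        calc β * ∑ t ∈ Finset.Icc (T₁+1) T, (∫ y, f t y ∂(ξs : Measure X)) ≤
            β * ((T : ℝ) - (T₁ : ℝ)) := mul_le_mul_of_nonneg_left htail2 hβ0
          _ ≤ 1 * ((T : ℝ) - (T₁ : ℝ)) := mul_le_mul_of_nonneg_right hβ1 hTT0
          _ = (T : ℝ) - (T₁ : ℝ) := one_mul _
      rw [hsplit (fun t => f t (x t)), hsplit (fun t => ∫ y, f t y ∂(ξs : Measure X))]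
      rw [mul_add]
      linarith
  · -- violation bound
    intro i
    have hei := h6 (fun j => if j = i then 1 else 0)
      (fun j => by split <;> norm_num) (by simp)
    have heisum : ∑ t ∈ Finset.Icc (T₁+1) T, ∑ j,
        (if j = i then (1:ℝ) else 0) * g t j (x t) =
        ∑ t ∈ Finset.Icc (T₁+1) T, g t i (x t) := by
      refine Finset.sum_congr rfl fun t _ => ?_
      rw [Finset.sum_eq_single i (fun j _ hj => by simp [hj]) (by simp)]
      simp
    rw [heisum] at hei
    have h5' : ∑ t ∈ Finset.Icc (T₁+1) T, ∑ j, lam t j * g t j (x t) ≤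
        ∑ t ∈ Finset.Icc (T₁+1) T, (∑ j, lam t j * ∫ y, g t j y ∂(ξo : Measure X))
          + 2 * RP2 := by
      rw [Finset.sum_neg_distrib, Finset.sum_neg_distrib] at h5
      linarith
    have hfeasb : ∑ t ∈ Finset.Icc (T₁+1) T,
        (∑ j, lam t j * ∫ y, g t j y ∂(ξo : Measure X)) ≤
        ((T : ℝ) - (T₁ : ℝ)) * (-ρ) := by
      calc ∑ t ∈ Finset.Icc (T₁+1) T,
          (∑ j, lam t j * ∫ y, g t j y ∂(ξo : Measure X)) ≤
          ∑ _t ∈ Finset.Icc (T₁+1) T, (-ρ) := by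
            apply Finset.sum_le_sum
            intro t ht
            have hlt := hlam2 t ht
            calc ∑ j, lam t j * ∫ y, g t j y ∂(ξo : Measure X) ≤
                ∑ j, lam t j * (-ρ) := by
                  apply Finset.sum_le_sum
                  intro j _
                  apply mul_le_mul_of_nonneg_left _ (hlt.1 j)
                  apply hfeaso t _ j
                  rw [Finset.mem_Icc] at ht ⊢
                  omega
              _ = (-ρ) := by rw [← Finset.sum_mul, hlt.2, one_mul]
        _ = ((Finset.Icc (T₁+1) T).card : ℝ) * (-ρ) := by
            rw [Finset.sum_const, nsmul_eq_mul]
        _ = ((T : ℝ) - (T₁ : ℝ)) * (-ρ) := by rw [hcard]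
    have hTT' : (T₁ : ℝ) ≤ (T : ℝ) := Nat.cast_le.mpr hTT
    rw [hsplit (fun t => g t i (x t))]
    have h4i := h4 i
    nlinarith [hei, h5', hfeasb, h4i]
end
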